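/- arXiv:hep-th/0203128 — 5 statements merged into one kernel-verified Lean document; each statement's English description precedes it below -/
import Mathlib

section
/- As formal power series in q, (1/2)·(∏_{n≥1} 1/(1−q^n) + ∏_{n≥1} 1/(1+q^n)) = (∑_{m≥0} (−1)^m q^{m²}) · ∏_{n≥1} 1/(1−q^n). -/
open PowerSeries Finset

namespace EPT

noncomputable section

abbrev R := PowerSeries ℚ

def gb (q : R) : ℕ → ℕ → R
  | 0, 0 => 1
  | 0, _ + 1 => 0
  | _ + 1, 0 => 1
  | m + 1, j + 1 => gb q m (j + 1) + q ^ (m - j) * gb q m j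
@[simp] lemma gb_zero_right (q : R) (m : ℕ) : gb q m 0 = 1 := by cases m <;> rfl
lemma gb_eq_zero (q : R) : ∀ m j : ℕ, m < j → gb q m j = 0 := by
  intro m
  induction m with
  | zero => intro j hj; match j, hj with
            | j + 1, _ => rfl
  | succ m ih =>
      intro j hj
      match j, hj with
      | j + 1, hj =>
        show gb q m (j + 1) + q ^ (m - j) * gb q m j = 0
        rw [ih (j + 1) (by omega), ih j (by omega), mul_zero, add_zero]
def P (q : R) (t : ℕ) : R := ∏ i ∈ range t, (1 - q ^ (i + 1))
@[simp] lemma P_zero (q : R) : P q 0 = 1 := by simp [P]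
lemma P_succ (q : R) (t : ℕ) : P q (t + 1) = P q t * (1 - q ^ (t + 1)) := by
  simp [P, prod_range_succ]

lemma gb_mul (q : R) : ∀ m j : ℕ, j ≤ m → gb q m j * (P q j * P q (m - j)) = P q m := by
  intro m
  induction m with
  | zero =>
      intro j hj
      have : j = 0 := by omega
      subst this; simp
  | succ m ih =>
      intro j hj
      match j with
      | 0 => simp
      | j + 1 =>
        have hj' : j ≤ m := by omega
        show (gb q m (j + 1) + q ^ (m - j) * gb q m j) * (P q (j + 1) * P q (m + 1 - (j + 1))) = P q (m + 1)
        have hsub : m + 1 - (j + 1) = m - j := by omega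
        rw [hsub]
        rcases Nat.lt_or_ge j m with hlt | hge
        · have e1 : gb q m (j + 1) * (P q (j + 1) * P q (m - (j + 1))) = P q m := ih (j + 1) (by omega)
          have e2 : gb q m j * (P q j * P q (m - j)) = P q m := ih j hj'
          have hPj : P q (j + 1) = P q j * (1 - q ^ (j + 1)) := P_succ q j
          have h2 : m - (j + 1) + 1 = m - j := by omega
          have hPmj : P q (m - j) = P q (m - (j + 1)) * (1 - q ^ (m - j)) := by
            rw [← h2, P_succ]
          have hq : q ^ (m - j) * q ^ (j + 1) = q ^ (m + 1) := by
            rw [← pow_add]; congr 1; omega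
          rw [P_succ q m]
          calc (gb q m (j + 1) + q ^ (m - j) * gb q m j) * (P q (j + 1) * P q (m - j))
              = gb q m (j + 1) * (P q (j + 1) * P q (m - (j + 1))) * (1 - q ^ (m - j))
                + q ^ (m - j) * ((gb q m j * (P q j * P q (m - j))) * (1 - q ^ (j + 1))) := by
                rw [hPmj, hPj]; ring
            _ = P q m * (1 - q ^ (m - j)) + q ^ (m - j) * (P q m * (1 - q ^ (j + 1))) := by
                rw [e1, e2]
            _ = P q m * (1 - q ^ (m - j) * q ^ (j + 1)) := by ring
            _ = P q m * (1 - q ^ (m + 1)) := by rw [hq]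
        · have hjm : j = m := by omega
          subst hjm
          have h0 : gb q j (j + 1) = 0 := gb_eq_zero q j (j + 1) (by omega)
          have e2 : gb q j j * P q j = P q j := by simpa using ih j le_rfl
          rw [h0, zero_add, Nat.sub_self, pow_zero, one_mul, P_zero, mul_one,
            P_succ, ← mul_assoc, e2]

lemma gb_thm (q x y : R) : ∀ m : ℕ,
    ∏ i ∈ range m, (y + x * q ^ i) =
      ∑ j ∈ range (m + 1), q ^ (∑ i ∈ range j, i) * gb q m j * x ^ j * y ^ (m - j) := by
  intro m
  induction m with
  | zero => simp [gb]
  | succ m ih =>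
      set g : ℕ → R := fun j => q ^ (∑ i ∈ range j, i) * gb q m j * x ^ j * y ^ (m - j) with hg
      rw [prod_range_succ, ih]
      rw [Finset.sum_range_succ' (fun j => q ^ (∑ i ∈ range j, i) * gb q (m + 1) j * x ^ j * y ^ (m + 1 - j))]
      have h0 : q ^ (∑ i ∈ range 0, i) * gb q (m + 1) 0 * x ^ 0 * y ^ (m + 1 - 0) = y ^ (m + 1) := by
        simp
      rw [h0]
      have hsplit : ∀ j ∈ range (m + 1),
          q ^ (∑ i ∈ range (j + 1), i) * gb q (m + 1) (j + 1) * x ^ (j + 1) * y ^ (m + 1 - (j + 1))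
            = y * g (j + 1) + (x * q ^ m) * g j := by
        intro j hj
        have hjm : j ≤ m := by have := Finset.mem_range.mp hj; omega
        show q ^ (∑ i ∈ range (j + 1), i) * (gb q m (j + 1) + q ^ (m - j) * gb q m j) * x ^ (j + 1) * y ^ (m + 1 - (j + 1)) = _
        have hT : (∑ i ∈ range (j + 1), i) = (∑ i ∈ range j, i) + j := by
          rw [Finset.sum_range_succ]
        have hy1 : (m + 1 - (j + 1)) = m - j := by omega
        rw [hT, hy1]
        rcases Nat.lt_or_ge j m with hlt | hge
        · have hy2 : y * y ^ (m - (j + 1)) = y ^ (m - j) := by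
            rw [← pow_succ']; congr 1; omega
          have hq2 : q ^ ((∑ i ∈ range j, i) + j) * q ^ (m - j) = q ^ (∑ i ∈ range j, i) * q ^ m := by
            rw [← pow_add, ← pow_add]; congr 1; omega
          have hR : y * g (j + 1) + (x * q ^ m) * g j
              = q ^ ((∑ i ∈ range j, i) + j) * gb q m (j + 1) * x ^ (j + 1) * y ^ (m - j)
                + (q ^ (∑ i ∈ range j, i) * q ^ m) * gb q m j * x ^ (j + 1) * y ^ (m - j) := by
            simp only [hg, hT]
            rw [← hy2]; ring
          rw [hR, ← hq2]; ring
        · have hjm' : j = m := by omega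
          subst hjm'
          have hz : gb q j (j + 1) = 0 := gb_eq_zero q j (j + 1) (by omega)
          have hz2 : g (j + 1) = 0 := by simp [hg, hz]
          simp only [hz, hz2, hg, Nat.sub_self, pow_zero, mul_one, mul_zero, zero_add]
          rw [pow_add]
          ring
      rw [Finset.sum_congr rfl hsplit, Finset.sum_add_distrib, ← Finset.mul_sum, ← Finset.mul_sum]
      have hshift : ∑ j ∈ range (m + 1), g (j + 1) = (∑ j ∈ range (m + 1), g j) - g 0 := by
        have h2 := Finset.sum_range_succ g (m + 1)
        have hz : g (m + 1) = 0 := by simp [hg, gb_eq_zero q m (m + 1) (by omega)]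
        rw [hz, add_zero] at h2
        have h1 := Finset.sum_range_succ' g (m + 1)
        rw [h2] at h1
        exact eq_sub_of_add_eq h1.symm
      have hg0 : g 0 = y ^ m := by simp [hg]
      rw [hshift, hg0]
      ring

def E (n : ℕ) : R := ∏ i ∈ range n, (1 - (X : R) ^ (2 * i + 1))
def k2 (n j : ℕ) : ℕ := (n - j) ^ 2 + (j - n) ^ 2

lemma sum_odd (k : ℕ) : ∑ i ∈ range k, (2 * i + 1) = k ^ 2 := by
  induction k with
  | zero => simp
  | succ k ih => rw [Finset.sum_range_succ, ih]; ring

lemma star (n : ℕ) :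
    E n ^ 2 = ∑ j ∈ range (2 * n + 1),
      (-1 : R) ^ (n + j) * X ^ (k2 n j) * gb ((X : R) ^ 2) (2 * n) j := by
  have hc : ((-1 : R) ^ n * X ^ (3 * n ^ 2)) ≠ 0 := by
    apply mul_ne_zero
    · exact pow_ne_zero _ (neg_ne_zero.mpr one_ne_zero)
    · exact pow_ne_zero _ X_ne_zero
  apply mul_left_cancel₀ hc
  have hprod : ∏ i ∈ range (2 * n), ((X : R) ^ (2 * n) - X ^ (2 * i + 1))
      = (-1 : R) ^ n * X ^ (3 * n ^ 2) * E n ^ 2 := by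
    have hrange : range (2 * n) = range (n + n) := by rw [two_mul]
    rw [hrange, prod_range_add]
    have h1 : ∏ i ∈ range n, ((X : R) ^ (2 * n) - X ^ (2 * i + 1))
        = (-1 : R) ^ n * X ^ (n ^ 2) * E n := by
      have he : ∀ i ∈ range n, ((X : R) ^ (2 * n) - X ^ (2 * i + 1))
          = (-1) * X ^ (2 * i + 1) * (1 - X ^ (2 * (n - 1 - i) + 1)) := by
        intro i hi
        have hin : i < n := mem_range.mp hi
        have hx : (X : R) ^ (2 * n) = X ^ (2 * i + 1) * X ^ (2 * (n - 1 - i) + 1) := by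
          rw [← pow_add]; congr 1; omega
        rw [hx]; ring
      rw [prod_congr rfl he, prod_mul_distrib, prod_mul_distrib]
      have h2 : ∏ _i ∈ range n, ((-1 : R)) = (-1 : R) ^ n := by simp
      have h3 : ∏ i ∈ range n, (X : R) ^ (2 * i + 1) = X ^ (n ^ 2) := by
        rw [Finset.prod_pow_eq_pow_sum, sum_odd]
      have h5 : ∏ i ∈ range n, (1 - (X : R) ^ (2 * (n - 1 - i) + 1)) = E n := by
        rw [← Finset.prod_range_reflect]
        apply prod_congr rfl
        intro i hi
        have hin : i < n := mem_range.mp hi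
        congr 2
        omega
      rw [h2, h3, h5]
    have h2 : ∏ i ∈ range n, ((X : R) ^ (2 * n) - X ^ (2 * (n + i) + 1))
        = X ^ (2 * n ^ 2) * E n := by
      have he : ∀ i ∈ range n, ((X : R) ^ (2 * n) - X ^ (2 * (n + i) + 1))
          = X ^ (2 * n) * (1 - X ^ (2 * i + 1)) := by
        intro i hi
        have hx : (X : R) ^ (2 * (n + i) + 1) = X ^ (2 * n) * X ^ (2 * i + 1) := by
          rw [← pow_add]; congr 1; omega
        rw [hx]; ring
      rw [prod_congr rfl he, prod_mul_distrib, Finset.prod_const, card_range, ← pow_mul, E]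
      congr 2
      ring
    rw [h1, h2, E]
    ring
  have hthm := gb_thm ((X : R) ^ 2) (-X) (X ^ (2 * n)) (2 * n)
  have hfac : ∀ i ∈ range (2 * n), ((X : R) ^ (2 * n) + (-X) * ((X : R) ^ 2) ^ i)
      = (X : R) ^ (2 * n) - X ^ (2 * i + 1) := by
    intro i hi
    rw [← pow_mul]
    have hxx : (X : R) * X ^ (2 * i) = X ^ (2 * i + 1) := by rw [← pow_succ']
    rw [← hxx]; ring
  rw [prod_congr rfl hfac, hprod] at hthm
  rw [hthm, Finset.mul_sum]
  apply Finset.sum_congr rfl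
  intro j hj
  have hj2 : j ≤ 2 * n := by have := mem_range.mp hj; omega
  have hT : 2 * (∑ i ∈ range j, i) = j * (j - 1) := by
    have := Finset.sum_range_id_mul_two j
    omega
  have hsign : ((-X : R)) ^ j = (-1) ^ j * X ^ j := by rw [neg_pow]
  have hexp : (((X : R) ^ 2) ^ (∑ i ∈ range j, i)) * (X ^ j * ((X ^ (2*n)) ^ (2*n - j)))
      = X ^ (3 * n ^ 2 + k2 n j) := by
    rw [← pow_mul, ← pow_mul, ← pow_add, ← pow_add]
    congr 1
    rw [hT]
    rcases Nat.le_total j n with h | h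
    · have hk : k2 n j = (n - j) ^ 2 := by
        simp [k2, Nat.sub_eq_zero_of_le h]
      rw [hk]
      cases j with
      | zero => simp; ring
      | succ i =>
        zify [h, hj2, show (1:ℕ) ≤ i + 1 from by omega]
        ring
    · have hk : k2 n j = (j - n) ^ 2 := by
        simp [k2, Nat.sub_eq_zero_of_le h]
      rw [hk]
      cases j with
      | zero =>
        have : n = 0 := by omega
        subst this; simp
      | succ i =>
        zify [h, hj2, show (1:ℕ) ≤ i + 1 from by omega]
        ring
  have hsign2 : ((-1 : R) ^ n) * ((-1) ^ (n + j)) = (-1) ^ j := by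
    rw [← pow_add]
    have h3 : n + (n + j) = 2 * n + j := by omega
    rw [h3, pow_add, pow_mul]
    simp
  calc ((X:R)^2) ^ (∑ i ∈ range j, i) * gb ((X:R)^2) (2*n) j * (-X) ^ j * (X ^ (2*n)) ^ (2*n - j)
      = ((-1:R))^j * ((((X:R) ^ 2) ^ (∑ i ∈ range j, i)) * (X ^ j * ((X ^ (2*n)) ^ (2*n - j)))) * gb ((X:R)^2) (2*n) j := by
        rw [hsign]; ring
    _ = ((-1:R))^j * X ^ (3 * n ^ 2 + k2 n j) * gb ((X:R)^2) (2*n) j := by rw [hexp]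
    _ = (-1:R) ^ n * X ^ (3*n^2) * ((-1) ^ (n + j) * X ^ (k2 n j) * gb ((X:R)^2) (2*n) j) := by
        rw [pow_add]
        calc ((-1:R))^j * (X ^ (3*n^2) * X ^ (k2 n j)) * gb ((X:R)^2) (2*n) j
            = (((-1:R)) ^ n * ((-1) ^ (n + j))) * (X ^ (3*n^2) * X ^ (k2 n j)) * gb ((X:R)^2) (2*n) j := by
              rw [hsign2]
          _ = _ := by ring

lemma prod_cong_one {K : ℕ} {s : Finset ℕ} {f : ℕ → R}
    (h : ∀ i ∈ s, (X : R) ^ K ∣ f i - 1) : (X : R) ^ K ∣ (∏ i ∈ s, f i) - 1 := by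
  induction s using Finset.cons_induction with
  | empty => simp
  | cons a s ha ih =>
      rw [Finset.prod_cons]
      have h1 : (X : R) ^ K ∣ f a - 1 := h a (Finset.mem_cons_self a s)
      have h2 : (X : R) ^ K ∣ (∏ i ∈ s, f i) - 1 := ih fun i hi => h i (Finset.mem_cons_of_mem hi)
      have he : f a * ∏ i ∈ s, f i - 1 = (f a - 1) * ∏ i ∈ s, f i + ((∏ i ∈ s, f i) - 1) := by ring
      rw [he]
      exact dvd_add (h1.mul_right _) h2

lemma P_cong {a b : ℕ} (hab : a ≤ b) :
    (X : R) ^ (2 * a + 2) ∣ P ((X : R) ^ 2) b - P ((X : R) ^ 2) a := by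
  have hb : b = a + (b - a) := by omega
  have hsplit : P ((X : R) ^ 2) b = P ((X : R) ^ 2) a * ∏ i ∈ range (b - a), (1 - ((X : R) ^ 2) ^ (a + i + 1)) := by
    rw [P, P]
    have hr : range b = range (a + (b - a)) := by rw [← hb]
    rw [hr, prod_range_add]
  rw [hsplit]
  have hq : (X : R) ^ (2 * a + 2) ∣ (∏ i ∈ range (b - a), (1 - ((X : R) ^ 2) ^ (a + i + 1))) - 1 := by
    apply prod_cong_one
    intro i hi
    have he : (1 - ((X : R) ^ 2) ^ (a + i + 1)) - 1 = -(X ^ (2 * (a + i + 1))) := by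
      rw [← pow_mul]; ring
    rw [he]
    apply dvd_neg.mpr
    apply pow_dvd_pow
    omega
  have he2 : P ((X:R)^2) a * (∏ i ∈ range (b - a), (1 - ((X : R) ^ 2) ^ (a + i + 1))) - P ((X:R)^2) a
      = P ((X:R)^2) a * ((∏ i ∈ range (b - a), (1 - ((X : R) ^ 2) ^ (a + i + 1))) - 1) := by ring
  rw [he2]
  exact hq.mul_left _

lemma constantCoeff_P (t : ℕ) : constantCoeff (R := ℚ) (P ((X : R) ^ 2) t) = 1 := by
  rw [P, map_prod]
  apply Finset.prod_eq_one
  intro i _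
  simp [← pow_mul, zero_pow]

lemma key (n : ℕ) :
    (X : R) ^ n ∣ E n ^ 2 * P ((X : R) ^ 2) n -
      ∑ j ∈ range (2 * n + 1), (-1 : R) ^ (n + j) * X ^ (k2 n j) := by
  rw [star, Finset.sum_mul, ← Finset.sum_sub_distrib]
  apply Finset.dvd_sum
  intro j hj
  have hj2 : j ≤ 2 * n := by have := mem_range.mp hj; omega
  have hterm : (-1 : R) ^ (n + j) * X ^ (k2 n j) * gb ((X:R)^2) (2*n) j * P ((X:R)^2) n
      - (-1 : R) ^ (n + j) * X ^ (k2 n j)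
      = (-1 : R) ^ (n + j) * (X ^ (k2 n j) * (gb ((X:R)^2) (2*n) j * P ((X:R)^2) n - 1)) := by ring
  rw [hterm]
  apply Dvd.dvd.mul_left
  -- main divisibility
  rcases Nat.le_total n (k2 n j) with hbig | hsmall
  · exact dvd_mul_of_dvd_left (pow_dvd_pow _ hbig) _
  · -- k2 n j ≤ n
    have hXn : (X : R) ^ n = X ^ (k2 n j) * X ^ (n - k2 n j) := by
      rw [← pow_add]; congr 1; omega
    rw [hXn]
    apply mul_dvd_mul_left
    -- show X^(n - k2 n j) ∣ gb * P n - 1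
    set M := n - k2 n j with hM
    have hunit : IsUnit (P ((X:R)^2) j * P ((X:R)^2) (2*n - j)) := by
      rw [PowerSeries.isUnit_iff_constantCoeff, map_mul, constantCoeff_P, constantCoeff_P]
      simp
    rw [← (hunit.dvd_mul_right)]
    have hgb := gb_mul ((X:R)^2) (2*n) j hj2
    have hexpand : (gb ((X:R)^2) (2*n) j * P ((X:R)^2) n - 1) * (P ((X:R)^2) j * P ((X:R)^2) (2*n - j))
        = P ((X:R)^2) n * (gb ((X:R)^2) (2*n) j * (P ((X:R)^2) j * P ((X:R)^2) (2*n - j)))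
          - P ((X:R)^2) j * P ((X:R)^2) (2*n - j) := by ring
    rw [hexpand, hgb]
    -- now: X^M ∣ P n * P (2n) - P j * P (2n - j)
    have harith : ∀ a : ℕ, min j (2*n - j) ≤ a → a ≤ 2*n → (X : R) ^ M ∣ P ((X:R)^2) (2*n) - P ((X:R)^2) a := by
      intro a hmin ha
      have hd : (X : R) ^ (2 * a + 2) ∣ P ((X:R)^2) (2*n) - P ((X:R)^2) a := P_cong ha
      apply dvd_trans _ hd
      apply pow_dvd_pow
      -- M ≤ 2a + 2
      have hk : k2 n j = (n - j)^2 + (j - n)^2 := rfl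
      have h1 : n - j ≤ (n - j)^2 := Nat.le_self_pow two_ne_zero _
      have h2 : j - n ≤ (j - n)^2 := Nat.le_self_pow two_ne_zero _
      have hM' : M = n - k2 n j := hM
      omega
    have hn : min j (2*n - j) ≤ n := by omega
    have hc1 : (X:R) ^ M ∣ P ((X:R)^2) (2*n) - P ((X:R)^2) n := harith n hn (by omega)
    have hc2 : (X:R) ^ M ∣ P ((X:R)^2) (2*n) - P ((X:R)^2) j := harith j (by omega) hj2
    have hc3 : (X:R) ^ M ∣ P ((X:R)^2) (2*n) - P ((X:R)^2) (2*n - j) := harith (2*n - j) (by omega) (by omega)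
    have hfinal : P ((X:R)^2) n * P ((X:R)^2) (2*n) - P ((X:R)^2) j * P ((X:R)^2) (2*n - j)
        = -((P ((X:R)^2) (2*n) - P ((X:R)^2) n) * P ((X:R)^2) (2*n))
          + (P ((X:R)^2) (2*n) - P ((X:R)^2) j) * P ((X:R)^2) (2*n)
          + P ((X:R)^2) j * (P ((X:R)^2) (2*n) - P ((X:R)^2) (2*n - j)) := by ring
    rw [hfinal]
    exact dvd_add (dvd_add (dvd_neg.mpr (hc1.mul_right _)) (hc2.mul_right _)) (hc3.mul_left _)

lemma theta (N : ℕ) :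
    (X : R) ^ (N + 1) ∣ (∑ j ∈ range (2 * (N + 1) + 1), (-1 : R) ^ ((N + 1) + j) * X ^ (k2 (N + 1) j)) -
      (2 * (∑ m ∈ range (N + 1), (-1 : R) ^ m * X ^ (m ^ 2)) - 1) := by
  set n := N + 1 with hn
  have hsplit : ∑ j ∈ range (2 * n + 1), (-1 : R) ^ (n + j) * X ^ (k2 n j)
      = (∑ j ∈ range n, (-1 : R) ^ (n + j) * X ^ (k2 n j))
        + ∑ i ∈ range (n + 1), (-1 : R) ^ (n + (n + i)) * X ^ (k2 n (n + i)) := by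
    have hr : range (2 * n + 1) = range (n + (n + 1)) := by congr 1; omega
    rw [hr, Finset.sum_range_add]
  rw [hsplit]
  have hfirst : (∑ j ∈ range n, (-1 : R) ^ (n + j) * X ^ (k2 n j))
      = ∑ j ∈ range n, (-1 : R) ^ (j + 1) * X ^ ((j + 1) ^ 2) := by
    rw [← Finset.sum_range_reflect]
    apply Finset.sum_congr rfl
    intro j hj
    have hjn : j < n := mem_range.mp hj
    have hk : k2 n (n - 1 - j) = (j + 1) ^ 2 := by
      have h1 : n - (n - 1 - j) = j + 1 := by omega
      have h2 : (n - 1 - j) - n = 0 := by omega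
      rw [k2, h1, h2]
      simp
    have hs : (-1 : R) ^ (n + (n - 1 - j)) = (-1 : R) ^ (j + 1) := by
      have h3 : n + (n - 1 - j) = (j + 1) + 2 * (n - 1 - j) := by omega
      rw [h3, pow_add, pow_mul]
      simp
    rw [hk, hs]
  have hsecond : ∑ i ∈ range (n + 1), (-1 : R) ^ (n + (n + i)) * X ^ (k2 n (n + i))
      = ∑ i ∈ range (n + 1), (-1 : R) ^ i * X ^ (i ^ 2) := by
    apply Finset.sum_congr rfl
    intro i hi
    have hk : k2 n (n + i) = i ^ 2 := by
      have h1 : n - (n + i) = 0 := by omega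
      have h2 : (n + i) - n = i := by omega
      rw [k2, h1, h2]
      simp
    have hs : (-1 : R) ^ (n + (n + i)) = (-1 : R) ^ i := by
      have h3 : n + (n + i) = i + 2 * n := by omega
      rw [h3, pow_add, pow_mul]
      simp
    rw [hk, hs]
  have hshift : ∑ j ∈ range n, (-1 : R) ^ (j + 1) * X ^ ((j + 1) ^ 2)
      = (∑ i ∈ range (n + 1), (-1 : R) ^ i * X ^ (i ^ 2)) - 1 := by
    have h1 := Finset.sum_range_succ' (fun i => (-1 : R) ^ i * X ^ (i ^ 2)) n
    simp only [pow_zero, one_mul, Nat.zero_eq] at h1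
    rw [h1]
    simp
  have hlast : ∑ i ∈ range (n + 1), (-1 : R) ^ i * X ^ (i ^ 2)
      = (∑ m ∈ range n, (-1 : R) ^ m * X ^ (m ^ 2)) + (-1 : R) ^ n * X ^ (n ^ 2) := by
    rw [Finset.sum_range_succ]
  have e : (∑ j ∈ range n, (-1 : R) ^ (n + j) * X ^ (k2 n j))
        + (∑ i ∈ range (n + 1), (-1 : R) ^ (n + (n + i)) * X ^ (k2 n (n + i)))
      - (2 * (∑ m ∈ range (N + 1), (-1 : R) ^ m * X ^ (m ^ 2)) - 1)
      = 2 * ((-1 : R) ^ n * X ^ (n ^ 2)) := by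
    rw [hfirst, hsecond, hshift, hlast, ← hn]
    ring
  rw [e]
  exact ((pow_dvd_pow (X : R) (Nat.le_self_pow two_ne_zero n)).mul_left _).mul_left 2

lemma EF_eq (n : ℕ) :
    E n * P ((X : R) ^ 2) n = ∏ t ∈ range (2 * n), (1 - (X : R) ^ (t + 1)) := by
  induction n with
  | zero => simp [E, P]
  | succ n ih =>
      have hr : range (2 * (n + 1)) = range (2 * n + 1 + 1) := by
        rw [show 2 * (n + 1) = 2 * n + 1 + 1 from by omega]
      rw [hr, prod_range_succ, prod_range_succ, ← ih]
      rw [E, P, prod_range_succ, prod_range_succ, ← E, ← P]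
      have h1 : ((X : R) ^ 2) ^ (n + 1) = X ^ (2 * n + 1 + 1) := by
        rw [← pow_mul, show 2 * (n + 1) = 2 * n + 1 + 1 from by omega]
      rw [h1]
      ring

lemma main (N : ℕ) :
    (X : R) ^ (N + 1) ∣ (∏ t ∈ range (N + 1), (1 - (X : R) ^ (t + 1))) -
      (2 * (∑ m ∈ range (N + 1), (-1 : R) ^ m * X ^ (m ^ 2)) - 1) *
        ∏ t ∈ range (N + 1), (1 + (X : R) ^ (t + 1)) := by
  set n := N + 1 with hn
  set A : R := ∏ t ∈ range n, (1 - (X : R) ^ (t + 1)) with hA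
  set B : R := ∏ t ∈ range n, (1 + (X : R) ^ (t + 1)) with hB
  set Th : R := 2 * (∑ m ∈ range (N + 1), (-1 : R) ^ m * X ^ (m ^ 2)) - 1 with hTh
  have hAB : A * B = P ((X : R) ^ 2) n := by
    rw [hA, hB, ← prod_mul_distrib, P]
    apply prod_congr rfl
    intro t _
    have h1 : ((X : R) ^ 2) ^ (t + 1) = X ^ (t + 1) * X ^ (t + 1) := by
      rw [← pow_add, ← pow_mul]; congr 1; omega
    rw [h1]; ring
  have hEF : (X : R) ^ n ∣ E n * P ((X : R) ^ 2) n - A := by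
    rw [EF_eq]
    have hr : range (2 * n) = range (n + n) := by rw [two_mul]
    rw [hr, prod_range_add, ← hA]
    have hex : (X : R) ^ n ∣ (∏ i ∈ range n, (1 - (X : R) ^ (n + i + 1))) - 1 := by
      apply prod_cong_one
      intro i _
      have he : (1 - (X : R) ^ (n + i + 1)) - 1 = -(X ^ (n + i + 1)) := by ring
      rw [he]
      exact dvd_neg.mpr (pow_dvd_pow _ (by omega))
    have he2 : A * (∏ i ∈ range n, (1 - (X : R) ^ (n + i + 1))) - A
        = A * ((∏ i ∈ range n, (1 - (X : R) ^ (n + i + 1))) - 1) := by ring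
    rw [he2]
    exact hex.mul_left _
  have hkey := key n
  have htheta := theta N
  rw [← hn] at htheta
  set Th' : R := ∑ j ∈ range (2 * n + 1), (-1 : R) ^ (n + j) * X ^ (k2 n j) with hTh'
  have hid : A - Th * B
      = -((E n * P ((X : R) ^ 2) n - A) * (1 + E n * B))
        + (E n ^ 2 * P ((X : R) ^ 2) n - Th') * B + (Th' - Th) * B := by
    rw [← hAB]; ring
  rw [hid]
  exact dvd_add (dvd_add (dvd_neg.mpr (hEF.mul_right _)) (hkey.mul_right _)) (htheta.mul_right _)



end

end EPT

/-- As formal power series in `q`,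
`(1/2)·(∏_{n≥1} 1/(1−q^n) + ∏_{n≥1} 1/(1+q^n)) = (∑_{m≥0} (−1)^m q^{m²})·∏_{n≥1} 1/(1−q^n)`.
Stated coefficient-wise: the partial products/sums stabilize, since omitted factors are
`1 + O(q^{N+1})` and omitted summands have order `> N`. -/
theorem even_projector_trace (N : ℕ) :
    PowerSeries.coeff (R := ℚ) N
      ((PowerSeries.C (R := ℚ) (1 / 2)) *
        (∏ n ∈ Finset.range (N + 1), (1 - (PowerSeries.X : PowerSeries ℚ) ^ (n + 1))⁻¹ +
         ∏ n ∈ Finset.range (N + 1), (1 + (PowerSeries.X : PowerSeries ℚ) ^ (n + 1))⁻¹)) =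
    PowerSeries.coeff (R := ℚ) N
      ((∑ m ∈ Finset.range (N + 1), (-1 : PowerSeries ℚ) ^ m * PowerSeries.X ^ (m ^ 2)) *
        ∏ n ∈ Finset.range (N + 1), (1 - (PowerSeries.X : PowerSeries ℚ) ^ (n + 1))⁻¹) := by
  set A : PowerSeries ℚ := ∏ t ∈ range (N + 1), (1 - (X : PowerSeries ℚ) ^ (t + 1)) with hA
  set B : PowerSeries ℚ := ∏ t ∈ range (N + 1), (1 + (X : PowerSeries ℚ) ^ (t + 1)) with hB
  set a : PowerSeries ℚ := ∏ t ∈ range (N + 1), (1 - (X : PowerSeries ℚ) ^ (t + 1))⁻¹ with ha'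
  set b : PowerSeries ℚ := ∏ t ∈ range (N + 1), (1 + (X : PowerSeries ℚ) ^ (t + 1))⁻¹ with hb'
  set S : PowerSeries ℚ := ∑ m ∈ range (N + 1), (-1 : PowerSeries ℚ) ^ m * X ^ (m ^ 2) with hS
  have ha : A * a = 1 := by
    rw [hA, ha', ← prod_mul_distrib]
    apply prod_eq_one
    intro t _
    rw [mul_comm]
    apply PowerSeries.inv_mul_cancel
    simp
  have hb : B * b = 1 := by
    rw [hB, hb', ← prod_mul_distrib]
    apply prod_eq_one
    intro t _
    rw [mul_comm]
    apply PowerSeries.inv_mul_cancel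
    simp
  have h2 : (2 : PowerSeries ℚ) * C (R := ℚ) (1 / 2) = 1 := by
    have h3 : (2 : PowerSeries ℚ) = C (R := ℚ) 2 := by rw [map_ofNat]
    rw [h3, ← map_mul]
    norm_num
  have key_id : (C (R := ℚ) (1 / 2)) * (a + b) - S * a
      = a * b * (C (R := ℚ) (1 / 2) * (A - (2 * S - 1) * B)) := by
    linear_combination (-(C (R := ℚ) (1 / 2) * b)) * ha + (C (R := ℚ) (1 / 2) * (2 * S - 1) * a) * hb + (S * a) * h2
  have hdvd : (PowerSeries.X : PowerSeries ℚ) ^ (N + 1) ∣ (C (R := ℚ) (1 / 2)) * (a + b) - S * a := by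
    rw [key_id]
    exact ((EPT.main N).mul_left _).mul_left _
  have hc := PowerSeries.X_pow_dvd_iff.mp hdvd N (lt_add_one N)
  rw [map_sub] at hc
  exact sub_eq_zero.mp hc
end

section
/- As formal power series in q, (1/2)·(∏_{n≥1} 1/(1−q^n) − ∏_{n≥1} 1/(1+q^n)) = (∑_{m≥1} (−1)^{m−1} q^{m²}) · ∏_{n≥1} 1/(1−q^n). -/
open PowerSeries Finset

namespace OddProj

noncomputable section

abbrev R := PowerSeries ℚ

/-- `X ^ a` for an integer `a` (junk for negative `a`). -/
def qpow (a : ℤ) : R := (PowerSeries.X : R) ^ a.toNat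

lemma qpow_add {a b : ℤ} (ha : 0 ≤ a) (hb : 0 ≤ b) :
    qpow (a + b) = qpow a * qpow b := by
  unfold qpow
  rw [← pow_add]
  congr 1
  omega

lemma qpow_nonneg_ne (h : (0:ℤ) < a) : constantCoeff (R := ℚ) (qpow a) = 0 := by
  unfold qpow
  rw [map_pow, constantCoeff_X, zero_pow (by omega)]

/-- sign `(-1)^j` -/
def eps (j : ℤ) : R := (-1 : R) ^ j.natAbs

lemma eps_add_one (j : ℤ) : eps (j + 1) = - eps j := by
  unfold eps
  rcases Int.even_or_odd j with h | h
  · have h1 : Even j.natAbs := Int.natAbs_even.mpr h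
    have h2 : Odd (j+1).natAbs := Int.natAbs_odd.mpr h.add_one
    rw [h1.neg_one_pow, h2.neg_one_pow]; try ring
  · have h1 : Odd j.natAbs := Int.natAbs_odd.mpr h
    have h2 : Even (j+1).natAbs := Int.natAbs_even.mpr h.add_one
    rw [h1.neg_one_pow, h2.neg_one_pow]; try ring

lemma eps_neg (j : ℤ) : eps (-j) = eps j := by unfold eps; rw [Int.natAbs_neg]

lemma eps_zero : eps 0 = 1 := rfl

/-- Gaussian binomial coefficient as a power series, defined by the `q`-Pascal rule. -/
def gb : ℕ → ℤ → R
  | 0, k => if k = 0 then 1 else 0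
  | m + 1, k => gb m k + qpow ((m : ℤ) + 1 - k) * gb m (k - 1)

lemma gb_neg : ∀ (m : ℕ) (k : ℤ), k < 0 → gb m k = 0
  | 0, k, h => by rw [gb, if_neg (by omega : ¬ k = 0)]
  | m + 1, k, h => by
      rw [gb, gb_neg m k h, gb_neg m (k-1) (by omega)]
      simp

lemma gb_gt : ∀ (m : ℕ) (k : ℤ), (m : ℤ) < k → gb m k = 0
  | 0, k, h => by rw [gb, if_neg (by omega : ¬ k = 0)]
  | m + 1, k, h => by
      rw [gb, gb_gt m k (by omega), gb_gt m (k-1) (by omega)]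
      simp

lemma gb_zero : ∀ (m : ℕ), gb m 0 = 1
  | 0 => by simp [gb]
  | m + 1 => by
      rw [gb, gb_zero m, (by norm_num : (0:ℤ) - 1 = -1), gb_neg m (-1) (by omega)]
      simp

lemma gb_succ (m : ℕ) (k : ℤ) :
    gb (m + 1) k = gb m k + qpow ((m : ℤ) + 1 - k) * gb m (k - 1) := rfl

lemma qpow_zero : qpow 0 = 1 := rfl

lemma qpow_natCast (c : ℕ) : qpow (c : ℤ) = (PowerSeries.X : R) ^ c := by
  unfold qpow; rw [Int.toNat_natCast]

lemma gb_pascal' : ∀ (m : ℕ) (k : ℤ), gb (m + 1) k = qpow k * gb m k + gb m (k - 1)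
  | 0, k => by
      rcases lt_trichotomy k 0 with h | h | h
      · rw [gb_neg 1 k h, gb_neg 0 k h, gb_neg 0 (k-1) (by omega)]; simp
      · subst h
        rw [gb_zero 1, gb_zero 0, (by norm_num : (0:ℤ) - 1 = -1), gb_neg 0 (-1) (by omega),
          qpow_zero]
        simp
      · rcases eq_or_lt_of_le (by omega : (1:ℤ) ≤ k) with h1 | h1
        · rw [← h1, gb_succ, gb_gt 0 1 (by norm_num),
            (by norm_num : ((0:ℕ):ℤ) + 1 - 1 = 0), qpow_zero,
            (by norm_num : (1:ℤ) - 1 = 0), gb_zero 0]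
          simp
        · rw [gb_gt 1 k (by exact_mod_cast h1), gb_gt 0 k (by omega),
            gb_gt 0 (k-1) (by omega)]
          simp
  | m + 1, k => by
      rcases lt_trichotomy k 0 with h | h | h
      · rw [gb_neg (m+2) k h, gb_neg (m+1) k h, gb_neg (m+1) (k-1) (by omega)]; simp
      · subst h
        rw [gb_zero (m+2), gb_zero (m+1), (by norm_num : (0:ℤ) - 1 = -1),
          gb_neg (m+1) (-1) (by omega), qpow_zero]
        simp
      · rcases lt_trichotomy k ((m:ℤ)+2) with h2 | h2 | h2
        · -- 1 ≤ k ≤ m+1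
          conv_lhs => rw [gb_succ (m+1) k, gb_pascal' m k, gb_pascal' m (k-1)]
          conv_rhs => rw [gb_succ m k, gb_succ m (k-1)]
          have e1 : qpow (((m+1:ℕ):ℤ) + 1 - k) * qpow (k - 1) = qpow k * qpow ((m:ℤ) + 1 - k) := by
            rw [← qpow_add (by push_cast; omega) (by omega), ← qpow_add (by omega) (by omega)]
            congr 1; push_cast; ring
          have e3 : ((m:ℤ) + 1 - (k-1)) = ((m+1:ℕ):ℤ) + 1 - k := by push_cast; ring
          rw [e3]
          calc qpow k * gb m k + gb m (k - 1) +
                qpow (((m+1:ℕ):ℤ) + 1 - k) * (qpow (k - 1) * gb m (k - 1) + gb m (k - 1 - 1))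
              = qpow k * gb m k +
                (qpow (((m+1:ℕ):ℤ) + 1 - k) * qpow (k-1)) * gb m (k - 1) + gb m (k-1) +
                qpow (((m+1:ℕ):ℤ) + 1 - k) * gb m (k - 1 - 1) := by ring
            _ = _ := by rw [e1]; ring
        · -- k = m + 2
          subst h2
          rw [gb_succ (m+1) ((m:ℤ)+2), gb_gt (m+1) ((m:ℤ)+2) (by push_cast; omega),
            (by push_cast; ring : ((m+1:ℕ):ℤ) + 1 - ((m:ℤ) + 2) = 0), qpow_zero]
          simp
        · rw [gb_gt (m+2) k (by push_cast; omega), gb_gt (m+1) k (by push_cast; omega),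
            gb_gt (m+1) (k-1) (by push_cast; omega)]
          simp

/-- `(q;q)_n` -/
def E (n : ℕ) : R := ∏ i ∈ range n, (1 - X ^ (i + 1))

def Pp (n : ℕ) : R := ∏ i ∈ range n, (1 + X ^ (i + 1))

def Podd (n : ℕ) : R := ∏ i ∈ range n, (1 - X ^ (2 * i + 1))

def Peven (n : ℕ) : R := ∏ i ∈ range n, (1 - X ^ (2 * i + 2))

lemma E_succ (n : ℕ) : E (n + 1) = E n * (1 - X ^ (n + 1)) := prod_range_succ _ _

lemma E_zero : E 0 = 1 := rfl

lemma E_double (n : ℕ) : E (2 * n) = Podd n * Peven n := by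
  induction n with
  | zero => simp [E, Podd, Peven]
  | succ n ih =>
      have : 2 * (n + 1) = (2 * n + 1) + 1 := by ring
      rw [this, E_succ, (by ring : 2*n+1 = (2*n)+1), E_succ, ih]
      unfold Podd Peven
      rw [prod_range_succ, prod_range_succ,
        (by ring : 2 * n + 1 + 1 = 2 * n + 2)]
      ring

lemma Peven_eq (n : ℕ) : Peven n = E n * Pp n := by
  unfold Peven E Pp
  rw [← prod_mul_distrib]
  refine prod_congr rfl fun i _ => ?_
  have : (2 : ℕ) * i + 2 = (i+1) + (i+1) := by ring
  rw [this, pow_add]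
  ring

/-- The product formula for the Gaussian binomials. -/
lemma gb_mul_E : ∀ (m : ℕ) (k : ℤ), 0 ≤ k → k ≤ m →
    gb m k * E k.toNat * E (m - k.toNat) = E m
  | 0, k, h0, h1 => by
      have : k = 0 := by omega
      subst this
      simp [gb_zero, E_zero]
  | m + 1, k, h0, h1 => by
      rcases eq_or_lt_of_le h0 with rfl | hk
      · rw [gb_zero]
        simp [E_zero]
      · -- 1 ≤ k
        rcases eq_or_lt_of_le h1 with he | hlt
        · -- k = m + 1
          have hkt : k.toNat = m + 1 := by omega
          rw [gb_succ, gb_gt m k (by omega), (by omega : (m:ℤ) + 1 - k = 0),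
            qpow_zero, hkt, (by omega : m + 1 - (m+1) = 0), E_zero, mul_one]
          have h2 : gb m (k-1) * E (k-1).toNat * E (m - (k-1).toNat) = E m :=
            gb_mul_E m (k-1) (by omega) (by omega)
          have h3 : (k-1).toNat = m := by omega
          rw [h3] at h2
          simp only [Nat.sub_self, E_zero, mul_one] at h2
          rw [E_succ]
          linear_combination (1 - (PowerSeries.X : PowerSeries ℚ) ^ (m+1)) * h2
        · -- 1 ≤ k ≤ m
          have hkm : k.toNat ≤ m := by omega
          have hq : qpow ((m:ℤ) + 1 - k) = X ^ (m + 1 - k.toNat) := by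
            unfold qpow; congr 1; omega
          have hE1 : E (m + 1 - k.toNat) = E (m - k.toNat) * (1 - X ^ (m + 1 - k.toNat)) := by
            have h := E_succ (m - k.toNat)
            rwa [(by omega : m - k.toNat + 1 = m + 1 - k.toNat)] at h
          have hE2 : E k.toNat = E (k-1).toNat * (1 - X ^ k.toNat) := by
            have h := E_succ (k-1).toNat
            rwa [(by omega : (k-1).toNat + 1 = k.toNat)] at h
          have ih1 : gb m k * E k.toNat * E (m - k.toNat) = E m :=
            gb_mul_E m k h0 (by omega)
          have ih2 : gb m (k-1) * E (k-1).toNat * E (m - (k-1).toNat) = E m :=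
            gb_mul_E m (k-1) (by omega) (by omega)
          have h4 : m - (k-1).toNat = (m - k.toNat) + 1 := by omega
          rw [h4, E_succ, (by omega : m - k.toNat + 1 = m + 1 - k.toNat)] at ih2
          have key : (PowerSeries.X : PowerSeries ℚ) ^ (m + 1 - k.toNat) * PowerSeries.X ^ k.toNat = (PowerSeries.X : PowerSeries ℚ) ^ (m + 1) := by
            rw [← pow_add]; congr 1; omega
          rw [gb_succ, hq, E_succ]
          linear_combination ((gb m k + X ^ (m + 1 - k.toNat) * gb m (k-1)) * E k.toNat) * hE1
            + (X ^ (m + 1 - k.toNat) * gb m (k-1) * (E (m - k.toNat) * (1 - X ^ (m + 1 - k.toNat)))) * hE2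
            + (1 - (PowerSeries.X : PowerSeries ℚ) ^ (m + 1 - k.toNat)) * ih1
            + ((PowerSeries.X : PowerSeries ℚ) ^ (m + 1 - k.toNat) * (1 - (PowerSeries.X : PowerSeries ℚ) ^ k.toNat)) * ih2
            - (E m) * key

lemma eps_sub_one (j : ℤ) : eps (j - 1) = - eps j := by
  have h := eps_add_one (j - 1)
  rw [sub_add_cancel] at h
  rw [h]; ring

lemma sum_Icc_shrink {lo hi lo' hi' : ℤ} (f : ℤ → R) (h1 : lo ≤ lo') (h2 : hi' ≤ hi)
    (hvan : ∀ j ∈ Icc lo hi, j ∉ Icc lo' hi' → f j = 0) :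
    ∑ j ∈ Icc lo hi, f j = ∑ j ∈ Icc lo' hi', f j :=
  (Finset.sum_subset (Finset.Icc_subset_Icc h1 h2) hvan).symm

lemma sum_shift (lo hi : ℤ) (f : ℤ → R) :
    ∑ j ∈ Icc lo hi, f j = ∑ j ∈ Icc (lo - 1) (hi - 1), f (j + 1) := by
  have h : Icc lo hi = (Icc (lo - 1) (hi - 1)).map (addRightEmbedding 1) := by
    rw [Finset.map_add_right_Icc]; congr 1 <;> ring
  rw [h, Finset.sum_map]
  rfl

lemma sum_shift_up (lo hi : ℤ) (f : ℤ → R) :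
    ∑ j ∈ Icc lo hi, f j = ∑ j ∈ Icc (lo + 1) (hi + 1), f (j - 1) := by
  rw [sum_shift (lo + 1) (hi + 1) (fun j => f (j - 1))]
  simp

/-- summand of the Gauss alternating sum -/
def sterm (n : ℕ) (j : ℤ) : R := eps j * qpow (j ^ 2) * gb (2 * n) ((n : ℤ) + j)

/-- the Gauss alternating sum `∑_{j=-n}^n (-1)^j q^{j²} [2n; n+j]` -/
def S (n : ℕ) : R := ∑ j ∈ Icc (-(n : ℤ)) n, sterm n j

lemma gbvan (n : ℕ) {j : ℤ} (h : j ∉ Icc (-(n : ℤ)) n) : gb (2 * n) ((n : ℤ) + j) = 0 := by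
  simp only [mem_Icc, not_and_or, not_le] at h
  rcases h with h | h
  · exact gb_neg _ _ (by omega)
  · exact gb_gt _ _ (by push_cast; omega)

lemma S_succ (n : ℕ) : S (n + 1) = (1 - X ^ (2 * n + 1)) * S n := by
  have expand : ∀ j ∈ Icc (-(n : ℤ) - 1) ((n : ℤ) + 1),
      sterm (n + 1) j
        = eps j * qpow (j ^ 2 + ((n : ℤ) + 1 + j)) * gb (2 * n) ((n : ℤ) + 1 + j)
        + eps j * qpow (j ^ 2) * gb (2 * n) ((n : ℤ) + j)
        + eps j * qpow (j ^ 2 + ((n : ℤ) + 1 - j)) * gb (2 * n) ((n : ℤ) + j)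
        + eps j * qpow (j ^ 2 + 2 * ((n : ℤ) + 1 - j)) * gb (2 * n) ((n : ℤ) + j - 1) := by
    intro j hj
    simp only [mem_Icc] at hj
    unfold sterm
    have hc : ((n + 1 : ℕ) : ℤ) + j = (n : ℤ) + 1 + j := by push_cast; ring
    have e1 : gb (2 * n + 1 + 1) ((n : ℤ) + 1 + j)
        = gb (2 * n + 1) ((n : ℤ) + 1 + j) + qpow ((n : ℤ) + 1 - j) * gb (2 * n + 1) ((n : ℤ) + j) := by
      rw [gb_succ, (by push_cast; ring : ((2 * n + 1 : ℕ) : ℤ) + 1 - ((n : ℤ) + 1 + j) = (n : ℤ) + 1 - j),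
        (by ring : (n : ℤ) + 1 + j - 1 = (n : ℤ) + j)]
    have e2 : gb (2 * n + 1) ((n : ℤ) + 1 + j)
        = qpow ((n : ℤ) + 1 + j) * gb (2 * n) ((n : ℤ) + 1 + j) + gb (2 * n) ((n : ℤ) + j) := by
      rw [gb_pascal' (2 * n) ((n : ℤ) + 1 + j),
        (by ring : (n : ℤ) + 1 + j - 1 = (n : ℤ) + j)]
    have e3 : gb (2 * n + 1) ((n : ℤ) + j)
        = gb (2 * n) ((n : ℤ) + j) + qpow ((n : ℤ) + 1 - j) * gb (2 * n) ((n : ℤ) + j - 1) := by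
      rw [gb_succ, (by push_cast; ring : ((2 * n : ℕ) : ℤ) + 1 - ((n : ℤ) + j) = (n : ℤ) + 1 - j)]
    have q1 : qpow (j ^ 2 + ((n : ℤ) + 1 + j)) = qpow (j ^ 2) * qpow ((n : ℤ) + 1 + j) :=
      qpow_add (sq_nonneg j) (by omega)
    have q2 : qpow (j ^ 2 + ((n : ℤ) + 1 - j)) = qpow (j ^ 2) * qpow ((n : ℤ) + 1 - j) :=
      qpow_add (sq_nonneg j) (by omega)
    have q3 : qpow (j ^ 2 + 2 * ((n : ℤ) + 1 - j))
        = qpow (j ^ 2) * (qpow ((n : ℤ) + 1 - j) * qpow ((n : ℤ) + 1 - j)) := by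
      rw [(by ring : j ^ 2 + 2 * ((n : ℤ) + 1 - j) = (j ^ 2 + ((n : ℤ) + 1 - j)) + ((n : ℤ) + 1 - j)),
        qpow_add (add_nonneg (sq_nonneg j) (by omega)) (by omega), q2]
      ring
    rw [(by ring : 2 * (n + 1) = 2 * n + 1 + 1), hc, e1, e2, e3, q1, q2, q3]
    ring
  have hbounds1 : (-(((n : ℕ) + 1 : ℕ) : ℤ)) = -(n : ℤ) - 1 := by push_cast; ring
  have hbounds2 : (((n + 1 : ℕ)) : ℤ) = (n : ℤ) + 1 := by push_cast; ring
  unfold S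
  rw [hbounds1, hbounds2, Finset.sum_congr rfl expand, Finset.sum_add_distrib,
    Finset.sum_add_distrib, Finset.sum_add_distrib]
  -- T1
  have hT1 : ∑ j ∈ Icc (-(n : ℤ) - 1) ((n : ℤ) + 1),
      eps j * qpow (j ^ 2 + ((n : ℤ) + 1 + j)) * gb (2 * n) ((n : ℤ) + 1 + j)
      = - ∑ j ∈ Icc (-(n : ℤ)) n,
          eps j * qpow (j ^ 2 + ((n : ℤ) + 1 - j)) * gb (2 * n) ((n : ℤ) + j) := by
    rw [sum_shift_up]
    rw [(by ring : -(n : ℤ) - 1 + 1 = -(n : ℤ))]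
    have hpt : ∀ j ∈ Icc (-(n : ℤ)) ((n : ℤ) + 1 + 1),
        eps (j - 1) * qpow ((j - 1) ^ 2 + ((n : ℤ) + 1 + (j - 1))) * gb (2 * n) ((n : ℤ) + 1 + (j - 1))
        = - (eps j * qpow (j ^ 2 + ((n : ℤ) + 1 - j)) * gb (2 * n) ((n : ℤ) + j)) := by
      intro j hj
      rw [eps_sub_one, (by ring : (j - 1) ^ 2 + ((n : ℤ) + 1 + (j - 1)) = j ^ 2 + ((n : ℤ) + 1 - j)),
        (by ring : (n : ℤ) + 1 + (j - 1) = (n : ℤ) + j)]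
      ring
    rw [Finset.sum_congr rfl hpt, Finset.sum_neg_distrib]
    congr 1
    refine sum_Icc_shrink _ (le_refl _) (by omega) ?_
    intro j hj hj'
    rw [gbvan n hj']
    ring
  -- T3
  have hT3 : ∑ j ∈ Icc (-(n : ℤ) - 1) ((n : ℤ) + 1),
      eps j * qpow (j ^ 2 + ((n : ℤ) + 1 - j)) * gb (2 * n) ((n : ℤ) + j)
      = ∑ j ∈ Icc (-(n : ℤ)) n,
          eps j * qpow (j ^ 2 + ((n : ℤ) + 1 - j)) * gb (2 * n) ((n : ℤ) + j) := by
    refine sum_Icc_shrink _ (by omega) (by omega) ?_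
    intro j hj hj'
    rw [gbvan n hj']
    ring
  -- T2
  have hT2 : ∑ j ∈ Icc (-(n : ℤ) - 1) ((n : ℤ) + 1),
      eps j * qpow (j ^ 2) * gb (2 * n) ((n : ℤ) + j) = S n := by
    unfold S sterm
    refine sum_Icc_shrink _ (by omega) (by omega) ?_
    intro j hj hj'
    rw [gbvan n hj']
    ring
  -- T4
  have hT4 : ∑ j ∈ Icc (-(n : ℤ) - 1) ((n : ℤ) + 1),
      eps j * qpow (j ^ 2 + 2 * ((n : ℤ) + 1 - j)) * gb (2 * n) ((n : ℤ) + j - 1)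
      = - (X ^ (2 * n + 1) * S n) := by
    rw [sum_shift]
    have hpt : ∀ j ∈ Icc (-(n : ℤ) - 1 - 1) ((n : ℤ) + 1 - 1),
        eps (j + 1) * qpow ((j + 1) ^ 2 + 2 * ((n : ℤ) + 1 - (j + 1))) * gb (2 * n) ((n : ℤ) + (j + 1) - 1)
        = - (X ^ (2 * n + 1) * (eps j * qpow (j ^ 2) * gb (2 * n) ((n : ℤ) + j))) := by
      intro j hj
      simp only [mem_Icc] at hj
      rw [eps_add_one,
        (by ring : (j + 1) ^ 2 + 2 * ((n : ℤ) + 1 - (j + 1)) = j ^ 2 + (2 * (n : ℤ) + 1)),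
        qpow_add (sq_nonneg j) (by omega),
        (by ring : (n : ℤ) + (j + 1) - 1 = (n : ℤ) + j)]
      have : qpow (2 * (n : ℤ) + 1) = X ^ (2 * n + 1) := by
        rw [(by push_cast; ring : 2 * (n : ℤ) + 1 = ((2 * n + 1 : ℕ) : ℤ)), qpow_natCast]
      rw [this]
      ring
    rw [Finset.sum_congr rfl hpt, Finset.sum_neg_distrib, ← Finset.mul_sum]
    congr 2
    unfold S sterm
    refine sum_Icc_shrink _ (by omega) (by omega) ?_
    intro j hj hj'
    rw [gbvan n hj']
    ring
  rw [hT1, hT2, hT3, hT4]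
  unfold S
  ring

lemma S_eq_Podd (n : ℕ) : S n = Podd n := by
  induction n with
  | zero =>
      unfold S Podd sterm
      simp [eps_zero, gb_zero, qpow_zero]
  | succ n ih =>
      rw [S_succ, ih]
      unfold Podd
      rw [prod_range_succ]
      ring

lemma E_dvd_sub {m : ℕ} : ∀ a, m ≤ a → (X : R) ^ (m + 1) ∣ E a - E m := by
  intro a
  induction a with
  | zero => intro h; rw [(by omega : m = 0)]; simp
  | succ a ih =>
      intro h
      rcases eq_or_lt_of_le h with rfl | h'
      · simp
      · have hm : m ≤ a := by omega
        have hE : E (a + 1) - E m = (E a - E m) - X ^ (a + 1) * E a := by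
          rw [E_succ]; ring
        rw [hE]
        exact dvd_sub (ih hm) (Dvd.dvd.mul_right (pow_dvd_pow X (by omega)) _)

lemma constantCoeff_E (n : ℕ) : constantCoeff (R := ℚ) (E n) = 1 := by
  unfold E
  rw [map_prod]
  refine Finset.prod_eq_one fun i _ => ?_
  rw [map_sub, map_one, map_pow, constantCoeff_X, zero_pow (by omega)]
  ring

lemma constantCoeff_Pp (n : ℕ) : constantCoeff (R := ℚ) (Pp n) = 1 := by
  unfold Pp
  rw [map_prod]
  refine Finset.prod_eq_one fun i _ => ?_
  rw [map_add, map_one, map_pow, constantCoeff_X, zero_pow (by omega)]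
  ring

lemma constantCoeff_Podd (n : ℕ) : constantCoeff (R := ℚ) (Podd n) = 1 := by
  unfold Podd
  rw [map_prod]
  refine Finset.prod_eq_one fun i _ => ?_
  rw [map_sub, map_one, map_pow, constantCoeff_X, zero_pow (by omega)]
  ring

lemma unit_cancel {u f : R} (hu : constantCoeff (R := ℚ) u ≠ 0) {k : ℕ} (h : (X : R) ^ k ∣ u * f) :
    (X : R) ^ k ∣ f := by
  obtain ⟨c, hc⟩ := h
  refine ⟨u⁻¹ * c, ?_⟩
  calc f = (u⁻¹ * u) * f := by rw [PowerSeries.inv_mul_cancel u hu, one_mul]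
    _ = u⁻¹ * (u * f) := by ring
    _ = u⁻¹ * (X ^ k * c) := by rw [hc]
    _ = X ^ k * (u⁻¹ * c) := by ring

/-- the two-sided Gauss series `∑_{|j| ≤ n} (-1)^j q^{j²}` -/
def G (n : ℕ) : R := ∑ j ∈ Icc (-(n : ℤ)) n, eps j * qpow (j ^ 2)

lemma E_sub_dvd' {m a b : ℕ} (ha : m ≤ a) (hb : m ≤ b) :
    (X : R) ^ (m + 1) ∣ E a - E b := by
  have h : E a - E b = (E a - E m) - (E b - E m) := by ring
  rw [h]
  exact dvd_sub (E_dvd_sub a ha) (E_dvd_sub b hb)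

lemma key_cong (n : ℕ) {j : ℤ} (hj : j ∈ Icc (-(n : ℤ)) n) :
    (X : R) ^ (n + 1) ∣ sterm n j * (E n * E n) - eps j * qpow (j ^ 2) * E (2 * n) := by
  simp only [mem_Icc] at hj
  have hk0 : 0 ≤ (n : ℤ) + j := by omega
  have hk2 : (n : ℤ) + j ≤ ((2 * n : ℕ) : ℤ) := by push_cast; omega
  have hprod := gb_mul_E (2 * n) ((n : ℤ) + j) hk0 hk2
  rw [← hprod]
  have hja : j.natAbs ≤ n := by omega
  have hm1 : n - j.natAbs ≤ ((n : ℤ) + j).toNat := by omega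
  have hm2 : n - j.natAbs ≤ 2 * n - ((n : ℤ) + j).toNat := by omega
  have hm3 : n - j.natAbs ≤ n := by omega
  have hEfac : (X : R) ^ (n - j.natAbs + 1) ∣
      E n * E n - E ((n : ℤ) + j).toNat * E (2 * n - ((n : ℤ) + j).toNat) := by
    have hsplit : E n * E n - E ((n : ℤ) + j).toNat * E (2 * n - ((n : ℤ) + j).toNat)
        = (E n - E ((n : ℤ) + j).toNat) * E n
          + E ((n : ℤ) + j).toNat * (E n - E (2 * n - ((n : ℤ) + j).toNat)) := by ring
    rw [hsplit]
    exact dvd_add ((E_sub_dvd' hm3 hm1).mul_right _) ((E_sub_dvd' hm3 hm2).mul_left _)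
  have hstep : sterm n j * (E n * E n)
      - eps j * qpow (j ^ 2) * (gb (2 * n) ((n : ℤ) + j) * E ((n : ℤ) + j).toNat *
          E (2 * n - ((n : ℤ) + j).toNat))
      = (eps j * gb (2 * n) ((n : ℤ) + j)) *
        (qpow (j ^ 2) * (E n * E n - E ((n : ℤ) + j).toNat * E (2 * n - ((n : ℤ) + j).toNat))) := by
    unfold sterm
    ring
  rw [hstep]
  refine Dvd.dvd.mul_left ?_ _
  obtain ⟨c, hc⟩ := hEfac
  rw [hc]
  unfold qpow
  rw [← mul_assoc, ← pow_add]
  have hsq : (j ^ 2).toNat = j.natAbs ^ 2 := by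
    have h1 := Int.natAbs_pow j 2
    have h2 := sq_nonneg j
    omega
  have hle : n + 1 ≤ (j ^ 2).toNat + (n - j.natAbs + 1) := by
    have h3 : j.natAbs ≤ j.natAbs ^ 2 := Nat.le_self_pow (by omega) _
    omega
  exact (pow_dvd_pow X hle).mul_right c

lemma main_cong (n : ℕ) : (X : R) ^ (n + 1) ∣ S n * (E n * E n) - G n * E (2 * n) := by
  have hsum : S n * (E n * E n) - G n * E (2 * n)
      = ∑ j ∈ Icc (-(n : ℤ)) n,
          (sterm n j * (E n * E n) - eps j * qpow (j ^ 2) * E (2 * n)) := by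
    unfold S G
    rw [Finset.sum_sub_distrib, Finset.sum_mul, Finset.sum_mul]
  rw [hsum]
  exact Finset.dvd_sum fun j hj => key_cong n hj

lemma main_dvd (n : ℕ) : (X : R) ^ (n + 1) ∣ E n - G n * Pp n := by
  have h := main_cong n
  rw [S_eq_Podd, E_double, Peven_eq] at h
  have hre : Podd n * (E n * E n) - G n * (Podd n * (E n * Pp n))
      = (Podd n * E n) * (E n - G n * Pp n) := by ring
  rw [hre] at h
  exact unit_cancel (by rw [map_mul, constantCoeff_Podd, constantCoeff_E]; norm_num) h

lemma G_eq (n : ℕ) :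
    G n = 1 - 2 * ∑ m ∈ range n, (-1 : R) ^ m * X ^ ((m + 1) ^ 2) := by
  induction n with
  | zero =>
      unfold G
      simp [eps_zero, qpow_zero]
  | succ n ih =>
      have hsplit : Icc (-((n + 1 : ℕ) : ℤ)) ((n + 1 : ℕ) : ℤ)
          = insert (-(n : ℤ) - 1) (insert ((n : ℤ) + 1) (Icc (-(n : ℤ)) n)) := by
        ext x
        simp only [mem_Icc, mem_insert]
        push_cast
        omega
      unfold G
      rw [hsplit, Finset.sum_insert (by simp only [mem_insert, mem_Icc]; omega),
        Finset.sum_insert (by simp only [mem_Icc]; omega)]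
      have he1 : eps (-(n : ℤ) - 1) = (-1 : R) ^ (n + 1) := by unfold eps; congr 1 <;> omega
      have he2 : eps ((n : ℤ) + 1) = (-1 : R) ^ (n + 1) := by unfold eps; congr 1 <;> omega
      have hq1 : qpow ((-(n : ℤ) - 1) ^ 2) = X ^ ((n + 1) ^ 2) := by
        rw [(by push_cast; ring : (-(n : ℤ) - 1) ^ 2 = (((n + 1) ^ 2 : ℕ) : ℤ)), qpow_natCast]
      have hq2 : qpow (((n : ℤ) + 1) ^ 2) = X ^ ((n + 1) ^ 2) := by
        rw [(by push_cast; ring : ((n : ℤ) + 1) ^ 2 = (((n + 1) ^ 2 : ℕ) : ℤ)), qpow_natCast]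
      rw [he1, he2, hq1, hq2]
      have hGn : ∑ j ∈ Icc (-(n : ℤ)) n, eps j * qpow (j ^ 2) = G n := rfl
      rw [hGn, ih, Finset.sum_range_succ]
      have hpow : ((-1 : R) ^ (n + 1)) = -(-1 : R) ^ n := by rw [pow_succ]; ring
      rw [hpow]
      ring

end

end OddProj

/-- As formal power series in `q`,
`(1/2)·(∏_{n≥1} 1/(1−q^n) − ∏_{n≥1} 1/(1+q^n)) = (∑_{m≥1} (−1)^{m−1} q^{m²})·∏_{n≥1} 1/(1−q^n)`.
Stated coefficient-wise, via the stabilizing partial products/sums. -/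
theorem odd_projector_trace (N : ℕ) :
    PowerSeries.coeff (R := ℚ) N
      ((PowerSeries.C (R := ℚ) (1 / 2)) *
        (∏ n ∈ Finset.range (N + 1), (1 - (PowerSeries.X : PowerSeries ℚ) ^ (n + 1))⁻¹ -
         ∏ n ∈ Finset.range (N + 1), (1 + (PowerSeries.X : PowerSeries ℚ) ^ (n + 1))⁻¹)) =
    PowerSeries.coeff (R := ℚ) N
      ((∑ m ∈ Finset.range (N + 1), (-1 : PowerSeries ℚ) ^ m * PowerSeries.X ^ ((m + 1) ^ 2)) *
        ∏ n ∈ Finset.range (N + 1), (1 - (PowerSeries.X : PowerSeries ℚ) ^ (n + 1))⁻¹) := by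
  set IA := ∏ n ∈ Finset.range (N + 1), (1 - (PowerSeries.X : PowerSeries ℚ) ^ (n + 1))⁻¹ with hIA
  set IB := ∏ n ∈ Finset.range (N + 1), (1 + (PowerSeries.X : PowerSeries ℚ) ^ (n + 1))⁻¹ with hIB
  set Ss := ∑ m ∈ Finset.range (N + 1), (-1 : PowerSeries ℚ) ^ m * PowerSeries.X ^ ((m + 1) ^ 2)
    with hSs
  have hIAE : IA * OddProj.E (N + 1) = 1 := by
    rw [hIA]
    unfold OddProj.E
    rw [← Finset.prod_mul_distrib]
    refine Finset.prod_eq_one fun i _ => PowerSeries.inv_mul_cancel _ ?_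
    rw [map_sub, map_one, map_pow, constantCoeff_X, zero_pow (by omega)]
    norm_num
  have hIBP : IB * OddProj.Pp (N + 1) = 1 := by
    rw [hIB]
    unfold OddProj.Pp
    rw [← Finset.prod_mul_distrib]
    refine Finset.prod_eq_one fun i _ => PowerSeries.inv_mul_cancel _ ?_
    rw [map_add, map_one, map_pow, constantCoeff_X, zero_pow (by omega)]
    norm_num
  rw [← sub_eq_zero, ← map_sub]
  suffices h : (PowerSeries.X : PowerSeries ℚ) ^ (N + 2) ∣
      (PowerSeries.C (R := ℚ) (1 / 2) * (IA - IB) - Ss * IA) by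
    exact (PowerSeries.X_pow_dvd_iff.mp h) N (by omega)
  have hmain := OddProj.main_dvd (N + 1)
  rw [OddProj.G_eq, ← hSs] at hmain
  have h2 : (PowerSeries.C (R := ℚ) (1 / 2)) * 2 = 1 := by
    rw [← map_ofNat (PowerSeries.C (R := ℚ)) 2, ← map_mul]
    norm_num
  have hD : (PowerSeries.C (R := ℚ) (1 / 2) * (IA - IB) - Ss * IA) *
        (OddProj.E (N + 1) * OddProj.Pp (N + 1))
      = PowerSeries.C (R := ℚ) (1 / 2) * ((1 - 2 * Ss) * OddProj.Pp (N + 1) - OddProj.E (N + 1)) := by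
    linear_combination (PowerSeries.C (R := ℚ) (1 / 2) * OddProj.Pp (N + 1)
        - Ss * OddProj.Pp (N + 1)) * hIAE
      - (PowerSeries.C (R := ℚ) (1 / 2) * OddProj.E (N + 1)) * hIBP
      + (Ss * OddProj.Pp (N + 1)) * h2
  have hneg : (1 - 2 * Ss) * OddProj.Pp (N + 1) - OddProj.E (N + 1)
      = -(OddProj.E (N + 1) - (1 - 2 * Ss) * OddProj.Pp (N + 1)) := by ring
  have hdvd2 : (PowerSeries.X : PowerSeries ℚ) ^ (N + 2) ∣
      (PowerSeries.C (R := ℚ) (1 / 2) * (IA - IB) - Ss * IA) *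
        (OddProj.E (N + 1) * OddProj.Pp (N + 1)) := by
    rw [hD, hneg]
    exact (hmain.neg_right).mul_left _
  refine OddProj.unit_cancel (u := OddProj.E (N + 1) * OddProj.Pp (N + 1)) ?_ ?_
  · rw [map_mul, OddProj.constantCoeff_E, OddProj.constantCoeff_Pp]
    norm_num
  · rwa [mul_comm] at hdvd2
end

section
/- As formal power series in t, ∑_{n≥0} t^{n(n+1)/2} = ∏_{n≥1} (1−t^{2n})/(1−t^{2n−1}). -/
set_option maxHeartbeats 1600000

open PowerSeries Finset

namespace GaussTri
noncomputable section

abbrev R := PowerSeries ℚ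
abbrev XX : R := PowerSeries.X

def C : ℕ → ℕ → R
  | 0, 0 => 1
  | 0, _+1 => 0
  | n+1, 0 => C n 0
  | n+1, k+1 => XX ^ (4*(k+1)) * C n (k+1) + C n k

@[simp] lemma C_zero_right : ∀ n, C n 0 = 1
  | 0 => rfl
  | n+1 => by rw [C, C_zero_right n]

lemma C_eq_zero : ∀ n k, n < k → C n k = 0
  | 0, k+1, _ => rfl
  | n+1, k+1, h => by
      rw [C, C_eq_zero n (k+1) (by omega), C_eq_zero n k (by omega), mul_zero, add_zero]

@[simp] lemma C_diag : ∀ n, C n n = 1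
  | 0 => rfl
  | n+1 => by rw [C, C_eq_zero n (n+1) (by omega), mul_zero, zero_add, C_diag n]

lemma C_succ (n k : ℕ) : C (n+1) (k+1) = XX ^ (4*(k+1)) * C n (k+1) + C n k := by rw [C]

attribute [irreducible] C

/-- symmetric Pascal rule -/
lemma pascal2 : ∀ n, ∀ k, C (n+1) (k+1) = C n (k+1) + XX ^ (4*(n-k)) * C n k := by
  intro n
  induction n with
  | zero =>
      intro k
      match k with
      | 0 => simp [C_succ, C]
      | k+1 => simp [C_succ, C, C_eq_zero 0 (k+1) (by omega)]
  | succ n IH =>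
      intro k
      match k with
      | 0 =>
          have hdef : C (n+1) 1 = XX^4 * C n 1 + 1 := by simp [C_succ]
          have h : XX^4 * C n 1 + 1 = C n 1 + XX^(4*n) := by
            rw [← hdef]; simpa using IH 0
          rw [show (4*(n+1-0)) = 4*(n+1) by omega]
          rw [C_succ, hdef]
          simp only [C_zero_right, mul_one]
          linear_combination (XX^4) * h
      | k'+1 =>
          rcases le_or_gt (k'+1) n with hk | hk
          · obtain ⟨d, hd⟩ : ∃ d, n = k'+1+d := ⟨n - (k'+1), by omega⟩
            have h0 : C (n+2) (k'+2) = XX^(4*(k'+2)) * C (n+1) (k'+2) + C (n+1) (k'+1) :=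
              C_succ (n+1) (k'+1)
            have h1 : C (n+1) (k'+2) = XX^(4*(k'+2)) * C n (k'+2) + C n (k'+1) := C_succ n (k'+1)
            have h2 : C (n+1) (k'+2) = C n (k'+2) + XX^(4*d) * C n (k'+1) := by
              have := IH (k'+1); rwa [show n - (k'+1) = d by omega] at this
            have h3 : C (n+1) (k'+1) = XX^(4*(k'+1)) * C n (k'+1) + C n k' := C_succ n k'
            have h4 : C (n+1) (k'+1) = C n (k'+1) + XX^(4*(d+1)) * C n k' := by
              have := IH k'; rwa [show n - k' = d+1 by omega] at this
            rw [show n+1-(k'+1) = d+1 by omega]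
            linear_combination h0 + (XX^(4*(k'+2)) - 1)*h2 + (1 - XX^(4*(d+1)))*h3 + h2 - h1 + h4 - h3
          · rcases eq_or_lt_of_le (Nat.succ_le_of_lt hk) with he | hlt
            · -- k'+1 = n+1, i.e. n = k'
              have hn : n = k' := by omega
              subst hn
              simp [C_diag, C_eq_zero n (n+2) (by omega), C_eq_zero (n+1) (n+2) (by omega)]
            · -- k'+1 > n+1
              simp [C_eq_zero (n+2) (k'+2) (by omega), C_eq_zero (n+1) (k'+2) (by omega),
                C_eq_zero (n+1) (k'+1) (by omega)]


lemma C_symm : ∀ n, ∀ k, k ≤ n → C n k = C n (n-k) := by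
  intro n
  induction n with
  | zero => intro k hk; interval_cases k; simp
  | succ n IH =>
      intro k hk
      match k with
      | 0 => simp
      | k''+1 =>
          rcases eq_or_lt_of_le hk with he | hlt
          · rw [he]; simp
          · have hkn : k'' + 1 ≤ n := by omega
            obtain ⟨d, hd⟩ : ∃ d, n = k'' + 1 + d := ⟨n - (k''+1), by omega⟩
            rw [C_succ n k'', show n + 1 - (k''+1) = (n-k''-1)+1 by omega,
              pascal2 n (n-k''-1), show n - (n-k''-1) = k''+1 by omega]
            have e1 : C n (n-k''-1+1) = C n k'' := by
              have h := IH k'' (by omega)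
              rw [show n - k'' = n-k''-1+1 by omega] at h
              exact h.symm
            have e2 : C n (n-k''-1) = C n (k''+1) := by
              have h := IH (k''+1) hkn
              rw [show n - (k''+1) = n-k''-1 by omega] at h
              exact h.symm
            rw [e1, e2]; ring

lemma poch_mul_C : ∀ n, ∀ k, k ≤ n →
    (∏ i ∈ range k, (1 - XX^(4*i+4))) * C n k
      = ∏ i ∈ range k, (1 - XX^(4*(n-k+i)+4)) := by
  intro n
  induction n with
  | zero => intro k hk; interval_cases k; simp
  | succ n IH =>
      intro k hk
      match k with
      | 0 => simp
      | k''+1 =>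
          rcases eq_or_lt_of_le hk with he | hlt
          · rw [he]; rw [C_diag]; rw [mul_one]
            apply Finset.prod_congr rfl
            intro i _; congr 2; omega
          · have hkn : k'' + 1 ≤ n := by omega
            obtain ⟨d, hd⟩ : ∃ d, n = k'' + 1 + d := ⟨n - (k''+1), by omega⟩
            rw [pascal2 n k'', show n - k'' = d + 1 by omega]
            have IH1 := IH (k''+1) hkn
            have IH2 := IH k'' (by omega)
            rw [show n - (k''+1) = d by omega] at IH1
            rw [show n - k'' = d+1 by omega] at IH2
            have hPk : (∏ i ∈ range (k''+1), (1 - XX^(4*i+4)))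
                = (∏ i ∈ range k'', (1 - XX^(4*i+4))) * (1 - XX^(4*k''+4)) := by
              rw [prod_range_succ]
            have hsplit : (∏ i ∈ range (k''+1), (1 - XX^(4*(d+i)+4)))
                = (1 - XX^(4*d+4)) * ∏ i ∈ range k'', (1 - XX^(4*(d+1+i)+4)) := by
              rw [prod_range_succ', show (4*(d+0)+4) = 4*d+4 by omega, mul_comm]
              congr 1
              apply Finset.prod_congr rfl; intro i _; congr 2; omega
            have htgt : (∏ i ∈ range (k''+1), (1 - XX^(4*(n+1-(k''+1)+i)+4)))
                = (∏ i ∈ range k'', (1 - XX^(4*(d+1+i)+4))) * (1 - XX^(4*(d+1+k'')+4)) := by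
              rw [prod_range_succ]
              congr 1
              · apply Finset.prod_congr rfl; intro i _; congr 2; omega
              · congr 2; omega
            linear_combination IH1 + hsplit + XX^(4*(d+1))*(1-XX^(4*k''+4))*IH2
              + XX^(4*(d+1))*(C n k'')*hPk - htgt


def Tt (m k : ℕ) : R := C (2*m) k * XX ^ ((2*m-k)^2 + k^2 + k)

lemma pow_mul_C_eq (m j a b : ℕ) (h : j ≤ 2*m → a = b) :
    XX^a * C (2*m) j = XX^b * C (2*m) j := by
  by_cases hj : j ≤ 2*m
  · rw [h hj]
  · rw [C_eq_zero _ j (by omega), mul_zero, mul_zero]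

lemma C_rec (m k d : ℕ) (hd : 2*m = k + d) :
    C (2*m+2) (k+2) = XX^(4*(k+2)) * C (2*m) (k+2)
      + (1 + XX^(8*m+4)) * C (2*m) (k+1) + XX^(4*d) * C (2*m) k := by
  have hp := pascal2 (2*m+1) (k+1)
  rw [show 2*m+1-(k+1) = d by omega] at hp
  have h1 := C_succ (2*m) (k+1)
  have h2 := C_succ (2*m) k
  rw [show 8*m+4 = 4*d + 4*(k+1) by omega]
  linear_combination hp + h1 + XX^(4*d) * h2

lemma Tt_step0 (m : ℕ) : Tt (m+1) 0 = XX^(8*m+4) * Tt m 0 := by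
  rw [Tt, Tt, C_zero_right, C_zero_right, one_mul, one_mul, ← pow_add]
  congr 1
  simp only [Nat.sub_zero]
  ring

lemma Tt_step1 (m : ℕ) :
    Tt (m+1) 1 = XX^(8*m+4) * Tt m 1 + (XX^(4*m+3) + XX^(12*m+7)) * Tt m 0 := by
  have hrec : C (2*m+2) 1 = XX^4 * C (2*m) 1 + (1 + XX^(8*m+4)) * C (2*m) 0 := by
    have hp := pascal2 (2*m+1) 0
    rw [show 2*m+1-0 = 2*m+1 by omega] at hp
    have h1 := C_succ (2*m) 0
    rw [show 8*m+4 = 4*(2*m+1) by omega]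
    simp only [C_zero_right] at *
    linear_combination hp + h1
  rw [Tt, Tt, Tt, show 2*(m+1) = 2*m+2 by ring, show 2*m+2-1 = 2*m+1 by omega, hrec]
  have eq1 : XX^(4 + ((2*m+1)^2 + 1^2 + 1)) * C (2*m) 1
      = XX^(8*m+4 + ((2*m-1)^2 + 1^2 + 1)) * C (2*m) 1 := by
    apply pow_mul_C_eq
    intro hj
    obtain ⟨e, he⟩ : ∃ e, 2*m = e + 1 := ⟨2*m-1, by omega⟩
    rw [show 2*m-1 = e by omega, show 8*m+4 = 4*(e+1)+4 by omega, he]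
    ring
  have eq2 : (1 : R) * XX^((2*m+1)^2 + 1^2 + 1)
      = XX^(4*m+3 + ((2*m-0)^2 + 0^2 + 0)) := by
    rw [one_mul]
    congr 1
    simp only [Nat.sub_zero]
    ring
  simp only [C_zero_right, mul_one] at *
  linear_combination eq1 + XX^(8*m+4) * eq2 + eq2

lemma Tt_step2 (m k : ℕ) :
    Tt (m+1) (k+2) = XX^(8*m+4) * Tt m (k+2)
      + (XX^(4*m+3) + XX^(12*m+7)) * Tt m (k+1) + XX^(8*m+6) * Tt m k := by
  by_cases hk : k ≤ 2*m
  · obtain ⟨d, hd⟩ : ∃ d, 2*m = k + d := ⟨2*m-k, by omega⟩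
    have hrec := C_rec m k d hd
    rw [Tt, Tt, Tt, Tt, show 2*(m+1) = 2*m+2 by ring,
      show 2*m+2-(k+2) = d by omega, show 2*m-k = d by omega]
    have eq1 : XX^(4*(k+2) + (d^2 + (k+2)^2 + (k+2))) * C (2*m) (k+2)
        = XX^(8*m+4 + ((2*m-(k+2))^2 + (k+2)^2 + (k+2))) * C (2*m) (k+2) := by
      apply pow_mul_C_eq
      intro hj
      obtain ⟨e, he⟩ : ∃ e, 2*m = k+2+e := ⟨2*m-(k+2), by omega⟩
      rw [show 2*m-(k+2) = e by omega, show 8*m+4 = 4*(k+2+e)+4 by omega,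
        show d = e+2 by omega]
      ring
    have eq2 : XX^(d^2 + (k+2)^2 + (k+2)) * C (2*m) (k+1)
        = XX^(4*m+3 + ((2*m-(k+1))^2 + (k+1)^2 + (k+1))) * C (2*m) (k+1) := by
      apply pow_mul_C_eq
      intro hj
      obtain ⟨e, he⟩ : ∃ e, 2*m = k+1+e := ⟨2*m-(k+1), by omega⟩
      rw [show 2*m-(k+1) = e by omega, show 4*m+3 = 2*(k+1+e)+3 by omega,
        show d = e+1 by omega]
      ring
    have eq3 : XX^(4*d + (d^2 + (k+2)^2 + (k+2))) * C (2*m) k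
        = XX^(8*m+6 + (d^2 + k^2 + k)) * C (2*m) k := by
      apply pow_mul_C_eq
      intro hj
      rw [show 8*m+6 = 4*(k+d)+6 by omega]
      ring
    linear_combination XX^(d^2 + (k+2)^2 + (k+2)) * hrec + eq1
      + (1 + XX^(8*m+4)) * eq2 + eq3
  · rw [Tt, Tt, Tt, Tt, C_eq_zero (2*m) (k+2) (by omega), C_eq_zero (2*m) (k+1) (by omega),
      C_eq_zero (2*m) k (by omega), C_eq_zero (2*(m+1)) (k+2) (by omega)]
    simp

def Sm (m : ℕ) : R := ∑ k ∈ range (2*m+1), Tt m k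

lemma Sm_succ (m : ℕ) :
    Sm (m+1) = (XX^(4*m+3) + XX^(8*m+4) + XX^(8*m+6) + XX^(12*m+7)) * Sm m := by
  have z1 : Tt m (2*m+1) = 0 := by rw [Tt, C_eq_zero _ _ (by omega), zero_mul]
  have z2 : Tt m (2*m+2) = 0 := by rw [Tt, C_eq_zero _ _ (by omega), zero_mul]
  have hA : ∑ k ∈ range (2*m+1), Tt m (k+2) + Tt m (0+1) + Tt m 0 = Sm m := by
    have h1 : ∑ k ∈ range (2*m+1+1+1), Tt m k = Sm m := by
      rw [sum_range_succ, sum_range_succ, z1]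
      rw [show 2*m+1+1 = 2*m+2 by omega, z2]
      rw [Sm]; ring
    rw [sum_range_succ', sum_range_succ'] at h1
    exact h1
  have hB : ∑ k ∈ range (2*m+1), Tt m (k+1) + Tt m 0 = Sm m := by
    have h1 : ∑ k ∈ range (2*m+1+1), Tt m k = Sm m := by
      rw [sum_range_succ, z1, Sm]; ring
    rw [sum_range_succ'] at h1
    exact h1
  calc Sm (m+1)
      = ∑ k ∈ range (2*m+1), Tt (m+1) (k+1+1) + Tt (m+1) (0+1) + Tt (m+1) 0 := by
        rw [Sm, show 2*(m+1)+1 = (2*m+1)+1+1 by ring, sum_range_succ', sum_range_succ']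
    _ = ∑ k ∈ range (2*m+1), (XX^(8*m+4) * Tt m (k+2)
          + (XX^(4*m+3) + XX^(12*m+7)) * Tt m (k+1) + XX^(8*m+6) * Tt m k)
        + (XX^(8*m+4) * Tt m (0+1) + (XX^(4*m+3) + XX^(12*m+7)) * Tt m 0)
        + XX^(8*m+4) * Tt m 0 := by
        rw [Tt_step0]
        congr 1
        congr 1
        · exact sum_congr rfl fun k _ => Tt_step2 m k
        · exact Tt_step1 m
    _ = XX^(8*m+4) * (∑ k ∈ range (2*m+1), Tt m (k+2) + Tt m (0+1) + Tt m 0)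
        + (XX^(4*m+3) + XX^(12*m+7)) * (∑ k ∈ range (2*m+1), Tt m (k+1) + Tt m 0)
        + XX^(8*m+6) * (∑ k ∈ range (2*m+1), Tt m k) := by
        rw [sum_add_distrib, sum_add_distrib, ← mul_sum, ← mul_sum, ← mul_sum]
        ring
    _ = (XX^(4*m+3) + XX^(8*m+4) + XX^(8*m+6) + XX^(12*m+7)) * Sm m := by
        rw [hA, hB]
        have hC : ∑ k ∈ range (2*m+1), Tt m k = Sm m := rfl
        rw [hC]; ring

lemma Sm_eq : ∀ m, Sm m = XX^(2*m^2+m) * ∏ j ∈ range m, ((1+XX^(4*j+3))*(1+XX^(4*j+1))) := by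
  intro m
  induction m with
  | zero => simp [Sm, Tt]
  | succ m IH =>
      rw [Sm_succ, IH, prod_range_succ]
      ring


/-- the triangular exponent recentered at `m` -/
def texp (m k : ℕ) : ℕ := (m-k)*(2*(m-k)-1) + (k-m)*(2*(k-m)+1)

lemma texp_exponent (m k : ℕ) (hk : k ≤ 2*m) :
    (2*m-k)^2 + k^2 + k = 2*m^2 + m + texp m k := by
  rcases le_total k m with h | h
  · obtain ⟨d, hd⟩ : ∃ d, m = k + d := ⟨m-k, by omega⟩
    rw [texp, show m-k = d by omega, show k-m = 0 by omega, show 2*m-k = k+2*d by omega]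
    match d with
    | 0 => simp [hd]; ring
    | e+1 =>
        rw [show 2*(e+1)-1 = 2*e+1 by omega, hd]
        ring
  · obtain ⟨d, hd⟩ : ∃ d, k = m + d := ⟨k-m, by omega⟩
    obtain ⟨e, he⟩ : ∃ e, m = d + e := ⟨m-d, by omega⟩
    rw [texp, show m-k = 0 by omega, show k-m = d by omega, show 2*m-k = e by omega,
      hd, he]
    ring

def U (m : ℕ) : R := ∑ k ∈ range (2*m+1), C (2*m) k * XX^(texp m k)

lemma Sm_texp (m : ℕ) : Sm m = XX^(2*m^2+m) * U m := by
  rw [Sm, U, mul_sum]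
  apply sum_congr rfl
  intro k hk
  rw [mem_range] at hk
  rw [Tt, texp_exponent m k (by omega), pow_add]
  ring

lemma U_eq (m : ℕ) : U m = ∏ j ∈ range m, ((1+XX^(4*j+3))*(1+XX^(4*j+1))) := by
  have h := Sm_eq m
  rw [Sm_texp] at h
  exact mul_left_cancel₀ (pow_ne_zero _ PowerSeries.X_ne_zero) h

lemma dvd_mul_sub_one {a b : R} {r : ℕ} (ha : XX^r ∣ a - 1) (hb : XX^r ∣ b - 1) :
    XX^r ∣ a * b - 1 := by
  have : a * b - 1 = a * (b - 1) + (a - 1) := by ring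
  rw [this]
  exact dvd_add (Dvd.dvd.mul_left hb a) ha

lemma dvd_prod_sub_one {s : Finset ℕ} {f : ℕ → R} {r : ℕ}
    (h : ∀ i ∈ s, XX^r ∣ f i - 1) : XX^r ∣ (∏ i ∈ s, f i) - 1 := by
  induction s using Finset.induction_on with
  | empty => simp
  | insert _ _ ha IH =>
      rw [prod_insert ha]
      exact dvd_mul_sub_one (h _ (mem_insert_self _ _))
        (IH fun i hi => h i (mem_insert_of_mem hi))

lemma dvd_one_sub_pow {r e : ℕ} (h : r ≤ e) : XX^r ∣ (1 - XX^e) - 1 := by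
  have : (1 : R) - XX^e - 1 = -(XX^e) := by ring
  rw [this]
  exact dvd_neg.mpr (pow_dvd_pow _ h)

lemma coeff_eq_of_dvd {f g : R} (N : ℕ) (h : XX^(N+1) ∣ f - g) :
    PowerSeries.coeff (R := ℚ) N f = PowerSeries.coeff (R := ℚ) N g := by
  have h0 := (PowerSeries.X_pow_dvd_iff.mp h) N (by omega)
  rw [map_sub] at h0
  exact sub_eq_zero.mp h0

def Wm (m : ℕ) : R := ∏ i ∈ range m, (1 - XX^(4*i+4))

lemma WC_cong (m k : ℕ) (hk : k ≤ m) : XX^(4*k+4) ∣ Wm m * C (2*m) k - 1 := by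
  have hsplit : Wm m = (∏ i ∈ range k, (1 - XX^(4*i+4)))
      * ∏ i ∈ range (m-k), (1 - XX^(4*(k+i)+4)) := by
    rw [Wm, show m = k + (m-k) by omega, prod_range_add]
    congr 1
    · apply prod_congr (by congr 1; omega) ; intro i _; rfl
  have hpc := poch_mul_C (2*m) k (by omega)
  have : Wm m * C (2*m) k = (∏ i ∈ range k, (1 - XX^(4*(2*m-k+i)+4)))
      * ∏ i ∈ range (m-k), (1 - XX^(4*(k+i)+4)) := by
    rw [hsplit, mul_right_comm, hpc]
  rw [this]
  apply dvd_mul_sub_one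
  · apply dvd_prod_sub_one
    intro i _
    exact dvd_one_sub_pow (by omega)
  · apply dvd_prod_sub_one
    intro i _
    exact dvd_one_sub_pow (by omega)

lemma prod_range_two_mul (f : ℕ → R) : ∀ m, ∏ i ∈ range (2*m), f i
    = ∏ j ∈ range m, (f (2*j) * f (2*j+1)) := by
  intro m
  induction m with
  | zero => simp
  | succ m IH =>
      rw [show 2*(m+1) = (2*m)+1+1 by ring, prod_range_succ, prod_range_succ, IH,
        prod_range_succ, show 2*m+1 = 2*m+1 by rfl]
      ring


lemma texp_tri (m k : ℕ) :
    texp m k = (if k < m then 2*(m-k)-1 else 2*(k-m)) *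
      ((if k < m then 2*(m-k)-1 else 2*(k-m)) + 1) / 2 := by
  split_ifs with h
  · obtain ⟨e, he⟩ : ∃ e, m = k + (e+1) := ⟨m-k-1, by omega⟩
    rw [texp, show m-k = e+1 by omega, show k-m = 0 by omega,
      show 2*(e+1)-1 = 2*e+1 by omega]
    rw [show (2*e+1)*((2*e+1)+1) = ((e+1)*(2*e+1))*2 by ring,
      Nat.mul_div_cancel _ (by omega)]
    ring
  · obtain ⟨d, hd⟩ : ∃ d, k = m + d := ⟨k-m, by omega⟩
    rw [texp, show m-k = 0 by omega, show k-m = d by omega]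
    rw [show (2*d)*((2*d)+1) = (d*(2*d+1))*2 by ring,
      Nat.mul_div_cancel _ (by omega)]
    ring

lemma sum_texp (m : ℕ) :
    ∑ k ∈ range (2*m+1), (XX^(texp m k) : R)
      = ∑ s ∈ range (2*m+1), (XX^(s*(s+1)/2) : R) := by
  apply Finset.sum_bij' (i := fun k _ => if k < m then 2*(m-k)-1 else 2*(k-m))
    (j := fun s _ => if s % 2 = 0 then m + s/2 else m - (s/2+1))
  · intro a ha
    rw [mem_range] at *
    split_ifs with h <;> omega
  · intro b hb
    rw [mem_range] at *
    split_ifs with h <;> omega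
  · intro a ha
    rw [mem_range] at ha
    split_ifs with h1 h2 <;> omega
  · intro b hb
    rw [mem_range] at hb
    split_ifs with h1 h2 <;> omega
  · intro a ha
    rw [texp_tri m a]

lemma tri_ge (s : ℕ) : s ≤ s*(s+1)/2 := by
  match s with
  | 0 => simp
  | t+1 =>
      rw [Nat.le_div_iff_mul_le (by norm_num)]
      exact Nat.mul_le_mul le_rfl (by omega)

lemma const_ne (e : ℕ) : constantCoeff (R := ℚ) ((1 : R) - XX^(e+1)) ≠ 0 := by
  rw [map_sub, map_one, map_pow, PowerSeries.constantCoeff_X, zero_pow (by omega)]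
  norm_num

lemma odd_pair (e : ℕ) : (1 : R) + XX^(2*e+1)
    = (1 - XX^(4*e+2)) * (1 - XX^(2*e+1))⁻¹ := by
  have hinv := PowerSeries.mul_inv_cancel _ (const_ne (2*e))
  have h1 : (1 : R) - XX^(4*e+2) = (1 + XX^(2*e+1)) * (1 - XX^(2*e+1)) := by ring
  rw [h1, mul_assoc, hinv, mul_one]

lemma v_sub_one (n r : ℕ) (h : r ≤ 2*n+1) :
    (XX : R)^r ∣ (1 - XX^(2*n+2)) * (1 - XX^(2*n+1))⁻¹ - 1 := by
  have hinv := PowerSeries.mul_inv_cancel _ (const_ne (2*n))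
  have h2 : (1 - XX^(2*n+2)) * (1 - XX^(2*n+1))⁻¹ - 1
      = XX^(2*n+1) * ((1 - XX) * (1 - XX^(2*n+1))⁻¹) := by
    linear_combination hinv
  rw [h2]
  exact (pow_dvd_pow XX h).trans (Dvd.intro _ rfl)


def Pn (n : ℕ) : R := ∏ i ∈ range n, ((1 - XX^(2*i+2)) * (1 - XX^(2*i+1))⁻¹)

lemma dvd_helper {t r s : ℕ} {y : R} (hy : XX^r ∣ y) (h : s ≤ t + r) :
    XX^s ∣ XX^t * y := by
  obtain ⟨z, hz⟩ := hy
  rw [hz, ← mul_assoc, ← pow_add]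
  exact (pow_dvd_pow XX h).mul_right z

lemma le_mul_two_sub (d : ℕ) : d ≤ d*(2*d-1) := by
  match d with
  | 0 => exact le_rfl
  | e+1 =>
      rw [show 2*(e+1)-1 = 2*e+1 by omega]
      exact Nat.le_mul_of_pos_right _ (by omega)

lemma le_mul_two_add (d : ℕ) : d ≤ d*(2*d+1) :=
  Nat.le_mul_of_pos_right _ (by omega)

lemma key (N : ℕ) :
    PowerSeries.coeff (R := ℚ) N (Wm (N+1) * U (N+1))
      = PowerSeries.coeff (R := ℚ) N (∑ k ∈ range (2*(N+1)+1), (XX^(texp (N+1) k) : R)) := by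
  rw [U, mul_sum, map_sum, map_sum]
  apply Finset.sum_congr rfl
  intro k hk
  rw [mem_range] at hk
  have h1 : Wm (N+1) * (C (2*(N+1)) k * XX^(texp (N+1) k))
      = XX^(texp (N+1) k) * (Wm (N+1) * C (2*(N+1)) k) := by ring
  rw [h1]
  apply coeff_eq_of_dvd
  have h2 : XX^(texp (N+1) k) * (Wm (N+1) * C (2*(N+1)) k) - XX^(texp (N+1) k)
      = XX^(texp (N+1) k) * (Wm (N+1) * C (2*(N+1)) k - 1) := by ring
  rw [h2]
  rcases le_total k (N+1) with h | h
  · apply dvd_helper (WC_cong (N+1) k h)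
    obtain ⟨d, hd⟩ : ∃ d, N+1 = k + d := ⟨N+1-k, by omega⟩
    rw [texp, show N+1-k = d by omega, show k-(N+1) = 0 by omega]
    have h6 := le_mul_two_sub d
    generalize d*(2*d-1) = a at h6 ⊢
    omega
  · have hsym : C (2*(N+1)) k = C (2*(N+1)) (2*(N+1)-k) := C_symm (2*(N+1)) k (by omega)
    have hd2 := WC_cong (N+1) (2*(N+1)-k) (by omega)
    rw [← hsym] at hd2
    apply dvd_helper hd2
    obtain ⟨d, hd⟩ : ∃ d, k = (N+1) + d := ⟨k-(N+1), by omega⟩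
    rw [texp, show N+1-k = 0 by omega, show k-(N+1) = d by omega,
      show 2*(N+1)-k = N+1-d by omega]
    have h6 := le_mul_two_add d
    generalize d*(2*d+1) = a at h6 ⊢
    omega

lemma hWU (N : ℕ) :
    Wm (N+1) * U (N+1)
      = Pn (2*(N+1)) * ∏ i ∈ range (N+1), (1 - XX^(4*(N+1+i)+2)) := by
  have h2 : ∏ j ∈ range (N+1), ((1+XX^(4*j+3))*(1+XX^(4*j+1)))
      = ∏ i ∈ range (2*(N+1)), ((1:R)+XX^(2*i+1)) := by
    rw [prod_range_two_mul (fun i => (1+XX^(2*i+1))) (N+1)]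
    apply prod_congr rfl
    intro j _
    rw [show 2*(2*j)+1 = 4*j+1 by ring, show 2*(2*j+1)+1 = 4*j+3 by ring]
    ring
  have h3 : ∏ i ∈ range (2*(N+1)), ((1:R)+XX^(2*i+1))
      = (∏ i ∈ range (2*(N+1)), ((1:R)-XX^(4*i+2)))
        * ∏ i ∈ range (2*(N+1)), ((1:R) - XX^(2*i+1))⁻¹ := by
    rw [← prod_mul_distrib]
    exact prod_congr rfl fun i _ => odd_pair i
  have h4 : ∏ i ∈ range (2*(N+1)), ((1:R)-XX^(4*i+2))
      = (∏ i ∈ range (N+1), ((1:R)-XX^(4*i+2)))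
        * ∏ i ∈ range (N+1), ((1:R)-XX^(4*(N+1+i)+2)) := by
    rw [show 2*(N+1) = (N+1)+(N+1) by ring, prod_range_add]
  have h5 : ∏ i ∈ range (2*(N+1)), ((1:R)-XX^(2*i+2))
      = (∏ j ∈ range (N+1), ((1:R)-XX^(4*j+2))) * Wm (N+1) := by
    rw [prod_range_two_mul (fun i => (1-XX^(2*i+2))) (N+1), Wm, ← prod_mul_distrib]
    apply prod_congr rfl
    intro j _
    rw [show 2*(2*j)+2 = 4*j+2 by ring, show 2*(2*j+1)+2 = 4*j+4 by ring]
  have h6 : Pn (2*(N+1)) = (∏ i ∈ range (2*(N+1)), ((1:R)-XX^(2*i+2)))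
      * ∏ i ∈ range (2*(N+1)), ((1:R)-XX^(2*i+1))⁻¹ := by
    rw [Pn, prod_mul_distrib]
  rw [U_eq, h2, h3, h4, h6, h5]
  ring


end
end GaussTri

open PowerSeries Finset GaussTri in
/-- **Gauss triangular-number identity**: as formal power series in `t`,
`∑_{n≥0} t^{n(n+1)/2} = ∏_{n≥1} (1−t^{2n})/(1−t^{2n−1})`.
Stated coefficient-wise via stabilizing partial sums/products. -/
theorem gauss_triangular (N : ℕ) :
    PowerSeries.coeff (R := ℚ) N
      (∑ n ∈ Finset.range (N + 1), (PowerSeries.X : PowerSeries ℚ) ^ (n * (n + 1) / 2)) =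
    PowerSeries.coeff (R := ℚ) N
      (∏ n ∈ Finset.range (N + 1),
        ((1 - (PowerSeries.X : PowerSeries ℚ) ^ (2 * (n + 1))) *
          (1 - (PowerSeries.X : PowerSeries ℚ) ^ (2 * (n + 1) - 1))⁻¹)) := by
  have hP : (∏ n ∈ Finset.range (N + 1),
      ((1 - (PowerSeries.X : PowerSeries ℚ) ^ (2 * (n + 1))) *
        (1 - (PowerSeries.X : PowerSeries ℚ) ^ (2 * (n + 1) - 1))⁻¹)) = Pn (N+1) := by
    apply prod_congr rfl
    intro n _
    rw [show 2*(n+1)-1 = 2*n+1 by omega, show 2*(n+1) = 2*n+2 by ring]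
  rw [hP]
  have hPnsplit : Pn (2*(N+1)) = Pn (N+1)
      * ∏ i ∈ range (N+1), ((1 - XX^(2*(N+1+i)+2)) * (1 - XX^(2*(N+1+i)+1))⁻¹) := by
    rw [Pn, Pn, show 2*(N+1) = (N+1)+(N+1) by ring, prod_range_add]
  have hH : XX^(N+1) ∣ (∏ i ∈ range (N+1),
      ((1 - XX^(2*(N+1+i)+2)) * (1 - XX^(2*(N+1+i)+1))⁻¹)) - 1 :=
    dvd_prod_sub_one fun i _ => v_sub_one (N+1+i) (N+1) (by omega)
  have hG : XX^(N+1) ∣ (∏ i ∈ range (N+1), ((1:R) - XX^(4*(N+1+i)+2))) - 1 :=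
    dvd_prod_sub_one fun i _ => dvd_one_sub_pow (by omega)
  calc PowerSeries.coeff (R := ℚ) N (∑ n ∈ Finset.range (N + 1), (XX : R) ^ (n * (n + 1) / 2))
      = PowerSeries.coeff (R := ℚ) N (∑ s ∈ range (2*(N+1)+1), (XX^(s*(s+1)/2) : R)) := by
        refine (coeff_eq_of_dvd N ?_).symm
        rw [show 2*(N+1)+1 = (N+1)+(N+2) by ring, sum_range_add, add_sub_cancel_left]
        exact dvd_sum fun i _ =>
          pow_dvd_pow XX (le_trans (by omega) (tri_ge (N+1+i)))
    _ = PowerSeries.coeff (R := ℚ) N (∑ k ∈ range (2*(N+1)+1), (XX^(texp (N+1) k) : R)) := by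
        rw [sum_texp]
    _ = PowerSeries.coeff (R := ℚ) N (Wm (N+1) * U (N+1)) := (key N).symm
    _ = PowerSeries.coeff (R := ℚ) N (Pn (N+1)) := by
        rw [hWU, hPnsplit]
        apply coeff_eq_of_dvd
        have heq : Pn (N+1) * (∏ i ∈ range (N+1),
              ((1 - XX^(2*(N+1+i)+2)) * (1 - XX^(2*(N+1+i)+1))⁻¹))
            * (∏ i ∈ range (N+1), ((1:R) - XX^(4*(N+1+i)+2))) - Pn (N+1)
          = Pn (N+1) * ((∏ i ∈ range (N+1),
              ((1 - XX^(2*(N+1+i)+2)) * (1 - XX^(2*(N+1+i)+1))⁻¹))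
            * (∏ i ∈ range (N+1), ((1:R) - XX^(4*(N+1+i)+2))) - 1) := by ring
        rw [heq]
        exact (dvd_mul_sub_one hH hG).mul_left _
end

section
/- As formal power series in x, x·∏_{n≥1} (1−x^{16n})/(1−x^{16n−8}) = ∑_{n∈ℤ} x^{(8n+1)²} + ∑_{n∈ℤ} x^{(8n+3)²}. -/
open PowerSeries Finset

noncomputable def Em (k : ℕ) : PowerSeries ℚ := ∏ j ∈ Finset.range k, (1 - X ^ (32 * j + 32))

lemma constCoeff_one_sub_X_pow (n : ℕ) (hn : n ≠ 0) :
    PowerSeries.constantCoeff (R := ℚ) (1 - X ^ n) = 1 := by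
  simp [map_sub, map_pow, constantCoeff_X, zero_pow hn]

lemma Em_constCoeff (k : ℕ) : PowerSeries.constantCoeff (R := ℚ) (Em k) = 1 := by
  rw [Em, map_prod]
  exact Finset.prod_eq_one fun j _ => constCoeff_one_sub_X_pow _ (by omega)

lemma Em_mul_inv (k : ℕ) : Em k * (Em k)⁻¹ = 1 :=
  PowerSeries.mul_inv_cancel _ (by rw [Em_constCoeff]; norm_num)

lemma Em_isUnit (k : ℕ) : IsUnit (Em k) := IsUnit.of_mul_eq_one _ (Em_mul_inv k)

lemma Em_succ (k : ℕ) : Em (k+1) = Em k * (1 - X ^ (32 * k + 32)) := Finset.prod_range_succ _ _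

noncomputable def gbz (n : ℕ) (i : ℤ) : PowerSeries ℚ :=
  if 0 ≤ i ∧ i ≤ (n : ℤ) then Em n * (Em i.toNat)⁻¹ * (Em (n - i.toNat))⁻¹ else 0

lemma gbz_of_le (n i : ℕ) (h : i ≤ n) :
    gbz n i = Em n * (Em i)⁻¹ * (Em (n - i))⁻¹ := by
  rw [gbz, if_pos (by exact ⟨Int.natCast_nonneg i, by exact_mod_cast h⟩)]
  simp

lemma gbz_neg (n : ℕ) (i : ℤ) (h : i < 0) : gbz n i = 0 := by
  rw [gbz, if_neg]; omega

lemma gbz_gt (n : ℕ) (i : ℤ) (h : (n:ℤ) < i) : gbz n i = 0 := by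
  rw [gbz, if_neg]; omega

lemma gbz_zero (n : ℕ) : gbz n 0 = 1 := by
  rw [show ((0:ℤ) = ((0:ℕ):ℤ)) by norm_num, gbz_of_le n 0 (Nat.zero_le n)]
  rw [show Em 0 = 1 from rfl, inv_one, Nat.sub_zero]
  rw [mul_one]
  exact Em_mul_inv n

lemma gbz_self (n : ℕ) : gbz n n = 1 := by
  rw [gbz_of_le n n le_rfl, Nat.sub_self, show Em 0 = 1 from rfl, inv_one, mul_one]
  exact Em_mul_inv n

lemma hA (a c : ℕ) :
    Em (a+1) * Em (c+1) * gbz (a+c+2) ((a:ℤ)+1) =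
      Em (a+c) * ((1 - X^(32*a+32*c+32)) * (1 - X^(32*a+32*c+64))) := by
  rw [show ((a:ℤ)+1) = ((a+1:ℕ):ℤ) by push_cast; ring,
      gbz_of_le _ _ (by omega), show a+c+2-(a+1) = c+1 by omega]
  have h1 := Em_mul_inv (a+1)
  have h2 := Em_mul_inv (c+1)
  have h3 : Em (a+c+2) = Em (a+c) * ((1 - X^(32*a+32*c+32)) * (1 - X^(32*a+32*c+64))) := by
    rw [show a+c+2 = (a+c+1)+1 by ring, Em_succ, Em_succ,
        show 32*(a+c)+32 = 32*a+32*c+32 by ring, show 32*(a+c+1)+32 = 32*a+32*c+64 by ring]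
    ring
  linear_combination (Em (a+c+2) * Em (c+1) * (Em (c+1))⁻¹) * h1 + Em (a+c+2) * h2 + h3

lemma hB (a c : ℕ) :
    Em (a+1) * Em (c+1) * gbz (a+c) (a:ℤ) =
      Em (a+c) * ((1 - X^(32*a+32)) * (1 - X^(32*c+32))) := by
  rw [gbz_of_le _ _ (by omega), show a+c-a = c by omega]
  have h1 := Em_mul_inv a
  have h2 := Em_mul_inv c
  rw [Em_succ a, Em_succ c]
  linear_combination ((1 - X^(32*a+32)) * (1 - X^(32*c+32)) * Em (a+c) * Em c * (Em c)⁻¹) * h1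
    + ((1 - X^(32*a+32)) * (1 - X^(32*c+32)) * Em (a+c)) * h2

lemma hC (a c : ℕ) :
    Em (a+1) * Em (c+1) * gbz (a+c) ((a:ℤ)+1) =
      Em (a+c) * ((1 - X^(32*c+32)) * (1 - X^(32*c))) := by
  rcases Nat.eq_zero_or_pos c with h | h
  · subst h
    rw [gbz_gt _ _ (by push_cast; omega)]
    simp
  · rw [show ((a:ℤ)+1) = ((a+1:ℕ):ℤ) by push_cast; ring,
        gbz_of_le _ _ (by omega), show a+c-(a+1) = c-1 by omega]
    have h1 := Em_mul_inv (a+1)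
    have h2 := Em_mul_inv (c-1)
    have e2 : Em (c+1) = Em (c-1) * ((1 - X^(32*c)) * (1 - X^(32*c+32))) := by
      rw [show c+1 = (c-1)+1+1 by omega, Em_succ, Em_succ,
          show 32*(c-1)+32 = 32*c by omega, show 32*(c-1+1)+32 = 32*c+32 by omega]
      ring
    rw [e2]
    linear_combination ((1 - X^(32*c)) * (1 - X^(32*c+32)) * Em (a+c) * Em (c-1) * (Em (c-1))⁻¹) * h1
      + ((1 - X^(32*c)) * (1 - X^(32*c+32)) * Em (a+c)) * h2

lemma hD (a c : ℕ) :
    Em (a+1) * Em (c+1) * gbz (a+c) ((a:ℤ)-1) =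
      Em (a+c) * ((1 - X^(32*a+32)) * (1 - X^(32*a))) := by
  rcases Nat.eq_zero_or_pos a with h | h
  · subst h
    rw [gbz_neg _ _ (by norm_num)]
    simp
  · rw [show ((a:ℤ)-1) = ((a-1:ℕ):ℤ) by omega, gbz_of_le _ _ (by omega),
        show a+c-(a-1) = c+1 by omega]
    have h1 := Em_mul_inv (a-1)
    have h2 := Em_mul_inv (c+1)
    have e1 : Em (a+1) = Em (a-1) * ((1 - X^(32*a)) * (1 - X^(32*a+32))) := by
      rw [show a+1 = (a-1)+1+1 by omega, Em_succ, Em_succ,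
          show 32*(a-1)+32 = 32*a by omega, show 32*(a-1+1)+32 = 32*a+32 by omega]
      ring
    rw [e1]
    linear_combination ((1 - X^(32*a)) * (1 - X^(32*a+32)) * Em (a+c) * Em (c+1) * (Em (c+1))⁻¹) * h1
      + ((1 - X^(32*a)) * (1 - X^(32*a+32)) * Em (a+c)) * h2

def ee (m : ℕ) (k : ℤ) : ℕ := (16*k^2 + 8*k + 8*(m:ℤ)).toNat

lemma ee_eq (m : ℕ) (k : ℤ) (v : ℕ) (h : 16*k^2 + 8*k + 8*(m:ℤ) = (v:ℤ)) : ee m k = v := by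
  rw [ee, h, Int.toNat_natCast]

noncomputable def tM (m : ℕ) (k : ℤ) : PowerSeries ℚ := gbz (2*m) ((m:ℤ) + k) * X ^ (ee m k)

lemma tM_zero_of_lt (m : ℕ) (k : ℤ) (h : k < -(m:ℤ)) : tM m k = 0 := by
  rw [tM, gbz_neg _ _ (by omega), zero_mul]

lemma tM_zero_of_gt (m : ℕ) (k : ℤ) (h : (m:ℤ) < k) : tM m k = 0 := by
  rw [tM, gbz_gt _ _ (by push_cast; omega), zero_mul]

lemma step (m : ℕ) (k : ℤ) (hk1 : -((m:ℤ)+1) ≤ k) (hk2 : k ≤ (m:ℤ)+1) :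
    tM (m+1) k = X^(32*m+16) * tM m (k+1) + (1 + X^(64*m+32)) * X^8 * tM m k
      + X^(32*m+16) * X^16 * tM m (k-1) := by
  have hcase : k = (m:ℤ)+1 ∨ k = -((m:ℤ)+1) ∨ (1 ≤ k ∧ k ≤ (m:ℤ)) ∨ k = 0
      ∨ (k = -1 ∧ 1 ≤ m) ∨ (-(m:ℤ) ≤ k ∧ k ≤ -2) := by omega
  rcases hcase with rfl | rfl | ⟨h1, h2⟩ | rfl | ⟨rfl, hm⟩ | ⟨h1, h2⟩
  · -- k = m+1
    rw [tM_zero_of_gt m _ (by omega), tM_zero_of_gt m _ (by omega)]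
    rw [tM, tM, show ((m:ℤ)) + ((m:ℤ)+1 - 1) = ((2*m:ℕ):ℤ) by push_cast; ring,
        show ((m+1:ℕ):ℤ) + ((m:ℤ)+1) = ((2*(m+1):ℕ):ℤ) by push_cast; ring,
        gbz_self, gbz_self,
        ee_eq (m+1) ((m:ℤ)+1) (16*(m+1)^2+8*(m+1)+8*(m+1)) (by push_cast; ring),
        ee_eq m ((m:ℤ)+1-1) (16*m^2+8*m+8*m) (by push_cast; ring)]
    simp only [mul_zero, zero_mul, add_zero, zero_add, one_mul, mul_one, ← pow_add]
    congr 1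
    ring
  · -- k = -(m+1)
    rw [tM_zero_of_lt m (-((m:ℤ)+1)) (by omega), tM_zero_of_lt m (-((m:ℤ)+1)-1) (by omega)]
    rw [tM, tM, show ((m:ℤ)) + (-((m:ℤ)+1) + 1) = (0:ℤ) by ring,
        show ((m+1:ℕ):ℤ) + (-((m:ℤ)+1)) = (0:ℤ) by push_cast; ring,
        gbz_zero, gbz_zero,
        ee_eq (m+1) (-((m:ℤ)+1)) (16*(m+1)^2) (by push_cast; ring),
        ee_eq m (-((m:ℤ)+1)+1) (16*m^2) (by push_cast; ring)]
    simp only [mul_zero, zero_mul, add_zero, zero_add, one_mul, mul_one, ← pow_add]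
    congr 1
    ring
  · -- 1 ≤ k ≤ m
    obtain ⟨b, rfl⟩ : ∃ b:ℕ, k = (b:ℤ)+1 := ⟨(k-1).toNat, by omega⟩
    obtain ⟨c, rfl⟩ : ∃ c:ℕ, m = b+1+c := ⟨m-(b+1), by omega⟩
    simp only [tM]
    rw [show (2*(b+1+c+1)) = 2*b+c+2+c+2 by ring,
        show ((b+1+c+1:ℕ):ℤ)+((b:ℤ)+1) = ((2*b+c+2:ℕ):ℤ)+1 by push_cast; ring,
        show (2*(b+1+c)) = 2*b+c+2+c by ring,
        show ((b+1+c:ℕ):ℤ)+((b:ℤ)+1+1) = ((2*b+c+2:ℕ):ℤ)+1 by push_cast; ring,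
        show ((b+1+c:ℕ):ℤ)+((b:ℤ)+1) = ((2*b+c+2:ℕ):ℤ) by push_cast; ring,
        show ((b+1+c:ℕ):ℤ)+((b:ℤ)+1-1) = ((2*b+c+2:ℕ):ℤ)-1 by push_cast; ring,
        ee_eq (b+1+c+1) ((b:ℤ)+1) (16*(b+1)^2+8*(b+1)+8*(b+1+c+1)) (by push_cast; ring),
        ee_eq (b+1+c) ((b:ℤ)+1+1) (16*(b+2)^2+8*(b+2)+8*(b+1+c)) (by push_cast; ring),
        ee_eq (b+1+c) ((b:ℤ)+1) (16*(b+1)^2+8*(b+1)+8*(b+1+c)) (by push_cast; ring),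
        ee_eq (b+1+c) ((b:ℤ)+1-1) (16*b^2+8*b+8*(b+1+c)) (by push_cast; ring)]
    refine ((Em_isUnit (2*b+c+2+1)).mul (Em_isUnit (c+1))).mul_left_cancel ?_
    linear_combination (X:PowerSeries ℚ)^(16*(b+1)^2+8*(b+1)+8*(b+1+c+1)) * hA (2*b+c+2) c
      - X^(32*(b+1+c)+16) * X^(16*(b+2)^2+8*(b+2)+8*(b+1+c)) * hC (2*b+c+2) c
      - (1+X^(64*(b+1+c)+32)) * X^8 * X^(16*(b+1)^2+8*(b+1)+8*(b+1+c)) * hB (2*b+c+2) c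
      - X^(32*(b+1+c)+16) * X^16 * X^(16*b^2+8*b+8*(b+1+c)) * hD (2*b+c+2) c
  · -- k = 0
    simp only [tM]
    rw [show (2*(m+1)) = m+m+2 by ring,
        show ((m+1:ℕ):ℤ)+(0:ℤ) = ((m:ℕ):ℤ)+1 by push_cast; ring,
        show (2*m) = m+m by ring,
        show ((m:ℕ):ℤ)+((0:ℤ)+1) = ((m:ℕ):ℤ)+1 by push_cast; ring,
        show ((m:ℕ):ℤ)+(0:ℤ) = ((m:ℕ):ℤ) by push_cast; ring,
        show ((m:ℕ):ℤ)+((0:ℤ)-1) = ((m:ℕ):ℤ)-1 by push_cast; ring,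
        ee_eq (m+1) (0:ℤ) (8*(m+1)) (by push_cast; ring),
        ee_eq m ((0:ℤ)+1) (8*m+24) (by push_cast; ring),
        ee_eq m (0:ℤ) (8*m) (by push_cast; ring),
        ee_eq m ((0:ℤ)-1) (8*m+8) (by push_cast; ring)]
    refine ((Em_isUnit (m+1)).mul (Em_isUnit (m+1))).mul_left_cancel ?_
    linear_combination (X:PowerSeries ℚ)^(8*(m+1)) * hA m m
      - X^(32*m+16) * X^(8*m+24) * hC m m
      - (1+X^(64*m+32)) * X^8 * X^(8*m) * hB m m
      - X^(32*m+16) * X^16 * X^(8*m+8) * hD m m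
  · -- k = -1, m ≥ 1
    obtain ⟨c, rfl⟩ : ∃ c:ℕ, m = c+1 := ⟨m-1, by omega⟩
    simp only [tM]
    rw [show (2*(c+1+1)) = c+(c+2)+2 by ring,
        show ((c+1+1:ℕ):ℤ)+(-1:ℤ) = ((c:ℕ):ℤ)+1 by push_cast; ring,
        show (2*(c+1)) = c+(c+2) by ring,
        show ((c+1:ℕ):ℤ)+((-1:ℤ)+1) = ((c:ℕ):ℤ)+1 by push_cast; ring,
        show ((c+1:ℕ):ℤ)+(-1:ℤ) = ((c:ℕ):ℤ) by push_cast; ring,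
        show ((c+1:ℕ):ℤ)+((-1:ℤ)-1) = ((c:ℕ):ℤ)-1 by push_cast; ring,
        ee_eq (c+1+1) (-1:ℤ) (8*c+24) (by push_cast; ring),
        ee_eq (c+1) ((-1:ℤ)+1) (8*c+8) (by push_cast; ring),
        ee_eq (c+1) (-1:ℤ) (8*c+16) (by push_cast; ring),
        ee_eq (c+1) ((-1:ℤ)-1) (8*c+56) (by push_cast; ring)]
    refine ((Em_isUnit (c+1)).mul (Em_isUnit (c+2+1))).mul_left_cancel ?_
    linear_combination (X:PowerSeries ℚ)^(8*c+24) * hA c (c+2)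
      - X^(32*(c+1)+16) * X^(8*c+8) * hC c (c+2)
      - (1+X^(64*(c+1)+32)) * X^8 * X^(8*c+16) * hB c (c+2)
      - X^(32*(c+1)+16) * X^16 * X^(8*c+56) * hD c (c+2)
  · -- -m ≤ k ≤ -2
    obtain ⟨b, rfl⟩ : ∃ b:ℕ, k = -((b:ℤ))-2 := ⟨(-k-2).toNat, by omega⟩
    obtain ⟨c, rfl⟩ : ∃ c:ℕ, m = b+2+c := ⟨m-(b+2), by omega⟩
    simp only [tM]
    rw [show (2*(b+2+c+1)) = c+(2*b+c+4)+2 by ring,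
        show ((b+2+c+1:ℕ):ℤ)+(-((b:ℤ))-2) = ((c:ℕ):ℤ)+1 by push_cast; ring,
        show (2*(b+2+c)) = c+(2*b+c+4) by ring,
        show ((b+2+c:ℕ):ℤ)+(-((b:ℤ))-2+1) = ((c:ℕ):ℤ)+1 by push_cast; ring,
        show ((b+2+c:ℕ):ℤ)+(-((b:ℤ))-2) = ((c:ℕ):ℤ) by push_cast; ring,
        show ((b+2+c:ℕ):ℤ)+(-((b:ℤ))-2-1) = ((c:ℕ):ℤ)-1 by push_cast; ring,
        ee_eq (b+2+c+1) (-((b:ℤ))-2) (16*b^2+64*b+72+8*c) (by push_cast; ring),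
        ee_eq (b+2+c) (-((b:ℤ))-2+1) (16*b^2+32*b+24+8*c) (by push_cast; ring),
        ee_eq (b+2+c) (-((b:ℤ))-2) (16*b^2+64*b+64+8*c) (by push_cast; ring),
        ee_eq (b+2+c) (-((b:ℤ))-2-1) (16*b^2+96*b+136+8*c) (by push_cast; ring)]
    refine ((Em_isUnit (c+1)).mul (Em_isUnit (2*b+c+4+1))).mul_left_cancel ?_
    linear_combination (X:PowerSeries ℚ)^(16*b^2+64*b+72+8*c) * hA c (2*b+c+4)
      - X^(32*(b+2+c)+16) * X^(16*b^2+32*b+24+8*c) * hC c (2*b+c+4)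
      - (1+X^(64*(b+2+c)+32)) * X^8 * X^(16*b^2+64*b+64+8*c) * hB c (2*b+c+4)
      - X^(32*(b+2+c)+16) * X^16 * X^(16*b^2+96*b+136+8*c) * hD c (2*b+c+4)

noncomputable def Sm (m : ℕ) : PowerSeries ℚ := ∑ k ∈ Finset.Icc (-(m:ℤ)) (m:ℤ), tM m k

lemma sum_shift (f : ℤ → PowerSeries ℚ) (a b d : ℤ) :
    ∑ k ∈ Finset.Icc a b, f (k+d) = ∑ j ∈ Finset.Icc (a+d) (b+d), f j := by
  rw [← Finset.map_add_right_Icc a b d, Finset.sum_map]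
  simp [addRightEmbedding]

lemma sum_ext (m : ℕ) (a b : ℤ) (ha : a ≤ -(m:ℤ)) (hb : (m:ℤ) ≤ b) :
    ∑ k ∈ Finset.Icc a b, tM m k = Sm m := by
  rw [Sm]
  refine (Finset.sum_subset (Finset.Icc_subset_Icc ha hb) ?_).symm
  intro x hx hnx
  simp only [Finset.mem_Icc] at hx hnx
  rcases (by omega : x < -(m:ℤ) ∨ (m:ℤ) < x) with h | h
  · exact tM_zero_of_lt m x h
  · exact tM_zero_of_gt m x h

lemma JTP (m : ℕ) :
    ∏ j ∈ Finset.range m, ((1 + X^(32*j+24)) * ((X:PowerSeries ℚ)^8 + X^(32*j+16))) = Sm m := by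
  induction m with
  | zero =>
    rw [Sm]
    simp only [Finset.range_zero, Finset.prod_empty, Nat.cast_zero, neg_zero, Finset.Icc_self,
      Finset.sum_singleton]
    rw [tM, show (2*0 : ℕ) = 0 by ring, show ((0:ℕ):ℤ)+0 = 0 by ring, gbz_zero,
        show ee 0 0 = 0 by rfl]
    simp
  | succ m ih =>
    rw [Finset.prod_range_succ, ih]
    have e1 : ∑ k ∈ Finset.Icc (-(m:ℤ)-1) ((m:ℤ)+1), tM m (k+1) = Sm m := by
      rw [sum_shift (tM m) _ _ 1]
      exact sum_ext m _ _ (by omega) (by omega)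
    have e2 : ∑ k ∈ Finset.Icc (-(m:ℤ)-1) ((m:ℤ)+1), tM m k = Sm m :=
      sum_ext m _ _ (by omega) (by omega)
    have e3 : ∑ k ∈ Finset.Icc (-(m:ℤ)-1) ((m:ℤ)+1), tM m (k-1) = Sm m := by
      simp only [sub_eq_add_neg]
      rw [sum_shift (tM m) _ _ (-1)]
      exact sum_ext m _ _ (by omega) (by omega)
    have hS : Sm (m+1) = X^(32*m+16) * Sm m + (1 + X^(64*m+32)) * X^8 * Sm m
        + X^(32*m+16) * X^16 * Sm m := by
      rw [Sm]
      have : ∀ k ∈ Finset.Icc (-((m+1:ℕ):ℤ)) ((m+1:ℕ):ℤ),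
          tM (m+1) k = X^(32*m+16) * tM m (k+1) + (1 + X^(64*m+32)) * X^8 * tM m k
            + X^(32*m+16) * X^16 * tM m (k-1) := by
        intro k hk
        simp only [Finset.mem_Icc] at hk
        exact step m k (by push_cast at hk ⊢; omega) (by push_cast at hk ⊢; omega)
      rw [Finset.sum_congr rfl this]
      rw [Finset.sum_add_distrib, Finset.sum_add_distrib, ← Finset.mul_sum, ← Finset.mul_sum,
          ← Finset.mul_sum]
      rw [show (-((m+1:ℕ):ℤ)) = -(m:ℤ)-1 by push_cast; ring,
          show (((m+1:ℕ)):ℤ) = (m:ℤ)+1 by push_cast; ring]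
      rw [e1, e2, e3]
    rw [hS]
    ring

-- congruence machinery

def cg (c : ℕ) (a b : PowerSeries ℚ) : Prop := (X : PowerSeries ℚ)^c ∣ (a - b)

lemma cg_refl (c : ℕ) (a : PowerSeries ℚ) : cg c a a := by simp [cg]

lemma cg_symm {c a b} (h : cg c a b) : cg c b a := by
  rw [cg, show b - a = -(a-b) by ring]; exact h.neg_right

lemma cg_trans {c a b d} (h1 : cg c a b) (h2 : cg c b d) : cg c a d := by
  rw [cg, show a - d = (a-b) + (b-d) by ring]; exact dvd_add h1 h2

lemma cg_mul_left {c a b} (d : PowerSeries ℚ) (h : cg c a b) : cg c (d*a) (d*b) := by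
  rw [cg, show d*a - d*b = d*(a-b) by ring]; exact h.mul_left d

lemma cg_weaken {c c' a b} (h : cg c a b) (hle : c' ≤ c) : cg c' a b :=
  dvd_trans (pow_dvd_pow _ hle) h

lemma cg_mul_pow {c a b} (e : ℕ) (h : cg c a b) : cg (c+e) ((X:PowerSeries ℚ)^e * a) (X^e * b) := by
  rw [cg, show (X:PowerSeries ℚ)^e*a - X^e*b = X^e*(a-b) by ring, pow_add, mul_comm ((X:PowerSeries ℚ)^c) _]
  exact mul_dvd_mul_left _ h

lemma cg_mul_one {c a b} (h1 : cg c a 1) (h2 : cg c b 1) : cg c (a*b) 1 := by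
  rw [cg, show a*b - 1 = a*(b-1) + (a-1) by ring]
  exact dvd_add (h2.mul_left a) h1

lemma cg_one_sub (c e : ℕ) (hle : c ≤ e) : cg c (1 - (X:PowerSeries ℚ)^e) 1 := by
  rw [cg, show 1 - (X:PowerSeries ℚ)^e - 1 = -(X^e) by ring]
  exact (pow_dvd_pow _ hle).neg_right

lemma cg_prod_one {c : ℕ} {s : Finset ℕ} {f : ℕ → PowerSeries ℚ}
    (h : ∀ j ∈ s, cg c (f j) 1) : cg c (∏ j ∈ s, f j) 1 := by
  induction s using Finset.cons_induction with
  | empty => simpa using cg_refl c 1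
  | cons a s ha ih =>
    rw [Finset.prod_cons]
    exact cg_mul_one (h a (Finset.mem_cons_self a s)) (ih fun j hj => h j (Finset.mem_cons_of_mem hj))

lemma cg_sum {c : ℕ} {s : Finset ℤ} {f g : ℤ → PowerSeries ℚ}
    (h : ∀ j ∈ s, cg c (f j) (g j)) : cg c (∑ j ∈ s, f j) (∑ j ∈ s, g j) := by
  rw [cg, ← Finset.sum_sub_distrib]
  exact Finset.dvd_sum h

lemma cg_coeff {c a b} (h : cg c a b) (N : ℕ) (hN : N < c) :
    PowerSeries.coeff (R := ℚ) N a = PowerSeries.coeff (R := ℚ) N b := by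
  have := PowerSeries.X_pow_dvd_iff.mp h N hN
  rw [map_sub] at this
  linarith

lemma cg_unit_cancel {c : ℕ} {u a b : PowerSeries ℚ} (hu : IsUnit u) (h : cg c (u*a) (u*b)) :
    cg c a b := by
  obtain ⟨v, hv⟩ := hu.exists_left_inv
  have : a - b = v * (u*a - u*b) := by
    have : v * u = 1 := hv
    calc a - b = (v*u)*a - (v*u)*b := by rw [this]; ring
    _ = v * (u*a - u*b) := by ring
  rw [cg, this]
  exact Dvd.dvd.mul_left h v

lemma Em_add (a b : ℕ) : Em (a+b) = Em a * ∏ j ∈ Finset.range b, (1 - X ^ (32*(a+j) + 32)) := by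
  rw [Em, Em, Finset.prod_range_add]

-- gbz in symmetric form

lemma gbz_sym (m : ℕ) (k : ℤ) (hk1 : -(m:ℤ) ≤ k) (hk2 : k ≤ (m:ℤ)) :
    gbz (2*m) ((m:ℤ)+k) = Em (2*m) * (Em (m + k.natAbs))⁻¹ * (Em (m - k.natAbs))⁻¹ := by
  rcases le_or_gt 0 k with h | h
  · have h1 : ((m:ℤ)+k) = ((m + k.natAbs : ℕ) : ℤ) := by omega
    rw [h1, gbz_of_le _ _ (by omega), show 2*m - (m + k.natAbs) = m - k.natAbs by omega]
  · have h1 : ((m:ℤ)+k) = ((m - k.natAbs : ℕ) : ℤ) := by omega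
    rw [h1, gbz_of_le _ _ (by omega), show 2*m - (m - k.natAbs) = m + k.natAbs by omega]
    ring

lemma gbz_cg (m : ℕ) (k : ℤ) (hk1 : -(m:ℤ) ≤ k) (hk2 : k ≤ (m:ℤ)) :
    cg (32*(m - k.natAbs)+32) (Em m * gbz (2*m) ((m:ℤ)+k)) 1 := by
  set a := k.natAbs with hadef
  have ha : a ≤ m := by omega
  rw [gbz_sym m k hk1 hk2]
  have hu : IsUnit (Em (m+a) * Em (m-a)) := (Em_isUnit _).mul (Em_isUnit _)
  refine cg_unit_cancel hu ?_
  have key : cg (32*(m-a)+32) (Em m * Em (2*m)) (Em (m+a) * Em (m-a)) := by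
    have e1 : Em m = Em (m-a) * ∏ j ∈ Finset.range a, (1 - X ^ (32*((m-a)+j) + 32)) := by
      rw [← Em_add, show m-a+a = m by omega]
    have e2 : Em (2*m) = Em (m+a) * ∏ j ∈ Finset.range (m-a), (1 - X ^ (32*((m+a)+j) + 32)) := by
      rw [← Em_add, show m+a+(m-a) = 2*m by omega]
    have t1 : cg (32*(m-a)+32) (∏ j ∈ Finset.range a, (1 - (X:PowerSeries ℚ) ^ (32*((m-a)+j) + 32))) 1 :=
      cg_prod_one fun j _ => cg_one_sub _ _ (by omega)
    have t2 : cg (32*(m-a)+32) (∏ j ∈ Finset.range (m-a), (1 - (X:PowerSeries ℚ) ^ (32*((m+a)+j) + 32))) 1 :=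
      cg_prod_one fun j _ => cg_one_sub _ _ (by omega)
    have t12 := cg_mul_one t1 t2
    rw [cg] at t12 ⊢
    rw [e1, e2]
    rw [show Em (m-a) * (∏ j ∈ Finset.range a, (1 - (X:PowerSeries ℚ)^(32*((m-a)+j)+32))) *
        (Em (m+a) * ∏ j ∈ Finset.range (m-a), (1 - X^(32*((m+a)+j)+32))) - Em (m+a) * Em (m-a)
      = (Em (m+a) * Em (m-a)) *
        ((∏ j ∈ Finset.range a, (1 - (X:PowerSeries ℚ)^(32*((m-a)+j)+32))) *
         (∏ j ∈ Finset.range (m-a), (1 - X^(32*((m+a)+j)+32))) - 1) by ring]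
    exact t12.mul_left _
  -- now transfer: u * (Em m * gbz) = Em m * Em 2m  (after cancelling inverses)
  have e3 : (Em (m+a) * Em (m-a)) * (Em m * (Em (2*m) * (Em (m+a))⁻¹ * (Em (m-a))⁻¹))
      = Em m * Em (2*m) := by
    have i1 := Em_mul_inv (m+a)
    have i2 := Em_mul_inv (m-a)
    linear_combination (Em m * Em (2*m) * Em (m-a) * (Em (m-a))⁻¹) * i1
      + (Em m * Em (2*m)) * i2
  rw [show (Em (m+a) * Em (m-a)) * 1 = Em (m+a) * Em (m-a) by ring, e3]
  exact key

lemma quad_nonneg (k : ℤ) : 0 ≤ 16*k^2 + 8*k := by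
  rcases le_or_gt 0 k with h | h
  · positivity
  · nlinarith

lemma ee_cast (m : ℕ) (k : ℤ) : ((ee m k : ℕ) : ℤ) = 16*k^2 + 8*k + 8*(m:ℤ) := by
  rw [ee, Int.toNat_of_nonneg (by linarith [quad_nonneg k, Int.natCast_nonneg m])]

lemma aux_quad (a : ℕ) : 40*a ≤ 16*a^2 + 24 := by
  obtain ⟨Q, hQ⟩ : ∃ Q : ℕ, Q = a^2 := ⟨a^2, rfl⟩
  have hQ' : (Q:ℤ) = (a:ℤ)^2 := by rw [hQ]; push_cast; ring
  have hsq : ((4*(a:ℤ)-5))^2 = 16*(Q:ℤ) - 40*a + 25 := by rw [hQ']; ring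
  have h1 : (0:ℤ) ≤ 16*(Q:ℤ) - 40*a + 25 := hsq ▸ sq_nonneg _
  omega

lemma term_bound (m : ℕ) (k : ℤ) (hk1 : -(m:ℤ) ≤ k) (hk2 : k ≤ (m:ℤ)) :
    40*m+8 ≤ (32*(m - k.natAbs)+32) + ee m k := by
  set a := k.natAbs with ha
  obtain ⟨Q, hQ⟩ : ∃ Q : ℕ, Q = a^2 := ⟨a^2, rfl⟩
  have hq := aux_quad a
  rw [← hQ] at hq
  have hale : a ≤ m := by omega
  have hee : ((ee m k : ℕ) : ℤ) = 16*(Q:ℤ) + 8*k + 8*(m:ℤ) := by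
    rw [ee_cast]
    have : (k:ℤ)^2 = ((Q:ℕ):ℤ) := by
      rw [hQ, ha]; push_cast; try rw [sq_abs]
    rw [← this]
  omega

lemma EmSm_cg (m : ℕ) :
    cg (40*m+8) (Em m * Sm m) (∑ k ∈ Finset.Icc (-(m:ℤ)) (m:ℤ), (X:PowerSeries ℚ)^(ee m k)) := by
  rw [Sm, Finset.mul_sum]
  refine cg_sum fun k hk => ?_
  simp only [Finset.mem_Icc] at hk
  have h := gbz_cg m k hk.1 hk.2
  have h2 := cg_mul_pow (ee m k) h
  rw [mul_one] at h2
  have e4 : Em m * tM m k = X^(ee m k) * (Em m * gbz (2*m) ((m:ℤ)+k)) := by rw [tM]; ring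
  rw [e4]
  exact cg_weaken h2 (term_bound m k hk.1 hk.2)

lemma unit1 (e : ℕ) (he : e ≠ 0) : (1 - (X:PowerSeries ℚ)^e) * (1 - X^e)⁻¹ = 1 :=
  PowerSeries.mul_inv_cancel _ (by rw [constCoeff_one_sub_X_pow e he]; norm_num)

noncomputable def thmprod (M : ℕ) : PowerSeries ℚ :=
  ∏ n ∈ Finset.range M, ((1 - X^(16*n+16)) * (1 - X^(16*n+8))⁻¹)

lemma r_cg (n c : ℕ) (hc : c ≤ 16*n+8) :
    cg c ((1 - (X:PowerSeries ℚ)^(16*n+16)) * (1 - X^(16*n+8))⁻¹) 1 := by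
  have hu : IsUnit (1 - (X:PowerSeries ℚ)^(16*n+8)) :=
    IsUnit.of_mul_eq_one _ (unit1 _ (by omega))
  refine cg_unit_cancel hu ?_
  have e1 : (1 - (X:PowerSeries ℚ)^(16*n+8)) * ((1 - X^(16*n+16)) * (1 - X^(16*n+8))⁻¹)
      = 1 - X^(16*n+16) := by
    linear_combination (1 - (X:PowerSeries ℚ)^(16*n+16)) * unit1 (16*n+8) (by omega)
  rw [e1, mul_one, cg]
  rw [show (1 - (X:PowerSeries ℚ)^(16*n+16)) - (1 - X^(16*n+8)) = X^(16*n+8) * (1 - X^8) by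
    rw [show 16*n+16 = (16*n+8) + 8 by ring, pow_add]; ring]
  exact Dvd.dvd.mul_right (pow_dvd_pow _ hc) _

lemma thmprod_ext (M d : ℕ) : cg (16*M+8) (thmprod (M+d)) (thmprod M) := by
  rw [cg, thmprod, thmprod, Finset.prod_range_add]
  rw [show (∏ n ∈ Finset.range M, ((1 - (X:PowerSeries ℚ)^(16*n+16)) * (1 - X^(16*n+8))⁻¹)) *
        (∏ j ∈ Finset.range d, ((1 - X^(16*(M+j)+16)) * (1 - X^(16*(M+j)+8))⁻¹))
      - (∏ n ∈ Finset.range M, ((1 - X^(16*n+16)) * (1 - X^(16*n+8))⁻¹))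
      = (∏ n ∈ Finset.range M, ((1 - X^(16*n+16)) * (1 - X^(16*n+8))⁻¹)) *
        ((∏ j ∈ Finset.range d, ((1 - X^(16*(M+j)+16)) * (1 - X^(16*(M+j)+8))⁻¹)) - 1) by ring]
  refine Dvd.dvd.mul_left ?_ _
  exact cg_prod_one fun j _ => r_cg (M+j) _ (by omega)

-- pairing lemmas

lemma pairA (m : ℕ) : ∏ n ∈ Finset.range (2*m), (1 - (X:PowerSeries ℚ)^(16*n+16))
    = Em m * ∏ j ∈ Finset.range m, (1 - X^(32*j+16)) := by
  induction m with
  | zero => simp [Em]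
  | succ m ih =>
    rw [show 2*(m+1) = (2*m)+1+1 by ring, Finset.prod_range_succ, Finset.prod_range_succ, ih,
        Finset.prod_range_succ, Em_succ,
        show 16*(2*m)+16 = 32*m+16 by ring, show 16*(2*m+1)+16 = 32*m+32 by ring]
    ring

lemma pairG (m : ℕ) : ∏ n ∈ Finset.range (2*m), (1 + (X:PowerSeries ℚ)^(16*n+8))
    = (∏ j ∈ Finset.range m, (1 + X^(32*j+24))) * (∏ j ∈ Finset.range m, (1 + X^(32*j+8))) := by
  induction m with
  | zero => simp
  | succ m ih =>
    rw [show 2*(m+1) = (2*m)+1+1 by ring, Finset.prod_range_succ, Finset.prod_range_succ, ih,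
        Finset.prod_range_succ, Finset.prod_range_succ,
        show 16*(2*m)+8 = 32*m+8 by ring, show 16*(2*m+1)+8 = 32*m+24 by ring]
    ring

lemma factorX (m : ℕ) : ∏ j ∈ Finset.range m, ((X:PowerSeries ℚ)^8 + X^(32*j+16))
    = X^(8*m) * ∏ j ∈ Finset.range m, (1 + X^(32*j+8)) := by
  induction m with
  | zero => simp
  | succ m ih =>
    rw [Finset.prod_range_succ, Finset.prod_range_succ, ih,
        show 8*(m+1) = 8*m+8 by ring, show 32*m+16 = (32*m+8)+8 by ring]
    rw [pow_add, pow_add]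
    ring

-- C2

lemma C2 (m : ℕ) : cg (32*m+16) (thmprod (2*m))
    (Em m * ∏ n ∈ Finset.range (2*m), (1 + X^(16*n+8))) := by
  set W : PowerSeries ℚ := ∏ n ∈ Finset.range (2*m), (1 - X^(16*n+8)) with hW
  set G : PowerSeries ℚ := ∏ n ∈ Finset.range (2*m), (1 + X^(16*n+8)) with hG
  set Pm : PowerSeries ℚ := ∏ j ∈ Finset.range m, (1 - X^(32*j+16)) with hPm
  have hWinv : W * (∏ n ∈ Finset.range (2*m), ((1:PowerSeries ℚ) - X^(16*n+8))⁻¹) = 1 := by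
    rw [hW, ← Finset.prod_mul_distrib]
    rw [Finset.prod_congr rfl fun n _ => unit1 (16*n+8) (by omega)]
    exact Finset.prod_const_one
  have hWunit : IsUnit W := IsUnit.of_mul_eq_one _ hWinv
  refine cg_unit_cancel hWunit ?_
  have eL : W * thmprod (2*m) = Em m * Pm := by
    rw [thmprod, Finset.prod_mul_distrib, ← pairA]
    linear_combination (∏ n ∈ Finset.range (2*m), ((1:PowerSeries ℚ) - X^(16*n+16))) * hWinv
  have hWG : W * G = ∏ n ∈ Finset.range (2*m), (1 - X^(32*n+16)) := by
    rw [hW, hG, ← Finset.prod_mul_distrib]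
    refine Finset.prod_congr rfl fun n _ => ?_
    rw [show 32*n+16 = (16*n+8)+(16*n+8) by ring, pow_add]
    ring
  have hD : (∏ n ∈ Finset.range (2*m), ((1:PowerSeries ℚ) - X^(32*n+16)))
      = Pm * ∏ j ∈ Finset.range m, (1 - X^(32*(m+j)+16)) := by
    rw [show 2*m = m+m by ring, Finset.prod_range_add, hPm]
  have hPt : cg (32*m+16) (∏ j ∈ Finset.range m, ((1:PowerSeries ℚ) - X^(32*(m+j)+16))) 1 := by
    refine cg_prod_one fun j _ => ?_
    rw [cg, show (1:PowerSeries ℚ) - X^(32*(m+j)+16) - 1 = -(X^(32*(m+j)+16)) by ring]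
    exact (pow_dvd_pow _ (by omega)).neg_right
  rw [eL]
  have eR : W * (Em m * G) = (Em m * Pm) * ∏ j ∈ Finset.range m, (1 - X^(32*(m+j)+16)) := by
    rw [show W * (Em m * G) = Em m * (W * G) by ring, hWG, hD]; ring
  rw [eR, cg]
  rw [show Em m * Pm - Em m * Pm * ∏ j ∈ Finset.range m, ((1:PowerSeries ℚ) - X^(32*(m+j)+16))
      = -((Em m * Pm) * ((∏ j ∈ Finset.range m, ((1:PowerSeries ℚ) - X^(32*(m+j)+16))) - 1)) by ring]
  exact (Dvd.dvd.mul_left hPt _).neg_right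

lemma C3 (m : ℕ) : (X:PowerSeries ℚ)^(8*m) * ∏ n ∈ Finset.range (2*m), (1 + X^(16*n+8)) = Sm m := by
  rw [pairG, show (X:PowerSeries ℚ)^(8*m) * ((∏ j ∈ Finset.range m, (1 + X^(32*j+24))) *
      (∏ j ∈ Finset.range m, (1 + X^(32*j+8))))
    = (∏ j ∈ Finset.range m, (1 + X^(32*j+24))) *
      ((X:PowerSeries ℚ)^(8*m) * ∏ j ∈ Finset.range m, (1 + X^(32*j+8))) by ring,
    ← factorX, ← Finset.prod_mul_distrib, JTP]

lemma chain (N : ℕ) :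
    PowerSeries.coeff (R := ℚ) N (X * thmprod (N+1)) =
      ∑ k ∈ Finset.Icc (-((N+1:ℕ):ℤ)) ((N+1:ℕ):ℤ),
        (if N + 8*(N+1) = ee (N+1) k + 1 then (1:ℚ) else 0) := by
  set m := N + 1 with hm
  have c1 : PowerSeries.coeff (R := ℚ) N (X * thmprod m) = PowerSeries.coeff (R := ℚ) N (X * thmprod (2*m)) := by
    have h1 : cg (16*m+8) (thmprod (2*m)) (thmprod m) := by
      rw [show 2*m = m+m by ring]; exact thmprod_ext m m
    exact (cg_coeff (cg_mul_left X h1) N (by omega)).symm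
  have c2 : PowerSeries.coeff (R := ℚ) N (X * thmprod (2*m)) =
      PowerSeries.coeff (R := ℚ) N (X * (Em m * ∏ n ∈ Finset.range (2*m), (1 + X^(16*n+8)))) :=
    cg_coeff (cg_mul_left X (C2 m)) N (by omega)
  have c3 : PowerSeries.coeff (R := ℚ) N (X * (Em m * ∏ n ∈ Finset.range (2*m), (1 + X^(16*n+8)))) =
      PowerSeries.coeff (R := ℚ) (N + 8*m)
        ((X:PowerSeries ℚ)^(8*m) * (X * (Em m * ∏ n ∈ Finset.range (2*m), (1 + X^(16*n+8))))) :=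
    (PowerSeries.coeff_X_pow_mul _ (8*m) N).symm
  have c4 : (X:PowerSeries ℚ)^(8*m) * (X * (Em m * ∏ n ∈ Finset.range (2*m), (1 + X^(16*n+8))))
      = X * (Em m * Sm m) := by
    rw [show (X:PowerSeries ℚ)^(8*m) * (X * (Em m * ∏ n ∈ Finset.range (2*m), (1 + X^(16*n+8))))
      = X * (Em m * ((X:PowerSeries ℚ)^(8*m) * ∏ n ∈ Finset.range (2*m), (1 + X^(16*n+8)))) by ring,
      C3]
  have c5 : PowerSeries.coeff (R := ℚ) (N + 8*m) (X * (Em m * Sm m)) =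
      PowerSeries.coeff (R := ℚ) (N + 8*m)
        (X * ∑ k ∈ Finset.Icc (-(m:ℤ)) (m:ℤ), (X:PowerSeries ℚ)^(ee m k)) :=
    cg_coeff (cg_mul_left X (EmSm_cg m)) _ (by omega)
  have c6 : (X : PowerSeries ℚ) * (∑ k ∈ Finset.Icc (-(m:ℤ)) (m:ℤ), (X:PowerSeries ℚ)^(ee m k))
      = ∑ k ∈ Finset.Icc (-(m:ℤ)) (m:ℤ), (X:PowerSeries ℚ)^(ee m k + 1) := by
    rw [Finset.mul_sum]
    exact Finset.sum_congr rfl fun k _ => by ring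
  rw [c1, c2, c3, c4, c5, c6, map_sum]
  refine Finset.sum_congr rfl fun k _ => ?_
  rw [PowerSeries.coeff_X_pow]

lemma sumIteOne (s : Finset ℤ) (P : ℤ → Prop) [DecidablePred P] (k0 : ℤ) (hk0 : k0 ∈ s)
    (hP : P k0) (huniq : ∀ k ∈ s, P k → k = k0) :
    (∑ k ∈ s, if P k then (1:ℚ) else 0) = 1 := by
  rw [Finset.sum_eq_single_of_mem k0 hk0 (fun b hb hne => if_neg (fun hPb => hne (huniq b hb hPb)))]
  exact if_pos hP

lemma sumIteZero (s : Finset ℤ) (P : ℤ → Prop) [DecidablePred P]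
    (h : ∀ k ∈ s, ¬ P k) : (∑ k ∈ s, if P k then (1:ℚ) else 0) = 0 :=
  Finset.sum_eq_zero fun k hk => if_neg (h k hk)

lemma count (N : ℕ) :
    (∑ k ∈ Finset.Icc (-((N+1:ℕ):ℤ)) ((N+1:ℕ):ℤ),
        (if N + 8*(N+1) = ee (N+1) k + 1 then (1:ℚ) else 0))
    = (∑ n ∈ Finset.Icc (-(N:ℤ)) (N:ℤ), if N = (8*n+1).natAbs^2 then (1:ℚ) else 0)
    + (∑ n ∈ Finset.Icc (-(N:ℤ)) (N:ℤ), if N = (8*n+3).natAbs^2 then (1:ℚ) else 0) := by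
  have hL : ∀ k : ℤ, (N + 8*(N+1) = ee (N+1) k + 1) ↔ ((4*k+1)^2 = (N:ℤ)) := by
    intro k
    rw [← Nat.cast_inj (R := ℤ)]
    push_cast [ee_cast]
    constructor <;> intro h <;> linear_combination -h
  have hR1 : ∀ n : ℤ, ((N:ℕ) = (8*n+1).natAbs^2) ↔ ((8*n+1)^2 = (N:ℤ)) := by
    intro n
    rw [← Nat.cast_inj (R := ℤ)]
    push_cast
    rw [sq_abs]
    exact eq_comm
  have hR3 : ∀ n : ℤ, ((N:ℕ) = (8*n+3).natAbs^2) ↔ ((8*n+3)^2 = (N:ℤ)) := by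
    intro n
    rw [← Nat.cast_inj (R := ℤ)]
    push_cast
    rw [sq_abs]
    exact eq_comm
  simp only [hL, hR1, hR3]
  by_cases hsq : ∃ j : ℕ, (2*j+1)^2 = N
  · obtain ⟨j, hj⟩ := hsq
    have hjZ : (2*(j:ℤ)+1)^2 = (N:ℤ) := by exact_mod_cast hj
    have hdN : 2*j+1 ≤ N := by nlinarith
    obtain ⟨t, ht⟩ : ∃ t, j = 4*t ∨ j = 4*t+1 ∨ j = 4*t+2 ∨ j = 4*t+3 := ⟨j/4, by omega⟩
    rcases ht with rfl | rfl | rfl | rfl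
    · -- d = 8t+1 : left witness 2t, right₁ witness t, right₂ empty
      push_cast at hjZ
      rw [sumIteOne _ _ (2*(t:ℤ)) (by simp only [Finset.mem_Icc]; push_cast; omega)
            (by linear_combination hjZ)
            (fun k hk hP => by
              have h0 : (4*k - 8*(t:ℤ)) * (4*k + 8*(t:ℤ) + 2) = 0 := by linear_combination hP - hjZ
              rcases mul_eq_zero.mp h0 with h | h <;> omega),
          sumIteOne _ _ ((t:ℤ)) (by simp only [Finset.mem_Icc]; push_cast; omega)
            (by linear_combination hjZ)
            (fun n hn hP => by
              have h0 : (8*n - 8*(t:ℤ)) * (8*n + 8*(t:ℤ) + 2) = 0 := by linear_combination hP - hjZ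
              rcases mul_eq_zero.mp h0 with h | h <;> omega),
          sumIteZero _ _ (fun n hn hP => by
              have h0 : (8*n + 2 - 8*(t:ℤ)) * (8*n + 4 + 8*(t:ℤ)) = 0 := by linear_combination hP - hjZ
              rcases mul_eq_zero.mp h0 with h | h <;> omega)]
      norm_num
    · -- d = 8t+3 : left witness -(2t+1), right₁ empty, right₂ witness t
      push_cast at hjZ
      rw [sumIteOne _ _ (-(2*(t:ℤ)+1)) (by simp only [Finset.mem_Icc]; push_cast; omega)
            (by linear_combination hjZ)
            (fun k hk hP => by
              have h0 : (4*k + 8*(t:ℤ) + 4) * (4*k - 8*(t:ℤ) - 2) = 0 := by linear_combination hP - hjZ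
              rcases mul_eq_zero.mp h0 with h | h <;> omega),
          sumIteZero _ _ (fun n hn hP => by
              have h0 : (8*n - 8*(t:ℤ) - 2) * (8*n + 8*(t:ℤ) + 4) = 0 := by linear_combination hP - hjZ
              rcases mul_eq_zero.mp h0 with h | h <;> omega),
          sumIteOne _ _ ((t:ℤ)) (by simp only [Finset.mem_Icc]; push_cast; omega)
            (by linear_combination hjZ)
            (fun n hn hP => by
              have h0 : (8*n - 8*(t:ℤ)) * (8*n + 8*(t:ℤ) + 6) = 0 := by linear_combination hP - hjZ
              rcases mul_eq_zero.mp h0 with h | h <;> omega)]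
      norm_num
    · -- d = 8t+5 : left witness 2t+1, right₁ empty, right₂ witness -(t+1)
      push_cast at hjZ
      rw [sumIteOne _ _ (2*(t:ℤ)+1) (by simp only [Finset.mem_Icc]; push_cast; omega)
            (by linear_combination hjZ)
            (fun k hk hP => by
              have h0 : (4*k - 8*(t:ℤ) - 4) * (4*k + 8*(t:ℤ) + 6) = 0 := by linear_combination hP - hjZ
              rcases mul_eq_zero.mp h0 with h | h <;> omega),
          sumIteZero _ _ (fun n hn hP => by
              have h0 : (8*n - 8*(t:ℤ) - 4) * (8*n + 8*(t:ℤ) + 6) = 0 := by linear_combination hP - hjZ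
              rcases mul_eq_zero.mp h0 with h | h <;> omega),
          sumIteOne _ _ (-((t:ℤ)+1)) (by simp only [Finset.mem_Icc]; push_cast; omega)
            (by linear_combination hjZ)
            (fun n hn hP => by
              have h0 : (8*n + 8*(t:ℤ) + 8) * (8*n - 8*(t:ℤ) - 2) = 0 := by linear_combination hP - hjZ
              rcases mul_eq_zero.mp h0 with h | h <;> omega)]
      norm_num
    · -- d = 8t+7 : left witness -(2t+2), right₁ witness -(t+1), right₂ empty
      push_cast at hjZ
      rw [sumIteOne _ _ (-(2*(t:ℤ)+2)) (by simp only [Finset.mem_Icc]; push_cast; omega)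
            (by linear_combination hjZ)
            (fun k hk hP => by
              have h0 : (4*k + 8*(t:ℤ) + 8) * (4*k - 8*(t:ℤ) - 6) = 0 := by linear_combination hP - hjZ
              rcases mul_eq_zero.mp h0 with h | h <;> omega),
          sumIteOne _ _ (-((t:ℤ)+1)) (by simp only [Finset.mem_Icc]; push_cast; omega)
            (by linear_combination hjZ)
            (fun n hn hP => by
              have h0 : (8*n + 8*(t:ℤ) + 8) * (8*n - 8*(t:ℤ) - 6) = 0 := by linear_combination hP - hjZ
              rcases mul_eq_zero.mp h0 with h | h <;> omega),
          sumIteZero _ _ (fun n hn hP => by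
              have h0 : (8*n - 8*(t:ℤ) - 4) * (8*n + 8*(t:ℤ) + 10) = 0 := by linear_combination hP - hjZ
              rcases mul_eq_zero.mp h0 with h | h <;> omega)]
      norm_num
  · rw [sumIteZero _ _ (fun k _ hP => hsq ⟨((4*k+1).natAbs - 1)/2, by
        have hodd : 2*(((4*k+1).natAbs - 1)/2)+1 = (4*k+1).natAbs := by omega
        rw [hodd]
        have : (((4*k+1).natAbs : ℤ))^2 = (N:ℤ) := by rw [Int.natAbs_sq]; exact hP
        exact_mod_cast this⟩),
      sumIteZero _ _ (fun n _ hP => hsq ⟨((8*n+1).natAbs - 1)/2, by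
        have hodd : 2*(((8*n+1).natAbs - 1)/2)+1 = (8*n+1).natAbs := by omega
        rw [hodd]
        have : (((8*n+1).natAbs : ℤ))^2 = (N:ℤ) := by rw [Int.natAbs_sq]; exact hP
        exact_mod_cast this⟩),
      sumIteZero _ _ (fun n _ hP => hsq ⟨((8*n+3).natAbs - 1)/2, by
        have hodd : 2*(((8*n+3).natAbs - 1)/2)+1 = (8*n+3).natAbs := by omega
        rw [hodd]
        have : (((8*n+3).natAbs : ℤ))^2 = (N:ℤ) := by rw [Int.natAbs_sq]; exact hP
        exact_mod_cast this⟩)]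
    norm_num

/-- As formal power series in `x`:
`x·∏_{n≥1} (1−x^{16n})/(1−x^{16n−8}) = ∑_{n∈ℤ} x^{(8n+1)²} + ∑_{n∈ℤ} x^{(8n+3)²}`
(the identity `√2·χ_a = χ_+ + χ_−`), stated coefficient-wise via the stabilizing
partial products/sums. -/
theorem chi_a_splitting (N : ℕ) :
    PowerSeries.coeff (R := ℚ) N
      (PowerSeries.X *
        ∏ n ∈ Finset.range (N + 1),
          ((1 - (PowerSeries.X : PowerSeries ℚ) ^ (16 * (n + 1))) *
            (1 - (PowerSeries.X : PowerSeries ℚ) ^ (16 * (n + 1) - 8))⁻¹)) =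
    PowerSeries.coeff (R := ℚ) N
      ((∑ n ∈ Finset.Icc (-(N : ℤ)) (N : ℤ),
          (PowerSeries.X : PowerSeries ℚ) ^ ((8 * n + 1).natAbs ^ 2)) +
       ∑ n ∈ Finset.Icc (-(N : ℤ)) (N : ℤ),
          (PowerSeries.X : PowerSeries ℚ) ^ ((8 * n + 3).natAbs ^ 2)) := by
  have hprod : (∏ n ∈ Finset.range (N+1),
      ((1 - (PowerSeries.X : PowerSeries ℚ)^(16*(n+1))) *
        (1 - (PowerSeries.X : PowerSeries ℚ)^(16*(n+1)-8))⁻¹)) = thmprod (N+1) := by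
    rw [thmprod]
    refine Finset.prod_congr rfl fun n _ => ?_
    rw [show 16*(n+1)-8 = 16*n+8 by omega, show 16*(n+1) = 16*n+16 by ring]
  rw [hprod, chain N, count N, map_add, map_sum, map_sum]
  congr 1
  · exact Finset.sum_congr rfl fun n _ => (PowerSeries.coeff_X_pow _ _).symm
  · exact Finset.sum_congr rfl fun n _ => (PowerSeries.coeff_X_pow _ _).symm
end

section
/- As formal power series in x, x·∏_{n≥1} (1−x^{16n})/(1+x^{16n−8}) = ∑_{n∈ℤ} x^{(8n+1)²} − ∑_{n∈ℤ} x^{(8n+3)²}. -/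
set_option maxHeartbeats 2000000

open PowerSeries Finset

noncomputable section ChiB
namespace ChiB

abbrev x : PowerSeries ℚ := PowerSeries.X

/-- q-binomial coefficients in the variable `x^32`, via the q-Pascal rule. -/
def g : ℕ → ℕ → PowerSeries ℚ
  | 0, 0 => 1
  | 0, _+1 => 0
  | _+1, 0 => 1
  | n+1, k+1 => g n (k+1) + x ^ (32*(n-k)) * g n k

lemma g_zero : ∀ n k, n < k → g n k = 0 := by
  intro n
  induction n with
  | zero => intro k hk; match k, hk with | k+1, _ => rfl
  | succ n ih =>
    intro k hk
    match k, hk with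
    | k+1, hk =>
      show g n (k+1) + x ^ (32*(n-k)) * g n k = 0
      rw [ih (k+1) (by omega), ih k (by omega), mul_zero, add_zero]

lemma g_n_zero (n : ℕ) : g n 0 = 1 := by cases n <;> rfl

lemma g_pascal1 (n k : ℕ) : g (n+1) (k+1) = g n (k+1) + x ^ (32*(n-k)) * g n k := rfl

lemma g_diag : ∀ n, g n n = 1 := by
  intro n
  induction n with
  | zero => rfl
  | succ n ih =>
    rw [g_pascal1, g_zero n (n+1) (by omega), Nat.sub_self, mul_zero, pow_zero, one_mul, ih,
      zero_add]

lemma g_pascal2 : ∀ n k, g (n+1) (k+1) = x ^ (32*(k+1)) * g n (k+1) + g n k := by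
  intro n
  induction n with
  | zero =>
    intro k
    cases k with
    | zero =>
      show g 0 1 + x ^ (32*(0-0)) * g 0 0 = _
      show (0:PowerSeries ℚ) + x ^ (32*(0-0)) * 1 = x ^ (32*1) * 0 + 1
      simp
    | succ k =>
      show g 0 (k+2) + x ^ (32*(0-(k+1))) * g 0 (k+1) = _
      show (0:PowerSeries ℚ) + x ^ (32*(0-(k+1))) * 0 = x ^ (32*(k+1+1)) * 0 + 0
      simp
  | succ n ih =>
    intro k
    cases k with
    | zero =>
      have A : g (n+2) 1 = g (n+1) 1 + x ^ (32*(n+1)) := by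
        have h := g_pascal1 (n+1) 0
        rw [g_n_zero, mul_one] at h
        simpa using h
      have B : g (n+1) 1 = x ^ (32*1) * g n 1 + 1 := by
        have h := ih 0; rwa [g_n_zero] at h
      have C : g (n+1) 1 = g n 1 + x ^ (32*n) := by
        have h := g_pascal1 n 0
        rw [g_n_zero, mul_one, Nat.sub_zero] at h
        exact h
      have hx : x ^ (32*1) * x ^ (32*n) = x ^ (32*(n+1)) := by
        rw [← pow_add]; congr 1; omega
      rw [g_n_zero]
      linear_combination A + B - x ^ (32*1) * C - hx
    | succ k =>
      rcases le_or_gt (k+1) n with h | h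
      · have A : g (n+2) (k+2) = g (n+1) (k+2) + x ^ (32*(n-k)) * g (n+1) (k+1) := by
          have h := g_pascal1 (n+1) (k+1)
          rwa [show n+1-(k+1) = n-k by omega] at h
        have B : g (n+1) (k+2) = x ^ (32*(k+1+1)) * g n (k+2) + g n (k+1) := ih (k+1)
        have C : g (n+1) (k+1) = x ^ (32*(k+1)) * g n (k+1) + g n k := ih k
        have D : g (n+1) (k+2) = g n (k+2) + x ^ (32*(n-k-1)) * g n (k+1) := by
          have h := g_pascal1 n (k+1)
          rwa [show n-(k+1) = n-k-1 by omega] at h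
        have E : g (n+1) (k+1) = g n (k+1) + x ^ (32*(n-k)) * g n k := g_pascal1 n k
        have hx : x ^ (32*(n-k)) * x ^ (32*(k+1)) = x ^ (32*(k+1+1)) * x ^ (32*(n-k-1)) := by
          rw [← pow_add, ← pow_add]; congr 1; omega
        linear_combination A + B - x ^ (32*(k+1+1)) * D + x ^ (32*(n-k)) * C - E
          + g n (k+1) * hx
      · rcases Nat.lt_or_ge n k with h' | h'
        · rw [g_zero (n+1) (k+2) (by omega), g_zero (n+1) (k+1) (by omega),
            g_zero (n+2) (k+2) (by omega)]
          ring
        · have hnk : n = k := by omega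
          subst hnk
          rw [g_diag, g_diag, g_zero (n+1) (n+2) (by omega)]
          ring

lemma g_doublePascal (n k : ℕ) (hkn : k ≤ n) :
    g (n+2) (k+2) = x ^ (32*(k+1+1)) * g n (k+2) + (1 + x ^ (32*(n+1))) * g n (k+1)
      + x ^ (32*(n-k)) * g n k := by
  have A : g (n+2) (k+2) = g (n+1) (k+2) + x ^ (32*(n-k)) * g (n+1) (k+1) := by
    have h := g_pascal1 (n+1) (k+1)
    rwa [show n+1-(k+1) = n-k by omega] at h
  have B : g (n+1) (k+2) = x ^ (32*(k+1+1)) * g n (k+2) + g n (k+1) := g_pascal2 n (k+1)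
  have C : g (n+1) (k+1) = x ^ (32*(k+1)) * g n (k+1) + g n k := g_pascal2 n k
  have hx : x ^ (32*(n-k)) * x ^ (32*(k+1)) = x ^ (32*(n+1)) := by
    rw [← pow_add]; congr 1; omega
  linear_combination A + B + x ^ (32*(n-k)) * C + g n (k+1) * hx

/-- the product formula for the q-binomials -/
lemma g_prod : ∀ n k, g n k * ∏ i ∈ range k, (1 - x ^ (32*(i+1)))
    = ∏ i ∈ range k, (1 - x ^ (32*(n-i))) := by
  intro n
  induction n with
  | zero =>
    intro k
    cases k with
    | zero => simp [g]
    | succ k =>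
      rw [g_zero _ _ (by omega), zero_mul]
      refine (Finset.prod_eq_zero (Finset.mem_range.mpr (Nat.succ_pos k)) ?_).symm
      norm_num
  | succ n ih =>
    intro k
    cases k with
    | zero => simp [g_n_zero]
    | succ k =>
      rcases le_or_gt k n with h | h
      · have hL : ∏ i ∈ range (k+1), (1 - x ^ (32*(i+1)))
            = (∏ i ∈ range k, (1 - x ^ (32*(i+1)))) * (1 - x ^ (32*(k+1))) :=
          Finset.prod_range_succ _ _
        have H1 : g n (k+1) * ((∏ i ∈ range k, (1 - x ^ (32*(i+1)))) * (1 - x ^ (32*(k+1))))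
            = ∏ i ∈ range (k+1), (1 - x ^ (32*(n-i))) := by
          rw [← hL]; exact ih (k+1)
        have HR : ∏ i ∈ range (k+1), (1 - x ^ (32*(n-i)))
            = (∏ i ∈ range k, (1 - x ^ (32*(n-i)))) * (1 - x ^ (32*(n-k))) :=
          Finset.prod_range_succ _ _
        have H0 : g n k * ∏ i ∈ range k, (1 - x ^ (32*(i+1)))
            = ∏ i ∈ range k, (1 - x ^ (32*(n-i))) := ih k
        have hr : ∏ i ∈ range (k+1), (1 - x ^ (32*(n+1-i)))
            = (1 - x ^ (32*(n+1))) * ∏ i ∈ range k, (1 - x ^ (32*(n-i))) := by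
          rw [Finset.prod_range_succ', mul_comm]
          congr 1
          · apply Finset.prod_congr rfl; intro i _; rw [Nat.succ_sub_succ]
        have hx : x ^ (32*(n-k)) * x ^ (32*(k+1)) = x ^ (32*(n+1)) := by
          rw [← pow_add]; congr 1; omega
        rw [hr, g_pascal1, hL]
        linear_combination H1 + HR + (x ^ (32*(n-k)) * (1 - x ^ (32*(k+1)))) * H0
          - (∏ i ∈ range k, (1 - x ^ (32*(n-i)))) * hx
      · rw [g_zero _ _ (by omega), zero_mul]
        refine (Finset.prod_eq_zero (Finset.mem_range.mpr (show n+1 < k+1 by omega)) ?_).symm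
        have h0 : 32*(n+1-(n+1)) = 0 := by omega
        rw [h0, pow_zero]; ring

lemma prod_one_mod {ι : Type*} (s : Finset ι) (f : ι → PowerSeries ℚ) (c : ℕ)
    (h : ∀ i ∈ s, (x:PowerSeries ℚ)^c ∣ (1 - f i)) : x^c ∣ (1 - ∏ i ∈ s, f i) := by
  classical
  induction s using Finset.cons_induction with
  | empty => simp
  | cons a s ha ih =>
    rw [Finset.prod_cons]
    have h1 : (1 - f a * ∏ i ∈ s, f i) = f a * (1 - ∏ i ∈ s, f i) + (1 - f a) := by ring
    rw [h1]
    exact dvd_add (Dvd.dvd.mul_left (ih (fun i hi => h i (Finset.mem_cons_of_mem hi))) _)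
      (h a (Finset.mem_cons_self a s))


def e (m j : ℕ) : ℕ := (16 * ((j:ℤ) - m)^2).toNat

lemma e_nat (m j : ℕ) : (e m j : ℤ) = 16 * ((j:ℤ) - m)^2 :=
  Int.toNat_of_nonneg (by positivity)

lemma eA (m : ℕ) : e (m+1) 0 = e m 0 + (32*m+16) := by
  have h : (e (m+1) 0 : ℤ) = (e m 0 : ℤ) + (32*m+16) := by
    rw [e_nat, e_nat]; push_cast; ring
  exact_mod_cast h

lemma eB (m : ℕ) : e (m+1) 1 + 32*1 = e m 1 + (32*m+16) := by
  have h : (e (m+1) 1 : ℤ) + 32*1 = (e m 1 : ℤ) + (32*m+16) := by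
    rw [e_nat, e_nat]; push_cast; ring
  exact_mod_cast h

lemma eC (m : ℕ) : e (m+1) 1 = e m 0 := by
  have h : (e (m+1) 1 : ℤ) = (e m 0 : ℤ) := by
    rw [e_nat, e_nat]; push_cast; ring
  exact_mod_cast h

lemma eD (m k : ℕ) : e (m+1) (k+2) + 32*(k+1+1) = e m (k+2) + (32*m+16) := by
  have h : (e (m+1) (k+2) : ℤ) + 32*(k+1+1) = (e m (k+2) : ℤ) + (32*m+16) := by
    rw [e_nat, e_nat]; push_cast; ring
  exact_mod_cast h

lemma eE (m k : ℕ) : e (m+1) (k+2) = e m (k+1) := by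
  have h : (e (m+1) (k+2) : ℤ) = (e m (k+1) : ℤ) := by
    rw [e_nat, e_nat]; push_cast; ring
  exact_mod_cast h

lemma eF (m k : ℕ) (h : k ≤ 2*m) : e (m+1) (k+2) + 32*(2*m-k) = e m k + (32*m+16) := by
  have hc : ((2*m - k : ℕ) : ℤ) = 2*(m:ℤ) - k := by omega
  have h' : (e (m+1) (k+2) : ℤ) + 32*((2*m - k : ℕ):ℤ) = (e m k : ℤ) + (32*m+16) := by
    rw [e_nat, e_nat, hc]; push_cast; ring
  exact_mod_cast h'

lemma coeff_sum (M k : ℕ) :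
    (∑ j ∈ range (2*M+1), Polynomial.C (g (2*M) j * x ^ (e M j)) * Polynomial.X ^ j).coeff k
    = g (2*M) k * x ^ (e M k) := by
  rw [Polynomial.finset_sum_coeff]
  simp only [Polynomial.coeff_C_mul, Polynomial.coeff_X_pow, mul_ite, mul_one, mul_zero]
  rw [Finset.sum_ite_eq (range (2*M+1)) k]
  split
  · rfl
  · next hmem => rw [g_zero (2*M) k (by simp only [Finset.mem_range] at hmem; omega), zero_mul]

lemma expand_coeff (S : Polynomial (PowerSeries ℚ)) (cc d : PowerSeries ℚ) (k : ℕ) :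
    (S * (Polynomial.C cc + Polynomial.C d * Polynomial.X
      + Polynomial.C cc * Polynomial.X^2)).coeff k
    = S.coeff k * cc + (if 1 ≤ k then S.coeff (k-1) else 0) * d
      + (if 2 ≤ k then S.coeff (k-2) else 0) * cc := by
  have h1 : S * (Polynomial.C cc + Polynomial.C d * Polynomial.X
      + Polynomial.C cc * Polynomial.X^2)
      = S * Polynomial.C cc + (S * Polynomial.C d) * Polynomial.X^1
        + (S * Polynomial.C cc) * Polynomial.X^2 := by ring
  rw [h1, Polynomial.coeff_add, Polynomial.coeff_add, Polynomial.coeff_mul_C,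
    Polynomial.coeff_mul_X_pow', Polynomial.coeff_mul_X_pow']
  simp only [Polynomial.coeff_mul_C, ite_mul, zero_mul]

theorem jtp (m : ℕ) :
    ∏ j ∈ range m, ((1 + Polynomial.C (x ^ (32*j+16)) * Polynomial.X)
        * (Polynomial.X + Polynomial.C (x ^ (32*j+16))))
    = ∑ j ∈ range (2*m+1), Polynomial.C (g (2*m) j * x ^ (e m j)) * Polynomial.X ^ j := by
  induction m with
  | zero => norm_num [e, g]
  | succ m ih =>
    rw [Finset.prod_range_succ, ih]
    have hF : (1 + Polynomial.C (x ^ (32*m+16)) * Polynomial.X)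
          * (Polynomial.X + Polynomial.C (x ^ (32*m+16)))
        = Polynomial.C (x ^ (32*m+16))
          + Polynomial.C (1 + (x ^ (32*m+16))^2) * Polynomial.X
          + Polynomial.C (x ^ (32*m+16)) * Polynomial.X^2 := by
      simp only [map_add, map_mul, map_pow, map_one]
      ring
    rw [hF]
    apply Polynomial.ext
    intro k
    rw [expand_coeff]
    simp only [coeff_sum m, coeff_sum (m+1)]
    rw [show 2*(m+1) = 2*m+2 from by ring]
    set c : PowerSeries ℚ := x ^ (32*m+16) with hc
    match k with
    | 0 =>
      simp only [if_neg (show ¬(1:ℕ) ≤ 0 by omega), if_neg (show ¬(2:ℕ) ≤ 0 by omega),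
        zero_mul, add_zero, g_n_zero, one_mul]
      rw [eA m, pow_add, hc]
    | 1 =>
      simp only [if_pos (le_refl 1), if_neg (show ¬(2:ℕ) ≤ 1 by omega),
        zero_mul, add_zero, show (1:ℕ)-1 = 0 from rfl, g_n_zero, one_mul]
      have B1 : g (2*m+2) 1 = x^(32*1) * g (2*m+1) 1 + 1 := by
        have h := g_pascal2 (2*m+1) 0; rwa [g_n_zero] at h
      have B2 : g (2*m+1) 1 = g (2*m) 1 + x^(32*(2*m)) := by
        have h := g_pascal1 (2*m) 0; rwa [g_n_zero, mul_one, Nat.sub_zero] at h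
      have P1 : x^(32*1) * x^(e (m+1) 1) = x^(e m 1) * c := by
        rw [hc, ← pow_add, ← pow_add]; congr 1; have := eB m; omega
      have P2 : (x:PowerSeries ℚ)^(e (m+1) 1) = x^(e m 0) := by rw [eC]
      have P3 : x^(32*1) * x^(32*(2*m)) * x^(e (m+1) 1) = x^(e m 0) * c^2 := by
        rw [hc, ← pow_mul, ← pow_add, ← pow_add, ← pow_add]
        congr 1; have := eC m; omega
      linear_combination -((x^(e (m+1) 1)) * B1 + x^(32*1) * x^(e (m+1) 1) * B2
        + g (2*m) 1 * P1 + P2 + P3)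
    | (k+2) =>
      simp only [if_pos (show 1 ≤ k+2 by omega), if_pos (show 2 ≤ k+2 by omega),
        show k+2-1 = k+1 from rfl, show k+2-2 = k from rfl]
      rcases le_or_gt k (2*m) with h | h
      · have DP := g_doublePascal (2*m) k h
        have hP1 : x^(32*(k+1+1)) * x^(e (m+1) (k+2)) = x^(e m (k+2)) * c := by
          rw [hc, ← pow_add, ← pow_add]; congr 1; have := eD m k; omega
        have hP2 : (x:PowerSeries ℚ)^(e (m+1) (k+2)) = x^(e m (k+1)) := by rw [eE]
        have hP3 : x^(32*(2*m-k)) * x^(e (m+1) (k+2)) = x^(e m k) * c := by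
          rw [hc, ← pow_add, ← pow_add]; congr 1; have := eF m k h; omega
        have hP4 : x^(32*(2*m+1)) * x^(e (m+1) (k+2)) = x^(e m (k+1)) * c^2 := by
          rw [hc, ← pow_mul, ← pow_add, ← pow_add]
          congr 1; have := eE m k; omega
        linear_combination -((x^(e (m+1) (k+2))) * DP + g (2*m) (k+2) * hP1
          + g (2*m) (k+1) * (hP2 + hP4) + g (2*m) k * hP3)
      · rw [g_zero (2*m) k (by omega), g_zero (2*m) (k+1) (by omega),
          g_zero (2*m) (k+2) (by omega), g_zero (2*m+2) (k+2) (by omega)]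
        ring

lemma hfac (j : ℕ) : (1 + x^(32*j+16) * (-(x^8))) * ((-(x^8)) + x^(32*j+16))
    = (-1:PowerSeries ℚ) * (x^8 * ((1 - x^(32*j+8)) * (1 - x^(32*j+24)))) := by
  have p2 : (x:PowerSeries ℚ)^(32*j+16) = x^(32*j+8) * x^8 := by
    rw [← pow_add]
  have p3 : (x:PowerSeries ℚ)^(32*j+24) = x^(32*j+8) * x^8 * x^8 := by
    rw [mul_assoc, ← pow_add, ← pow_add]
  rw [p2, p3]; ring

lemma jtp_spec (m : ℕ) :
    x^(8*m) * ∏ j ∈ range m, ((1 - x^(32*j+8)) * (1 - x^(32*j+24)))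
    = ∑ j ∈ range (2*m+1), (-1:PowerSeries ℚ)^(m+j) * (g (2*m) j * x^(e m j + 8*j)) := by
  have h := congrArg (fun p => Polynomial.eval (-(x^8)) p) (jtp m)
  simp only [Polynomial.eval_prod, Polynomial.eval_finset_sum, Polynomial.eval_mul,
    Polynomial.eval_add, Polynomial.eval_one, Polynomial.eval_C, Polynomial.eval_X,
    Polynomial.eval_pow] at h
  have hL : ∏ j ∈ range m, ((1 + x^(32*j+16) * (-(x^8))) * ((-(x^8)) + x^(32*j+16)))
      = (-1:PowerSeries ℚ)^m
        * (x^(8*m) * ∏ j ∈ range m, ((1 - x^(32*j+8)) * (1 - x^(32*j+24)))) := by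
    rw [Finset.prod_congr rfl (fun j _ => hfac j), Finset.prod_mul_distrib,
      Finset.prod_mul_distrib, Finset.prod_const, Finset.prod_const, Finset.card_range,
      pow_mul]
  rw [hL] at h
  have h2 := congrArg (fun z => (-1:PowerSeries ℚ)^m * z) h
  rw [← mul_assoc, ← pow_add, Even.neg_one_pow ⟨m, by ring⟩, one_mul, Finset.mul_sum] at h2
  rw [h2]
  apply Finset.sum_congr rfl
  intro j _
  have hn : (-(x^8))^j = (-1:PowerSeries ℚ)^j * x^(8*j) := by
    rw [neg_pow, ← pow_mul, mul_comm 8 j]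
  rw [hn, pow_add, pow_add]
  ring

lemma natAbs_sq (a : ℤ) : ((a.natAbs:ℤ))^2 = a^2 := by
  rw [sq, sq, ← Int.abs_eq_natAbs, abs_mul_abs_self]

def q (m j : ℕ) : ℕ := ((4*((j:ℤ) - m) + 1).natAbs)^2

lemma q_eq (m j : ℕ) : e m j + 8*j + 1 = 8*m + q m j := by
  have hq : ((q m j : ℕ):ℤ) = ((4*((j:ℤ)-m)+1).natAbs:ℤ)^2 := by
    unfold q; push_cast; ring_nf
  have h : (e m j : ℤ) + 8*j + 1 = 8*m + ((q m j : ℕ):ℤ) := by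
    rw [hq, e_nat, natAbs_sq]; push_cast; ring
  exact_mod_cast h

lemma key1 (N : ℕ) :
    (X:PowerSeries ℚ)^(N+1) ∣
      X * ((∏ j ∈ range (N+1), ((1 - x^(32*j+8)) * (1 - x^(32*j+24))))
        * ∏ i ∈ range (2*(N+1)), (1 - x^(32*(i+1))))
      - ∑ j ∈ range (2*(N+1)+1), (-1:PowerSeries ℚ)^((N+1)+j) * x^(q (N+1) j) := by
  obtain ⟨m, hm⟩ : ∃ m', m' = N + 1 := ⟨_, rfl⟩
  rw [← hm]
  have base := jtp_spec m
  have hmulP := congrArg (fun z => z * ∏ i ∈ range (2*m), (1 - x^(32*(i+1)))) base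
  simp only [Finset.sum_mul] at hmulP
  have hterm : ∀ j ∈ range (2*m+1),
      (X:PowerSeries ℚ)^(8*m+(N+1)) ∣
        (-1:PowerSeries ℚ)^(m+j) * (g (2*m) j * x^(e m j + 8*j))
            * (∏ i ∈ range (2*m), (1 - x^(32*(i+1))))
        - (-1:PowerSeries ℚ)^(m+j) * x^(e m j + 8*j) := by
    intro j hj
    rw [Finset.mem_range] at hj
    have hsplit : (∏ i ∈ range (2*m), (1 - x^(32*(i+1))))
        = (∏ i ∈ range j, (1 - x^(32*(i+1)))) * ∏ i ∈ range (2*m - j), (1 - x^(32*((j+i)+1))) := by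
      have h := Finset.prod_range_add (fun i => (1:PowerSeries ℚ) - x^(32*(i+1))) j (2*m - j)
      rw [show j + (2*m - j) = 2*m from by omega] at h
      exact h
    have hg : g (2*m) j * (∏ i ∈ range j, (1 - x^(32*(i+1))))
        = ∏ i ∈ range j, (1 - x^(32*(2*m-i))) := g_prod (2*m) j
    set b := ((j:ℤ) - m).natAbs with hb
    set cc := 32*(m - b)+32 with hcc
    have hdvd1 : (X:PowerSeries ℚ)^cc ∣ 1 - ∏ i ∈ range j, (1 - x^(32*(2*m-i))) := by
      apply prod_one_mod
      intro i hi; rw [Finset.mem_range] at hi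
      rw [show (1:PowerSeries ℚ) - (1 - x^(32*(2*m-i))) = x^(32*(2*m-i)) from by ring]
      exact pow_dvd_pow _ (by omega)
    have hdvd2 : (X:PowerSeries ℚ)^cc ∣
        1 - ∏ i ∈ range (2*m - j), (1 - x^(32*((j+i)+1))) := by
      apply prod_one_mod
      intro i hi; rw [Finset.mem_range] at hi
      rw [show (1:PowerSeries ℚ) - (1 - x^(32*((j+i)+1))) = x^(32*((j+i)+1)) from by ring]
      exact pow_dvd_pow _ (by omega)
    have hRS : (X:PowerSeries ℚ)^cc ∣
        1 - (∏ i ∈ range j, (1 - x^(32*(2*m-i))))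
          * (∏ i ∈ range (2*m - j), (1 - x^(32*((j+i)+1)))) := by
      rw [show (1:PowerSeries ℚ) - (∏ i ∈ range j, (1 - x^(32*(2*m-i))))
            * (∏ i ∈ range (2*m - j), (1 - x^(32*((j+i)+1))))
          = (∏ i ∈ range j, (1 - x^(32*(2*m-i))))
              * (1 - ∏ i ∈ range (2*m - j), (1 - x^(32*((j+i)+1))))
            + (1 - ∏ i ∈ range j, (1 - x^(32*(2*m-i)))) from by ring]
      exact dvd_add (hdvd2.mul_left _) hdvd1
    have he : e m j = 16*(b*b) := by
      have h1 : (e m j : ℤ) = 16*((b:ℤ)*b) := by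
        rw [e_nat, hb]
        have := natAbs_sq ((j:ℤ) - m)
        nlinarith [this]
      exact_mod_cast h1
    have hexp : 8*m + (N+1) ≤ e m j + 8*j + cc := by
      obtain ⟨t, ht⟩ : ∃ t, b*b = t := ⟨_, rfl⟩
      rw [ht] at he
      have h32 : 3*b ≤ b*b + 2 := by
        rcases le_or_gt b 2 with h | h
        · interval_cases b <;> norm_num
        · have : 3*b ≤ b*b := Nat.mul_le_mul_right b (by omega)
          omega
      rw [ht] at h32
      omega
    have hfactor : (-1:PowerSeries ℚ)^(m+j) * (g (2*m) j * x^(e m j + 8*j))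
            * (∏ i ∈ range (2*m), (1 - x^(32*(i+1))))
        - (-1:PowerSeries ℚ)^(m+j) * x^(e m j + 8*j)
        = -((-1:PowerSeries ℚ)^(m+j) * (x^(e m j + 8*j)
            * (1 - (∏ i ∈ range j, (1 - x^(32*(2*m-i))))
              * (∏ i ∈ range (2*m - j), (1 - x^(32*((j+i)+1))))))) := by
      rw [hsplit]
      linear_combination ((-1:PowerSeries ℚ)^(m+j) * x^(e m j + 8*j)
        * (∏ i ∈ range (2*m - j), (1 - x^(32*((j+i)+1))))) * hg
    rw [hfactor]
    apply Dvd.dvd.neg_right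
    apply Dvd.dvd.mul_left
    have : (X:PowerSeries ℚ)^(e m j + 8*j) * (X:PowerSeries ℚ)^cc ∣
        x^(e m j + 8*j) * (1 - (∏ i ∈ range j, (1 - x^(32*(2*m-i))))
          * (∏ i ∈ range (2*m - j), (1 - x^(32*((j+i)+1))))) :=
      mul_dvd_mul dvd_rfl hRS
    refine dvd_trans ?_ this
    rw [← pow_add]
    exact pow_dvd_pow _ hexp
  have hsum : (X:PowerSeries ℚ)^(8*m+(N+1)) ∣
      (∑ j ∈ range (2*m+1), (-1:PowerSeries ℚ)^(m+j) * (g (2*m) j * x^(e m j + 8*j))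
        * (∏ i ∈ range (2*m), (1 - x^(32*(i+1)))))
      - ∑ j ∈ range (2*m+1), (-1:PowerSeries ℚ)^(m+j) * x^(e m j + 8*j) := by
    rw [← Finset.sum_sub_distrib]
    exact Finset.dvd_sum hterm
  rw [← hmulP] at hsum
  have hX : (X:PowerSeries ℚ)^(8*m+(N+1)) ∣
      X * ((x^(8*m) * ∏ j ∈ range m, ((1 - x^(32*j+8)) * (1 - x^(32*j+24))))
        * ∏ i ∈ range (2*m), (1 - x^(32*(i+1))))
      - X * ∑ j ∈ range (2*m+1), (-1:PowerSeries ℚ)^(m+j) * x^(e m j + 8*j) := by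
    rw [← mul_sub]
    exact hsum.mul_left X
  have hTT : (X:PowerSeries ℚ) * ∑ j ∈ range (2*m+1),
        (-1:PowerSeries ℚ)^(m+j) * x^(e m j + 8*j)
      = x^(8*m) * ∑ j ∈ range (2*m+1), (-1:PowerSeries ℚ)^(m+j) * x^(q m j) := by
    rw [Finset.mul_sum, Finset.mul_sum]
    apply Finset.sum_congr rfl
    intro j _
    have hp : (X:PowerSeries ℚ) * x^(e m j + 8*j) = x^(8*m) * x^(q m j) := by
      rw [show (X:PowerSeries ℚ) = x^1 from (pow_one _).symm, ← pow_add, ← pow_add]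
      congr 1
      have := q_eq m j
      omega
    linear_combination ((-1:PowerSeries ℚ)^(m+j)) * hp
  rw [hTT] at hX
  have hXL : (X:PowerSeries ℚ) * ((x^(8*m) * ∏ j ∈ range m, ((1 - x^(32*j+8)) * (1 - x^(32*j+24))))
        * ∏ i ∈ range (2*m), (1 - x^(32*(i+1))))
      = x^(8*m) * (X * ((∏ j ∈ range m, ((1 - x^(32*j+8)) * (1 - x^(32*j+24))))
        * ∏ i ∈ range (2*m), (1 - x^(32*(i+1))))) := by ring
  rw [hXL, ← mul_sub] at hX
  have hpow : (X:PowerSeries ℚ)^(8*m+(N+1)) = x^(8*m) * x^(N+1) := by rw [← pow_add]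
  rw [hpow] at hX
  rw [← hm] at hX
  exact (mul_dvd_mul_iff_left (pow_ne_zero (8*m) PowerSeries.X_ne_zero)).mp hX

lemma pair_prod (M : ℕ) : ∏ n ∈ range M, ((1 - x^(16*n+16)) * (1 - x^(16*n+8)))
    = ∏ n ∈ range (2*M), (1 - x^(8*n+8)) := by
  induction M with
  | zero => simp
  | succ M ih =>
    rw [Finset.prod_range_succ, ih, show 2*(M+1) = 2*M+1+1 from by ring,
      Finset.prod_range_succ, Finset.prod_range_succ,
      show 8*(2*M)+8 = 16*M+8 from by ring, show 8*(2*M+1)+8 = 16*M+16 from by ring]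
    ring

lemma quad_prod (M : ℕ) : (∏ j ∈ range M, ((1 - x^(32*j+8)) * (1 - x^(32*j+24))))
    * (∏ i ∈ range M, (1 - x^(32*i+32))) * (∏ n ∈ range M, (1 - x^(32*n+16)))
    = ∏ n ∈ range (4*M), (1 - x^(8*n+8)) := by
  induction M with
  | zero => simp
  | succ M ih =>
    rw [Finset.prod_range_succ, Finset.prod_range_succ, Finset.prod_range_succ,
      show 4*(M+1) = 4*M+1+1+1+1 from by ring,
      Finset.prod_range_succ, Finset.prod_range_succ, Finset.prod_range_succ,
      Finset.prod_range_succ, ← ih,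
      show 8*(4*M)+8 = 32*M+8 from by ring, show 8*(4*M+1)+8 = 32*M+16 from by ring,
      show 8*(4*M+1+1)+8 = 32*M+24 from by ring, show 8*(4*M+1+1+1)+8 = 32*M+32 from by ring]
    ring

lemma inv_cancel (k : ℕ) (hk : k ≠ 0) :
    ((1:PowerSeries ℚ) + x^k)⁻¹ * (1 - x^(2*k)) = 1 - x^k := by
  have hu : constantCoeff (1 + x^k) = 1 := by
    simp [zero_pow hk]
  have h2 : (1:PowerSeries ℚ) - x^(2*k) = (1 + x^k) * (1 - x^k) := by
    rw [two_mul, pow_add]; ring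
  rw [h2, ← mul_assoc, PowerSeries.inv_mul_cancel _ (by rw [hu]; exact one_ne_zero), one_mul]

lemma W_D (N : ℕ) :
    (∏ n ∈ range (N+1), ((1 - (X:PowerSeries ℚ)^(16*(n+1))) * (1 + (X:PowerSeries ℚ)^(16*(n+1)-8))⁻¹))
    * (∏ n ∈ range (N+1), (1 - x^(32*n+16)))
    = ∏ n ∈ range (2*(N+1)), (1 - x^(8*n+8)) := by
  rw [← Finset.prod_mul_distrib]
  rw [← pair_prod (N+1)]
  apply Finset.prod_congr rfl
  intro n _
  rw [show 16*(n+1)-8 = 16*n+8 from by omega, show 16*(n+1) = 16*n+16 from by ring,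
    show 32*n+16 = 2*(16*n+8) from by ring, mul_assoc, inv_cancel (16*n+8) (by omega)]

lemma key2 (N : ℕ) :
    (X:PowerSeries ℚ)^(N+1) ∣
      X * (∏ n ∈ range (N+1), ((1 - (X:PowerSeries ℚ)^(16*(n+1)))
          * (1 + (X:PowerSeries ℚ)^(16*(n+1)-8))⁻¹))
      - X * ((∏ j ∈ range (N+1), ((1 - x^(32*j+8)) * (1 - x^(32*j+24))))
          * ∏ i ∈ range (2*(N+1)), (1 - x^(32*(i+1)))) := by
  have hPbody : (∏ i ∈ range (2*(N+1)), (1 - x^(32*(i+1))))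
      = ∏ i ∈ range (2*(N+1)), (1 - x^(32*i+32)) := by
    apply Finset.prod_congr rfl; intro i _
    rw [show 32*(i+1) = 32*i+32 from by ring]
  have hPsplit : (∏ i ∈ range (2*(N+1)), (1 - x^(32*i+32)))
      = (∏ i ∈ range (N+1), (1 - x^(32*i+32)))
        * ∏ i ∈ range (N+1), (1 - x^(32*((N+1)+i)+32)) := by
    have h := Finset.prod_range_add (fun i => (1:PowerSeries ℚ) - x^(32*i+32)) (N+1) (N+1)
    rw [show (N+1) + (N+1) = 2*(N+1) from by ring] at h
    exact h
  have hE4 : (∏ n ∈ range (4*(N+1)), (1 - x^(8*n+8)))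
      = (∏ n ∈ range (2*(N+1)), (1 - x^(8*n+8)))
        * ∏ i ∈ range (2*(N+1)), (1 - x^(8*(2*(N+1)+i)+8)) := by
    have h := Finset.prod_range_add (fun n => (1:PowerSeries ℚ) - x^(8*n+8)) (2*(N+1)) (2*(N+1))
    rw [show 2*(N+1) + 2*(N+1) = 4*(N+1) from by ring] at h
    exact h
  have hD : (∏ n ∈ range (N+1), ((1:PowerSeries ℚ) - x^(32*n+16))) ≠ 0 := by
    have hc : constantCoeff (∏ n ∈ range (N+1), ((1:PowerSeries ℚ) - x^(32*n+16))) = 1 := by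
      rw [map_prod]
      apply Finset.prod_eq_one
      intro n _
      simp [zero_pow (show 32*n+16 ≠ 0 by omega)]
    intro h0
    rw [h0, map_zero] at hc
    exact zero_ne_one hc
  have hQP : (∏ j ∈ range (N+1), ((1 - x^(32*j+8)) * (1 - x^(32*j+24))))
        * ∏ i ∈ range (2*(N+1)), (1 - x^(32*(i+1)))
      = (∏ n ∈ range (N+1), ((1 - (X:PowerSeries ℚ)^(16*(n+1)))
          * (1 + (X:PowerSeries ℚ)^(16*(n+1)-8))⁻¹))
        * ((∏ i ∈ range (2*(N+1)), (1 - x^(8*(2*(N+1)+i)+8)))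
          * ∏ i ∈ range (N+1), (1 - x^(32*((N+1)+i)+32))) := by
    apply mul_right_cancel₀ hD
    have hq := quad_prod (N+1)
    have hw := W_D N
    rw [hPbody, hPsplit]
    linear_combination (∏ i ∈ range (N+1), (1 - x^(32*((N+1)+i)+32))) * hq
      + (∏ i ∈ range (N+1), (1 - x^(32*((N+1)+i)+32))) * hE4
      - ((∏ i ∈ range (2*(N+1)), (1 - x^(8*(2*(N+1)+i)+8)))
          * ∏ i ∈ range (N+1), (1 - x^(32*((N+1)+i)+32))) * hw
  have hUP : (X:PowerSeries ℚ)^(N+1) ∣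
      1 - (∏ i ∈ range (2*(N+1)), (1 - x^(8*(2*(N+1)+i)+8)))
        * ∏ i ∈ range (N+1), (1 - x^(32*((N+1)+i)+32)) := by
    have hu1 : (X:PowerSeries ℚ)^(N+1) ∣
        1 - ∏ i ∈ range (2*(N+1)), (1 - x^(8*(2*(N+1)+i)+8)) := by
      apply prod_one_mod
      intro i hi
      rw [show (1:PowerSeries ℚ) - (1 - x^(8*(2*(N+1)+i)+8)) = x^(8*(2*(N+1)+i)+8) from by ring]
      exact pow_dvd_pow _ (by omega)
    have hu2 : (X:PowerSeries ℚ)^(N+1) ∣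
        1 - ∏ i ∈ range (N+1), (1 - x^(32*((N+1)+i)+32)) := by
      apply prod_one_mod
      intro i hi
      rw [show (1:PowerSeries ℚ) - (1 - x^(32*((N+1)+i)+32)) = x^(32*((N+1)+i)+32) from by ring]
      exact pow_dvd_pow _ (by omega)
    rw [show (1:PowerSeries ℚ) - (∏ i ∈ range (2*(N+1)), (1 - x^(8*(2*(N+1)+i)+8)))
          * ∏ i ∈ range (N+1), (1 - x^(32*((N+1)+i)+32))
        = (∏ i ∈ range (2*(N+1)), (1 - x^(8*(2*(N+1)+i)+8)))
            * (1 - ∏ i ∈ range (N+1), (1 - x^(32*((N+1)+i)+32)))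
          + (1 - ∏ i ∈ range (2*(N+1)), (1 - x^(8*(2*(N+1)+i)+8))) from by ring]
    exact dvd_add (hu2.mul_left _) hu1
  have hd : X * (∏ n ∈ range (N+1), ((1 - (X:PowerSeries ℚ)^(16*(n+1)))
          * (1 + (X:PowerSeries ℚ)^(16*(n+1)-8))⁻¹))
      - X * ((∏ j ∈ range (N+1), ((1 - x^(32*j+8)) * (1 - x^(32*j+24))))
          * ∏ i ∈ range (2*(N+1)), (1 - x^(32*(i+1))))
      = (X * (∏ n ∈ range (N+1), ((1 - (X:PowerSeries ℚ)^(16*(n+1)))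
          * (1 + (X:PowerSeries ℚ)^(16*(n+1)-8))⁻¹)))
        * (1 - (∏ i ∈ range (2*(N+1)), (1 - x^(8*(2*(N+1)+i)+8)))
            * ∏ i ∈ range (N+1), (1 - x^(32*((N+1)+i)+32))) := by
    rw [hQP]; ring
  rw [hd]
  exact Dvd.dvd.mul_left hUP _

noncomputable def sfun (a : ℤ) : PowerSeries ℚ :=
  (if Even a then (1:PowerSeries ℚ) else -1) * x^(((4*a+1).natAbs)^2)

lemma sign_eq (m j : ℕ) : ((-1:PowerSeries ℚ))^(m+j)
    = if Even ((j:ℤ) - m) then 1 else -1 := by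
  rcases Nat.even_or_odd (m+j) with h | h
  · rw [Even.neg_one_pow h, if_pos]
    rw [Int.even_iff]
    rw [Nat.even_iff] at h
    omega
  · rw [Odd.neg_one_pow h, if_neg]
    rw [Int.even_iff]
    rw [Nat.odd_iff] at h
    omega

lemma dvd_sfun (N : ℕ) (a : ℤ) (h : (N:ℕ)+1 ≤ ((4*a+1).natAbs)) :
    (X:PowerSeries ℚ)^(N+1) ∣ sfun a := by
  unfold sfun
  apply Dvd.dvd.mul_left
  apply pow_dvd_pow
  calc N+1 ≤ (4*a+1).natAbs := h
    _ ≤ ((4*a+1).natAbs)^2 := Nat.le_self_pow two_ne_zero _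

lemma hT_lemma (N : ℕ) :
    (∑ j ∈ range (2*(N+1)+1), (-1:PowerSeries ℚ)^((N+1)+j) * x^(q (N+1) j))
    = ∑ a ∈ Icc (-((N:ℤ)+1)) ((N:ℤ)+1), sfun a := by
  apply Finset.sum_nbij' (i := fun j : ℕ => (j:ℤ) - ((N:ℤ)+1))
    (j := fun a : ℤ => (a + ((N:ℤ)+1)).toNat)
  · intro j hj
    rw [Finset.mem_range] at hj
    rw [Finset.mem_Icc]
    omega
  · intro a ha
    rw [Finset.mem_Icc] at ha
    rw [Finset.mem_range]
    omega
  · intro j hj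
    rw [Finset.mem_range] at hj
    omega
  · intro a ha
    rw [Finset.mem_Icc] at ha
    omega
  · intro j hj
    unfold sfun q
    rw [sign_eq (N+1) j]
    norm_cast

lemma hRHS_lemma (N : ℕ) :
    ((∑ n ∈ Finset.Icc (-(N : ℤ)) (N : ℤ), (X : PowerSeries ℚ) ^ ((8 * n + 1).natAbs ^ 2)) -
       ∑ n ∈ Finset.Icc (-(N : ℤ)) (N : ℤ), (X : PowerSeries ℚ) ^ ((8 * n + 3).natAbs ^ 2))
    = ∑ a ∈ ((Icc (-(N:ℤ)) N).image (fun n => 2*n) ∪ (Icc (-(N:ℤ)) N).image (fun n => -(2*n)-1)),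
        sfun a := by
  classical
  rw [Finset.sum_union]
  · rw [Finset.sum_image (by intro a _ b _ hab; beta_reduce at hab; omega),
      Finset.sum_image (by intro a _ b _ hab; beta_reduce at hab; omega)]
    have h1 : ∀ n : ℤ, sfun (2*n) = (X : PowerSeries ℚ) ^ ((8 * n + 1).natAbs ^ 2) := by
      intro n
      unfold sfun
      rw [if_pos ⟨n, by ring⟩, one_mul, show 4*(2*n)+1 = 8*n+1 from by ring]
    have h2 : ∀ n : ℤ, sfun (-(2*n)-1) = -((X : PowerSeries ℚ) ^ ((8 * n + 3).natAbs ^ 2)) := by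
      intro n
      unfold sfun
      rw [if_neg (by rw [Int.even_iff]; omega), show 4*(-(2*n)-1)+1 = -(8*n+3) from by ring,
        Int.natAbs_neg]
      ring
    rw [Finset.sum_congr rfl (fun n _ => h1 n), Finset.sum_congr rfl (fun n _ => h2 n),
      Finset.sum_neg_distrib]
    ring
  · rw [Finset.disjoint_left]
    intro a ha hb
    rw [Finset.mem_image] at ha hb
    obtain ⟨n1, _, hn1⟩ := ha
    obtain ⟨n2, _, hn2⟩ := hb
    omega

lemma key3 (N : ℕ) :
    (X:PowerSeries ℚ)^(N+1) ∣
      (∑ j ∈ range (2*(N+1)+1), (-1:PowerSeries ℚ)^((N+1)+j) * x^(q (N+1) j))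
      - ((∑ n ∈ Finset.Icc (-(N : ℤ)) (N : ℤ), (X : PowerSeries ℚ) ^ ((8 * n + 1).natAbs ^ 2)) -
         ∑ n ∈ Finset.Icc (-(N : ℤ)) (N : ℤ), (X : PowerSeries ℚ) ^ ((8 * n + 3).natAbs ^ 2)) := by
  classical
  rw [hT_lemma, hRHS_lemma]
  set A : Finset ℤ := Icc (-((N:ℤ)+1)) ((N:ℤ)+1) with hA
  set S : Finset ℤ := ((Icc (-(N:ℤ)) N).image (fun n => 2*n)
      ∪ (Icc (-(N:ℤ)) N).image (fun n => -(2*n)-1)) with hS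
  set B : Finset ℤ := Icc (-(2*(N:ℤ)+1)) (2*(N:ℤ)+1) with hB
  have hAB : A ⊆ B := by
    intro a ha
    rw [hA, Finset.mem_Icc] at ha
    rw [hB, Finset.mem_Icc]
    omega
  have hSB : S ⊆ B := by
    intro a ha
    rw [hS, Finset.mem_union, Finset.mem_image, Finset.mem_image] at ha
    rw [hB, Finset.mem_Icc]
    rcases ha with ⟨n, hn, rfl⟩ | ⟨n, hn, rfl⟩ <;> rw [Finset.mem_Icc] at hn <;> omega
  have hsumA : ∑ a ∈ A, sfun a = ∑ a ∈ B, (if a ∈ A then sfun a else 0) := by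
    rw [Finset.sum_ite_mem, Finset.inter_eq_right.mpr hAB]
  have hsumS : ∑ a ∈ S, sfun a = ∑ a ∈ B, (if a ∈ S then sfun a else 0) := by
    rw [Finset.sum_ite_mem, Finset.inter_eq_right.mpr hSB]
  rw [hsumA, hsumS, ← Finset.sum_sub_distrib]
  apply Finset.dvd_sum
  intro a haB
  rw [hB, Finset.mem_Icc] at haB
  by_cases h1 : a ∈ A <;> by_cases h2 : a ∈ S
  · rw [if_pos h1, if_pos h2, sub_self]
    exact dvd_zero _
  · -- in Icc, not in S
    rw [if_pos h1, if_neg h2, sub_zero]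
    apply dvd_sfun
    rw [hA, Finset.mem_Icc] at h1
    rw [hS, Finset.mem_union, Finset.mem_image, Finset.mem_image] at h2
    push_neg at h2
    obtain ⟨h2a, h2b⟩ := h2
    rcases Int.even_or_odd a with ⟨c, hc⟩ | ⟨c, hc⟩
    · exfalso
      have := h2a c
      rw [Finset.mem_Icc] at this
      omega
    · have := h2b (-c-1)
      rw [Finset.mem_Icc] at this
      omega
  · -- in S, not in Icc
    rw [if_neg h1, if_pos h2, zero_sub]
    apply Dvd.dvd.neg_right
    apply dvd_sfun
    rw [hA, Finset.mem_Icc] at h1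
    omega
  · rw [if_neg h1, if_neg h2, sub_self]
    exact dvd_zero _

end ChiB
end ChiB

/-- As formal power series in `x`:
`x·∏_{n≥1} (1−x^{16n})/(1+x^{16n−8}) = ∑_{n∈ℤ} x^{(8n+1)²} − ∑_{n∈ℤ} x^{(8n+3)²}`
(the identity `√2·χ_b = χ_+ − χ_−`), stated coefficient-wise via the stabilizing
partial products/sums. -/
theorem chi_b_splitting (N : ℕ) :
    PowerSeries.coeff (R := ℚ) N
      (PowerSeries.X *
        ∏ n ∈ Finset.range (N + 1),
          ((1 - (PowerSeries.X : PowerSeries ℚ) ^ (16 * (n + 1))) *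
            (1 + (PowerSeries.X : PowerSeries ℚ) ^ (16 * (n + 1) - 8))⁻¹)) =
    PowerSeries.coeff (R := ℚ) N
      ((∑ n ∈ Finset.Icc (-(N : ℤ)) (N : ℤ),
          (PowerSeries.X : PowerSeries ℚ) ^ ((8 * n + 1).natAbs ^ 2)) -
       ∑ n ∈ Finset.Icc (-(N : ℤ)) (N : ℤ),
          (PowerSeries.X : PowerSeries ℚ) ^ ((8 * n + 3).natAbs ^ 2)) := by
  have k2 := ChiB.key2 N
  have k1 := ChiB.key1 N
  have k3 := ChiB.key3 N
  have t1 := dvd_add k2 k1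
  rw [sub_add_sub_cancel] at t1
  have t2 := dvd_add t1 k3
  rw [sub_add_sub_cancel] at t2
  have hc := PowerSeries.X_pow_dvd_iff.mp t2 N (Nat.lt_succ_self N)
  rw [map_sub] at hc
  exact sub_eq_zero.mp hc
end
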